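/- arXiv:1004.2265 — 2 statements merged into one kernel-verified Lean document; each statement's English description precedes it below -/
import Mathlib

section
/- The measure μ̂_G with density 1/(u-v)² on the domain D is invariant under the natural extension Ĝ of the octagon Gauss map: the pushforward of μ̂_G under Ĝ equals μ̂_G. -/
open MeasureTheory Set

noncomputable section

/-- The linear fractional transformation of `ℝ` induced by a 2×2 real matrix,
with the convention that the value is `0` when the denominator vanishes. -/
def mob (M : Matrix (Fin 2) (Fin 2) ℝ) (u : ℝ) : ℝ :=
  (M 0 0 * u + M 0 1) / (M 1 0 * u + M 1 1)

/-- The matrix `γ = [[-1, 2+2√2],[0,1]]`. -/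
def gam : Matrix (Fin 2) (Fin 2) ℝ := !![-1, 2 + 2 * Real.sqrt 2; 0, 1]

/-- The isometries `ν₁, …, ν₇` of the octagon. -/
def nu : ℕ → Matrix (Fin 2) (Fin 2) ℝ
  | 1 => (Real.sqrt 2)⁻¹ • !![1, 1; 1, -1]
  | 2 => (Real.sqrt 2)⁻¹ • !![1, 1; -1, 1]
  | 3 => !![0, 1; 1, 0]
  | 4 => !![0, 1; -1, 0]
  | 5 => (Real.sqrt 2)⁻¹ • !![-1, 1; 1, 1]
  | 6 => (Real.sqrt 2)⁻¹ • !![-1, 1; -1, -1]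
  | 7 => !![-1, 0; 0, 1]
  | _ => 1

/-- The index `i` of the sector `Σᵢ` (in inverse-slope coordinates) containing `u`:
`Σ₀ = (1+√2, ∞)`, `Σ₁ = (1, 1+√2]`, `Σ₂ = (√2-1, 1]`, `Σ₃ = (0, √2-1]`, `Σ₄ = (1-√2, 0]`,
`Σ₅ = (-1, 1-√2]`, `Σ₆ = (-1-√2, -1]`, `Σ₇ = (-∞, -1-√2]`. -/
def sectorIndex (u : ℝ) : ℕ :=
  if 1 + Real.sqrt 2 < u then 0
  else if 1 < u then 1
  else if Real.sqrt 2 - 1 < u then 2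
  else if 0 < u then 3
  else if 1 - Real.sqrt 2 < u then 4
  else if -1 < u then 5
  else if -(1 + Real.sqrt 2) < u then 6
  else 7

/-- The octagon Farey map in inverse-slope coordinates: `F(u) = (γ·νᵢ)[u]` for `u ∈ Σᵢ`
(`i = 1,…,7`), and `F(u) = u` for `u ∈ Σ₀`. -/
def F (u : ℝ) : ℝ :=
  if sectorIndex u = 0 then u else mob (gam * nu (sectorIndex u)) u

/-- For `u ∈ Σ₁`: the least `n ≥ 1` with `Fⁿ(u) ∉ Σ₁` if such `n` exists, `0` otherwise. -/
def n1 (u : ℝ) : ℕ := sInf {n | 0 < n ∧ F^[n] u ∉ Set.Ioc (1 : ℝ) (1 + Real.sqrt 2)}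

/-- For `u ∈ Σ₇`: the least `n ≥ 1` with `Fⁿ(u) ∉ Σ₇` if such `n` exists, `0` otherwise. -/
def n7 (u : ℝ) : ℕ := sInf {n | 0 < n ∧ F^[n] u ∉ Set.Iic (-(1 + Real.sqrt 2))}

open Classical in
/-- The octagon Gauss map: `G(u) = F^{n₁(u)}(u)` on `Σ₁`, `G(u) = F^{n₇(u)}(u)` on `Σ₇`,
`G(u) = F(u)` on `Σ₂ ∪ ⋯ ∪ Σ₆`, and `G(u) = u` on `Σ₀`. -/
def G (u : ℝ) : ℝ :=
  if u ∈ Set.Ioc (1 : ℝ) (1 + Real.sqrt 2) then F^[n1 u] u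
  else if u ∈ Set.Iic (-(1 + Real.sqrt 2)) then F^[n7 u] u
  else if u ≤ 1 + Real.sqrt 2 then F u
  else u

/-- The natural extension of the octagon Farey map. -/
def Fhat (p : ℝ × ℝ) : ℝ × ℝ :=
  if sectorIndex p.1 = 0 then p
  else (mob (gam * nu (sectorIndex p.1)) p.1, mob (gam * nu (sectorIndex p.1)) p.2)

open Classical in
/-- The return time `n(u)`: `n₁(u)` on `Σ₁`, `n₇(u)` on `Σ₇`, `1` on `Σ₂ ∪ ⋯ ∪ Σ₆`,
`0` on `Σ₀`. -/
def nG (u : ℝ) : ℕ :=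
  if u ∈ Set.Ioc (1 : ℝ) (1 + Real.sqrt 2) then n1 u
  else if u ∈ Set.Iic (-(1 + Real.sqrt 2)) then n7 u
  else if u ≤ 1 + Real.sqrt 2 then 1
  else 0

/-- The natural extension of the octagon Gauss map: `Ĝ(u,v) = F̂^{n(u)}(u,v)`. -/
def Ghat (p : ℝ × ℝ) : ℝ × ℝ := Fhat^[nG p.1] p

/-- The domain `D` of the natural extension of the octagon Gauss map. -/
def Dgauss : Set (ℝ × ℝ) :=
  (Set.Ioo 1 (1 + Real.sqrt 2) ×ˢ Set.Ioi (1 + 2 * Real.sqrt 2)) ∪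
  (Set.Ioo (-(1 + Real.sqrt 2)) 1 ×ˢ Set.Ioi (1 + Real.sqrt 2)) ∪
  (Set.Iio (-(1 + Real.sqrt 2)) ×ˢ Set.Ioo (1 + Real.sqrt 2) (3 + 3 * Real.sqrt 2))

/-- The measure `μ̂_G` with density `1/(u-v)²` on `D` and `0` elsewhere. -/
def gaussMeasureHat : Measure (ℝ × ℝ) :=
  volume.withDensity (Dgauss.indicator fun p => ENNReal.ofReal ((p.1 - p.2) ^ 2)⁻¹)

/-! ### Auxiliary development -/

namespace OctagonAux

/-- The density. -/
def dens : ℝ × ℝ → ENNReal := fun p => ENNReal.ofReal (((p.1 - p.2) ^ 2)⁻¹)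

/-- The unrestricted measure with density `1/(u-v)²`. -/
def mu0 : Measure (ℝ × ℝ) := volume.withDensity dens

/-- The pair Möbius map. -/
def Tp (M : Matrix (Fin 2) (Fin 2) ℝ) (p : ℝ × ℝ) : ℝ × ℝ := (mob M p.1, mob M p.2)

lemma det_prodMap_smul (d e : ℝ) :
    (((d • (1 : ℝ →L[ℝ] ℝ)).prodMap (e • (1 : ℝ →L[ℝ] ℝ))) : (ℝ × ℝ) →L[ℝ] (ℝ × ℝ)).det
      = d * e := by
  rw [ContinuousLinearMap.det]
  rw [← LinearMap.det_toMatrix (Module.Basis.finTwoProd ℝ)]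
  rw [Matrix.det_fin_two]
  simp [LinearMap.toMatrix_apply, Module.Basis.finTwoProd]

lemma mob_hasDerivAt (M : Matrix (Fin 2) (Fin 2) ℝ) (x : ℝ)
    (h : M 1 0 * x + M 1 1 ≠ 0) :
    HasDerivAt (mob M) (M.det / (M 1 0 * x + M 1 1) ^ 2) x := by
  have h1 : HasDerivAt (fun u => M 0 0 * u + M 0 1) (M 0 0) x := by
    simpa using ((hasDerivAt_id x).const_mul (M 0 0)).add_const (M 0 1)
  have h2 : HasDerivAt (fun u => M 1 0 * u + M 1 1) (M 1 0) x := by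
    simpa using ((hasDerivAt_id x).const_mul (M 1 0)).add_const (M 1 1)
  have := h1.div h2 h
  refine HasDerivAt.congr_deriv this ?_
  rw [Matrix.det_fin_two]
  field_simp
  ring

lemma mob_sub (M : Matrix (Fin 2) (Fin 2) ℝ) {x y : ℝ}
    (hx : M 1 0 * x + M 1 1 ≠ 0) (hy : M 1 0 * y + M 1 1 ≠ 0) :
    mob M x - mob M y = M.det * (x - y) / ((M 1 0 * x + M 1 1) * (M 1 0 * y + M 1 1)) := by
  rw [Matrix.det_fin_two, mob, mob]
  rw [div_sub_div _ _ hx hy]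
  congr 1
  ring

lemma mob_injOn (M : Matrix (Fin 2) (Fin 2) ℝ) (hdet : M.det ≠ 0) {x y : ℝ}
    (hx : M 1 0 * x + M 1 1 ≠ 0) (hy : M 1 0 * y + M 1 1 ≠ 0)
    (hxy : mob M x = mob M y) : x = y := by
  have h := mob_sub M hx hy
  rw [hxy, sub_self] at h
  have := (div_eq_zero_iff.mp h.symm).resolve_right (mul_ne_zero hx hy)
  have := (mul_eq_zero.mp this).resolve_left hdet
  linarith [sub_eq_zero.mp this]

lemma mob_measurable (M : Matrix (Fin 2) (Fin 2) ℝ) : Measurable (mob M) := by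
  unfold mob; fun_prop

lemma Tp_measurable (M : Matrix (Fin 2) (Fin 2) ℝ) : Measurable (Tp M) :=
  ((mob_measurable M).comp measurable_fst).prodMk ((mob_measurable M).comp measurable_snd)

lemma cov (M : Matrix (Fin 2) (Fin 2) ℝ) (hdet : M.det ≠ 0) (I J : Set ℝ)
    (hI : MeasurableSet I) (hJ : MeasurableSet J)
    (hIden : ∀ x ∈ I, M 1 0 * x + M 1 1 ≠ 0) (hJden : ∀ x ∈ J, M 1 0 * x + M 1 1 ≠ 0)
    (A : Set (ℝ × ℝ)) (hA : MeasurableSet A) :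
    mu0 (Tp M ⁻¹' A ∩ I ×ˢ J) = mu0 (A ∩ Tp M '' (I ×ˢ J)) := by
  set P : Set (ℝ × ℝ) := I ×ˢ J with hP
  have hPm : MeasurableSet P := hI.prod hJ
  have hden : ∀ p ∈ P, (M 1 0 * p.1 + M 1 1 ≠ 0) ∧ (M 1 0 * p.2 + M 1 1 ≠ 0) := by
    rintro p ⟨h1, h2⟩; exact ⟨hIden _ h1, hJden _ h2⟩
  have hinj : Set.InjOn (Tp M) P := by
    rintro p hp q hq hpq
    have h1 := congrArg Prod.fst hpq
    have h2 := congrArg Prod.snd hpq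
    have e1 := mob_injOn M hdet (hden p hp).1 (hden q hq).1 h1
    have e2 := mob_injOn M hdet (hden p hp).2 (hden q hq).2 h2
    exact Prod.ext e1 e2
  have hcont : ContinuousOn (Tp M) P := by
    apply ContinuousOn.prodMk
    · apply ContinuousOn.div
      · fun_prop
      · fun_prop
      · exact fun p hp => (hden p hp).1
    · apply ContinuousOn.div
      · fun_prop
      · fun_prop
      · exact fun p hp => (hden p hp).2
  set S : Set (ℝ × ℝ) := Tp M ⁻¹' A ∩ P with hS
  have hSm : MeasurableSet S := ((Tp_measurable M) hA).inter hPm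
  have hSsub : S ⊆ P := Set.inter_subset_right
  have himg : A ∩ Tp M '' P = Tp M '' S := by
    rw [hS, Set.inter_comm (Tp M ⁻¹' A) P, Set.image_inter_preimage, Set.inter_comm]
  rw [himg]
  have hSim : MeasurableSet (Tp M '' S) :=
    hSm.image_of_continuousOn_injOn (hcont.mono hSsub) (hinj.mono hSsub)
  set f' : ℝ × ℝ → (ℝ × ℝ) →L[ℝ] (ℝ × ℝ) := fun p =>
    ((M.det / (M 1 0 * p.1 + M 1 1) ^ 2) • (1 : ℝ →L[ℝ] ℝ)).prodMap
      ((M.det / (M 1 0 * p.2 + M 1 1) ^ 2) • (1 : ℝ →L[ℝ] ℝ)) with hf'def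
  have hf' : ∀ p ∈ S, HasFDerivWithinAt (Tp M) (f' p) S p := by
    intro p hp
    have hd := hden p (hSsub hp)
    have h1 := (mob_hasDerivAt M p.1 hd.1).hasFDerivAt
    have h2 := (mob_hasDerivAt M p.2 hd.2).hasFDerivAt
    have h3 := h1.prodMap p h2
    have heq : ∀ d : ℝ, ContinuousLinearMap.toSpanSingleton ℝ d
        = d • (1 : ℝ →L[ℝ] ℝ) := by
      intro d; ext; simp
    rw [heq, heq] at h3
    exact h3.hasFDerivWithinAt
  rw [mu0, withDensity_apply _ hSm, withDensity_apply _ hSim]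
  rw [lintegral_image_eq_lintegral_abs_det_fderiv_mul volume hSm hf' (hinj.mono hSsub) dens]
  apply setLIntegral_congr_fun hSm
  intro p hp
  beta_reduce
  symm
  have hd := hden p (hSsub hp)
  set d1 := M 1 0 * p.1 + M 1 1
  set d2 := M 1 0 * p.2 + M 1 1
  have hdet' : (f' p).det = M.det / d1 ^ 2 * (M.det / d2 ^ 2) := det_prodMap_smul _ _
  rw [hdet']
  have hc : M.det / d1 ^ 2 * (M.det / d2 ^ 2) = M.det ^ 2 / (d1 ^ 2 * d2 ^ 2) := by
    rw [div_mul_div_comm, ← pow_two]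
  have hcpos : (0:ℝ) < M.det ^ 2 / (d1 ^ 2 * d2 ^ 2) := by
    apply div_pos (by positivity)
    have := pow_ne_zero 2 hd.1
    have := pow_ne_zero 2 hd.2
    positivity
  rw [hc, abs_of_pos hcpos]
  have hsub : (Tp M p).1 - (Tp M p).2 = M.det * (p.1 - p.2) / (d1 * d2) :=
    mob_sub M hd.1 hd.2
  show ENNReal.ofReal _ * ENNReal.ofReal _ = dens p
  rw [dens, hsub, ← ENNReal.ofReal_mul (le_of_lt hcpos)]
  congr 1
  have he : (M.det * (p.1 - p.2) / (d1 * d2)) ^ 2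
      = M.det ^ 2 / (d1 ^ 2 * d2 ^ 2) * (p.1 - p.2) ^ 2 := by
    rw [div_pow, mul_pow, mul_pow, mul_div_right_comm]
  rw [he, mul_inv, ← mul_assoc, mul_inv_cancel₀ (ne_of_gt hcpos), one_mul]

/-- Composition of Möbius maps. -/
lemma mob_mul (M N : Matrix (Fin 2) (Fin 2) ℝ) (u : ℝ) (h : N 1 0 * u + N 1 1 ≠ 0) :
    mob (M * N) u = mob M (mob N u) := by
  unfold mob
  have e1 : M 0 0 * ((N 0 0 * u + N 0 1) / (N 1 0 * u + N 1 1)) + M 0 1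
      = (M 0 0 * (N 0 0 * u + N 0 1) + M 0 1 * (N 1 0 * u + N 1 1)) / (N 1 0 * u + N 1 1) := by
    rw [mul_div_assoc', div_add' _ _ _ h]
  have e2 : M 1 0 * ((N 0 0 * u + N 0 1) / (N 1 0 * u + N 1 1)) + M 1 1
      = (M 1 0 * (N 0 0 * u + N 0 1) + M 1 1 * (N 1 0 * u + N 1 1)) / (N 1 0 * u + N 1 1) := by
    rw [mul_div_assoc', div_add' _ _ _ h]
  rw [e1, e2, div_div_div_cancel_right₀ h]
  simp [Matrix.mul_apply, Fin.sum_univ_two]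
  ring_nf

lemma mob_smul (c : ℝ) (hc : c ≠ 0) (M : Matrix (Fin 2) (Fin 2) ℝ) (u : ℝ) :
    mob (c • M) u = mob M u := by
  unfold mob
  simp only [Matrix.smul_apply, smul_eq_mul]
  rw [mul_assoc c, mul_assoc c, ← mul_add, ← mul_add, mul_div_mul_left _ _ hc]

lemma mob_smul_one (d : ℝ) (hd : d ≠ 0) (u : ℝ) :
    mob (d • (1 : Matrix (Fin 2) (Fin 2) ℝ)) u = u := by
  unfold mob
  simp [Matrix.smul_apply, Matrix.one_apply]
  field_simp

/-- `T ∘ S = id` where `S` is given by the adjugate. -/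
lemma mob_adj_right (M : Matrix (Fin 2) (Fin 2) ℝ) (hdet : M.det ≠ 0) (y : ℝ)
    (h : M.adjugate 1 0 * y + M.adjugate 1 1 ≠ 0) :
    mob M (mob M.adjugate y) = y := by
  rw [← mob_mul _ _ _ h, Matrix.mul_adjugate, mob_smul_one _ hdet]

lemma mob_adj_left (M : Matrix (Fin 2) (Fin 2) ℝ) (hdet : M.det ≠ 0) (x : ℝ)
    (h : M 1 0 * x + M 1 1 ≠ 0) :
    mob M.adjugate (mob M x) = x := by
  rw [← mob_mul _ _ _ h, Matrix.adjugate_mul, mob_smul_one _ hdet]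

lemma det_adj (M : Matrix (Fin 2) (Fin 2) ℝ) : M.adjugate.det = M.det := by
  rw [Matrix.det_adjugate]
  norm_num

/-- Master lemma for one piece. -/
lemma piece (M : Matrix (Fin 2) (Fin 2) ℝ) (hdet : M.det ≠ 0)
    (I J : Set ℝ) (hI : MeasurableSet I) (hJ : MeasurableSet J)
    (P : Set (ℝ × ℝ))
    (Z : Set (ℝ × ℝ)) (hZ : mu0 Z = 0)
    (hIden : ∀ y ∈ I, M.adjugate 1 0 * y + M.adjugate 1 1 ≠ 0)
    (hJden : ∀ y ∈ J, M.adjugate 1 0 * y + M.adjugate 1 1 ≠ 0)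
    (hPden : ∀ p ∈ P, (M 1 0 * p.1 + M 1 1 ≠ 0) ∧ (M 1 0 * p.2 + M 1 1 ≠ 0))
    (hS : ∀ q ∈ I ×ˢ J, Tp M.adjugate q ∈ P)
    (hT : ∀ p ∈ P \ Z, Tp M p ∈ I ×ˢ J)
    (A : Set (ℝ × ℝ)) (hA : MeasurableSet A) :
    mu0 (Tp M ⁻¹' A ∩ P) = mu0 (A ∩ I ×ˢ J) := by
  have hdet' : M.adjugate.det ≠ 0 := by rw [det_adj]; exact hdet
  have hcov := cov M.adjugate hdet' I J hI hJ hIden hJden (Tp M ⁻¹' A) ((Tp_measurable M) hA)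
  have hL : Tp M.adjugate ⁻¹' (Tp M ⁻¹' A) ∩ I ×ˢ J = A ∩ I ×ˢ J := by
    ext q
    simp only [Set.mem_inter_iff, Set.mem_preimage, and_congr_left_iff]
    intro hq
    have h1 : Tp M (Tp M.adjugate q) = q := by
      have hd1 := hIden q.1 (Set.mem_prod.mp hq).1
      have hd2 := hJden q.2 (Set.mem_prod.mp hq).2
      unfold Tp
      simp only
      rw [mob_adj_right M hdet _ hd1, mob_adj_right M hdet _ hd2]
    rw [h1]
  rw [hL] at hcov
  rw [hcov]
  -- now compare `Tp M ⁻¹' A ∩ P` with `Tp M ⁻¹' A ∩ Tp M.adjugate '' (I ×ˢ J)`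
  set B := Tp M ⁻¹' A
  have h1 : Tp M.adjugate '' (I ×ˢ J) ⊆ P := by
    rintro q ⟨x, hx, rfl⟩; exact hS x hx
  have h2 : P \ Z ⊆ Tp M.adjugate '' (I ×ˢ J) := by
    intro p hp
    refine ⟨Tp M p, hT p hp, ?_⟩
    have hd := hPden p hp.1
    unfold Tp
    simp only
    rw [mob_adj_left M hdet _ hd.1, mob_adj_left M hdet _ hd.2]
  apply le_antisymm
  · calc mu0 (B ∩ P) ≤ mu0 ((B ∩ Tp M.adjugate '' (I ×ˢ J)) ∪ Z) := by
          apply measure_mono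
          intro p hp
          by_cases hz : p ∈ Z
          · exact Or.inr hz
          · exact Or.inl ⟨hp.1, h2 ⟨hp.2, hz⟩⟩
      _ ≤ mu0 (B ∩ Tp M.adjugate '' (I ×ˢ J)) + mu0 Z := measure_union_le _ _
      _ = mu0 (B ∩ Tp M.adjugate '' (I ×ˢ J)) := by rw [hZ, add_zero]
  · exact measure_mono (Set.inter_subset_inter_right _ h1)

/-- Vertical lines are null for `mu0`. -/
lemma null_vline (z : ℝ) : mu0 {p : ℝ × ℝ | p.1 = z} = 0 := by
  apply MeasureTheory.withDensity_absolutelyContinuous volume dens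
  have : {p : ℝ × ℝ | p.1 = z} = ({z} : Set ℝ) ×ˢ (Set.univ : Set ℝ) := by
    ext p
    constructor
    · intro hp; exact ⟨Set.mem_singleton_iff.mpr hp, Set.mem_univ _⟩
    · rintro ⟨h1, -⟩; exact Set.mem_singleton_iff.mp h1
  rw [this, Measure.volume_eq_prod, Measure.prod_prod]
  simp

/-- Horizontal countable unions are null for `mu0`. -/
lemma null_hset {C : Set ℝ} (hC : C.Countable) :
    mu0 {p : ℝ × ℝ | p.2 ∈ C} = 0 := by
  apply MeasureTheory.withDensity_absolutelyContinuous volume dens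
  have : {p : ℝ × ℝ | p.2 ∈ C} = (Set.univ : Set ℝ) ×ˢ C := by
    ext p; simp [Set.mem_prod]
  rw [this, Measure.volume_eq_prod, Measure.prod_prod]
  simp [Set.Countable.measure_zero hC]



local notation "rt" => Real.sqrt 2

lemma rt_sq : rt ^ 2 = 2 := Real.sq_sqrt (by norm_num)
lemma rt_pos : (0:ℝ) < rt := Real.sqrt_pos.mpr (by norm_num)
lemma rt_gt : (1.4:ℝ) < rt := by nlinarith [rt_sq, rt_pos]
lemma rt_lt : rt < (1.5:ℝ) := by nlinarith [rt_sq, rt_pos]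

/-- `γ·ν₁` unscaled. -/
def N1 : Matrix (Fin 2) (Fin 2) ℝ := !![1+2*rt, -3-2*rt; 1, -1]
def N2 : Matrix (Fin 2) (Fin 2) ℝ := !![-3-2*rt, 1+2*rt; -1, 1]
def N3 : Matrix (Fin 2) (Fin 2) ℝ := !![2+2*rt, -1; 1, 0]
def N4 : Matrix (Fin 2) (Fin 2) ℝ := !![-2-2*rt, -1; -1, 0]
def N5 : Matrix (Fin 2) (Fin 2) ℝ := !![3+2*rt, 1+2*rt; 1, 1]
def N6 : Matrix (Fin 2) (Fin 2) ℝ := !![-1-2*rt, -3-2*rt; -1, -1]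
/-- translation by `2n(1+√2)`. -/
def L (n : ℕ) : Matrix (Fin 2) (Fin 2) ℝ := !![1, 2*n*(1+rt); 0, 1]
/-- The `n`-th power (projectively) of `γ·ν₁`. -/
def Mp (n : ℕ) : Matrix (Fin 2) (Fin 2) ℝ :=
  !![rt + n*(1+rt), -(n*(3+2*rt)); (n:ℝ), rt - n*(1+rt)]

lemma gamnu1 : mob (gam * nu 1) = mob N1 := by
  have h : gam * nu 1 = rt⁻¹ • N1 := by
    show gam * (rt⁻¹ • !![1, 1; 1, -1]) = _
    rw [Matrix.mul_smul]
    congr 1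
    rw [gam, N1, Matrix.mul_fin_two]
    congr 1 <;> ring
  funext u
  rw [h, mob_smul _ (inv_ne_zero (ne_of_gt rt_pos))]

lemma gamnu2 : mob (gam * nu 2) = mob N2 := by
  have h : gam * nu 2 = rt⁻¹ • N2 := by
    show gam * (rt⁻¹ • !![1, 1; -1, 1]) = _
    rw [Matrix.mul_smul]
    congr 1
    rw [gam, N2, Matrix.mul_fin_two]
    congr 1 <;> ring
  funext u
  rw [h, mob_smul _ (inv_ne_zero (ne_of_gt rt_pos))]

lemma gamnu3 : mob (gam * nu 3) = mob N3 := by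
  have h : gam * nu 3 = N3 := by
    show gam * !![0, 1; 1, 0] = _
    rw [gam, N3, Matrix.mul_fin_two]
    congr 1 <;> ring
  rw [h]

lemma gamnu4 : mob (gam * nu 4) = mob N4 := by
  have h : gam * nu 4 = N4 := by
    show gam * !![0, 1; -1, 0] = _
    rw [gam, N4, Matrix.mul_fin_two]
    congr 1 <;> ring
  rw [h]

lemma gamnu5 : mob (gam * nu 5) = mob N5 := by
  have h : gam * nu 5 = rt⁻¹ • N5 := by
    show gam * (rt⁻¹ • !![-1, 1; 1, 1]) = _
    rw [Matrix.mul_smul]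
    congr 1
    rw [gam, N5, Matrix.mul_fin_two]
    congr 1 <;> ring
  funext u
  rw [h, mob_smul _ (inv_ne_zero (ne_of_gt rt_pos))]

lemma gamnu6 : mob (gam * nu 6) = mob N6 := by
  have h : gam * nu 6 = rt⁻¹ • N6 := by
    show gam * (rt⁻¹ • !![-1, 1; -1, -1]) = _
    rw [Matrix.mul_smul]
    congr 1
    rw [gam, N6, Matrix.mul_fin_two]
    congr 1 <;> ring
  funext u
  rw [h, mob_smul _ (inv_ne_zero (ne_of_gt rt_pos))]

lemma gamnu7 : mob (gam * nu 7) = mob (L 1) := by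
  have h : gam * nu 7 = L 1 := by
    show gam * !![-1, 0; 0, 1] = _
    rw [gam, L, Matrix.mul_fin_two]
    congr 1 <;> push_cast <;> ring
  rw [h]

-- matrix entry evaluation lemmas
lemma mob_eval (a b c d u : ℝ) : mob !![a, b; c, d] u = (a*u + b)/(c*u + d) := by
  rw [mob]
  norm_num

-- sector index lemmas
lemma sec1 {u : ℝ} (h1 : 1 < u) (h2 : u ≤ 1 + rt) : sectorIndex u = 1 := by
  unfold sectorIndex
  rw [if_neg (by linarith [rt_pos]), if_pos h1]

lemma sec2 {u : ℝ} (h1 : rt - 1 < u) (h2 : u ≤ 1) : sectorIndex u = 2 := by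
  unfold sectorIndex
  rw [if_neg (by nlinarith [rt_pos]), if_neg (by linarith), if_pos h1]

lemma sec3 {u : ℝ} (h1 : 0 < u) (h2 : u ≤ rt - 1) : sectorIndex u = 3 := by
  unfold sectorIndex
  rw [if_neg (by nlinarith [rt_lt, rt_pos]), if_neg (by nlinarith [rt_lt]),
    if_neg (by linarith), if_pos h1]

lemma sec4 {u : ℝ} (h1 : 1 - rt < u) (h2 : u ≤ 0) : sectorIndex u = 4 := by
  unfold sectorIndex
  rw [if_neg (by nlinarith [rt_pos]), if_neg (by linarith), if_neg (by nlinarith [rt_gt]),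
    if_neg (by linarith), if_pos h1]

lemma sec5 {u : ℝ} (h1 : -1 < u) (h2 : u ≤ 1 - rt) : sectorIndex u = 5 := by
  unfold sectorIndex
  rw [if_neg (by nlinarith [rt_pos, rt_gt]), if_neg (by nlinarith [rt_gt]),
    if_neg (by nlinarith [rt_gt]), if_neg (by nlinarith [rt_gt]), if_neg (by linarith),
    if_pos h1]

lemma sec6 {u : ℝ} (h1 : -(1 + rt) < u) (h2 : u ≤ -1) : sectorIndex u = 6 := by
  unfold sectorIndex
  rw [if_neg (by linarith [rt_pos]), if_neg (by linarith), if_neg (by linarith [rt_pos]),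
    if_neg (by linarith), if_neg (by linarith [rt_lt]), if_neg (by linarith), if_pos h1]

lemma sec7 {u : ℝ} (h2 : u ≤ -(1 + rt)) : sectorIndex u = 7 := by
  unfold sectorIndex
  rw [if_neg (by linarith [rt_pos]), if_neg (by linarith [rt_pos]),
    if_neg (by linarith [rt_pos, rt_lt]), if_neg (by linarith [rt_pos]),
    if_neg (by linarith [rt_pos, rt_lt]), if_neg (by linarith [rt_pos]),
    if_neg (by linarith)]

lemma Fhat_fst (p : ℝ × ℝ) : (Fhat p).1 = F p.1 := by
  unfold Fhat F
  by_cases h : sectorIndex p.1 = 0 <;> simp [h]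

lemma Fhat_iter_fst (n : ℕ) (p : ℝ × ℝ) : (Fhat^[n] p).1 = F^[n] p.1 := by
  induction n generalizing p with
  | zero => rfl
  | succ n ih =>
      rw [Function.iterate_succ_apply, Function.iterate_succ_apply, ← Fhat_fst, ih]

lemma Fhat_sector {p : ℝ × ℝ} {i : ℕ} (h : sectorIndex p.1 = i) (hi : i ≠ 0)
    (hmob : mob (gam * nu i) = mob (Nmat : Matrix (Fin 2) (Fin 2) ℝ)) :
    Fhat p = Tp Nmat p := by
  unfold Fhat
  rw [h, if_neg hi, hmob]
  rfl




/-- Left endpoints of the `Σ₁` pieces. -/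
def cc (n : ℕ) : ℝ := 1 + rt - rt / n

lemma cc_one : cc 1 = 1 := by unfold cc; norm_num

lemma cc_lt_iff {n : ℕ} (hn : 1 ≤ n) (x : ℝ) : cc n < x ↔ (1 + rt - x) * n < rt := by
  have hm : (0:ℝ) < n := by exact_mod_cast hn
  have h1 : cc n < x ↔ 1 + rt - x < rt / n := by unfold cc; constructor <;> intro <;> linarith
  rw [h1, lt_div_iff₀ hm]

lemma le_cc_iff {n : ℕ} (hn : 1 ≤ n) (x : ℝ) : x ≤ cc n ↔ rt ≤ (1 + rt - x) * n := by
  have hm : (0:ℝ) < n := by exact_mod_cast hn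
  have h1 : x ≤ cc n ↔ rt / n ≤ 1 + rt - x := by unfold cc; constructor <;> intro <;> linarith
  rw [h1, div_le_iff₀ hm]

lemma cc_le_cc {j n : ℕ} (hj : 1 ≤ j) (hjn : j ≤ n) : cc j ≤ cc n := by
  have hmj : (0:ℝ) < j := by exact_mod_cast hj
  have hmn : (0:ℝ) < n := by exact_mod_cast hj.trans hjn
  have : rt / n ≤ rt / j := by
    apply div_le_div_of_nonneg_left (le_of_lt rt_pos) hmj
    exact_mod_cast hjn
  unfold cc; linarith

lemma cc_ge_one {n : ℕ} (hn : 1 ≤ n) : 1 ≤ cc n := by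
  have := cc_le_cc le_rfl hn
  rw [cc_one] at this; exact this

lemma cc_lt_top {n : ℕ} (hn : 1 ≤ n) : cc n < 1 + rt := by
  have hm : (0:ℝ) < n := by exact_mod_cast hn
  have : 0 < rt / n := div_pos rt_pos hm
  unfold cc; linarith

lemma mobN1 (u : ℝ) : mob N1 u = ((1+2*rt)*u - 3 - 2*rt)/(u - 1) := by
  rw [N1, mob_eval]
  ring_nf

lemma mobMp (n : ℕ) (u : ℝ) :
    mob (Mp n) u = ((rt + n*(1+rt))*u + -(n*(3+2*rt)))/((n:ℝ)*u + (rt - n*(1+rt))) := by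
  rw [Mp, mob_eval]

lemma Mp_den_pos {n : ℕ} (hn : 1 ≤ n) {u : ℝ} (hu : cc n < u) :
    0 < (n:ℝ)*u + (rt - n*(1+rt)) := by
  rw [cc_lt_iff hn] at hu
  nlinarith [hu]

/-- `mob (Mp n)` stays below the fixed point. -/
lemma Mp_lt_a {n : ℕ} (hn : 1 ≤ n) {u : ℝ} (hu : cc n < u) (hu2 : u < 1 + rt) :
    mob (Mp n) u < 1 + rt := by
  have hden := Mp_den_pos hn hu
  rw [mobMp, div_lt_iff₀ hden]
  nlinarith [rt_sq, mul_pos rt_pos (show (0:ℝ) < 1 + rt - u by linarith)]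

/-- past the next cut, the image is still `> 1`. -/
lemma Mp_gt_one {n : ℕ} (hn : 1 ≤ n) {u : ℝ} (hu : cc (n+1) < u) (hu2 : u < 1 + rt) :
    1 < mob (Mp n) u := by
  have hcn : cc n < u := lt_of_le_of_lt (cc_le_cc hn (Nat.le_succ n)) hu
  have hden := Mp_den_pos hn hcn
  rw [cc_lt_iff (hn.trans (Nat.le_succ n)) u] at hu
  push_cast at hu
  rw [mobMp, lt_div_iff₀ hden]
  nlinarith [rt_sq, mul_lt_mul_of_pos_left hu rt_pos]

/-- before the next cut, the image is `≤ 1`. -/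
lemma Mp_le_one {n : ℕ} (hn : 1 ≤ n) {u : ℝ} (hu : cc n < u) (hu2 : u ≤ cc (n+1)) :
    mob (Mp n) u ≤ 1 := by
  have hden := Mp_den_pos hn hu
  rw [le_cc_iff (hn.trans (Nat.le_succ n)) u] at hu2
  push_cast at hu2
  rw [mobMp, div_le_iff₀ hden]
  nlinarith [rt_sq, mul_le_mul_of_nonneg_left hu2 (le_of_lt rt_pos)]

/-- the `v`-coordinate invariant. -/
lemma N1_v {v : ℝ} (hv : 1 + rt < v) : 1 + rt < mob N1 v := by
  have hden : (0:ℝ) < v - 1 := by nlinarith [rt_pos]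
  rw [mobN1, lt_div_iff₀ hden]
  nlinarith [rt_sq, mul_pos rt_pos (show (0:ℝ) < v - 1 - rt by linarith)]

/-- the `u`-coordinate recursion. -/
lemma N1_u {n : ℕ} (hn : 1 ≤ n) {u : ℝ} (h1 : cc (n+1) < u) (h2 : u < 1 + rt) :
    cc n < mob N1 u ∧ mob N1 u < 1 + rt := by
  have hu1 : 1 < u := by
    have h := cc_ge_one (hn.trans (Nat.le_succ n))
    linarith
  have hden : (0:ℝ) < u - 1 := by linarith
  rw [cc_lt_iff (hn.trans (Nat.le_succ n)) u] at h1
  push_cast at h1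
  constructor
  · rw [cc_lt_iff hn, mobN1]
    have hne : u - 1 ≠ 0 := ne_of_gt hden
    have he : 1 + rt - ((1+2*rt)*u - 3 - 2*rt)/(u - 1) = rt*(1+rt-u)/(u - 1) := by
      field_simp
      first
        | linear_combination rt_sq
        | linear_combination (-1:ℝ) * rt_sq
        | linear_combination (u-1) * rt_sq
        | linear_combination (1-u) * rt_sq
    rw [he, div_mul_eq_mul_div, div_lt_iff₀ hden]
    nlinarith [mul_lt_mul_of_pos_left h1 rt_pos]
  · rw [mobN1, div_lt_iff₀ hden]
    nlinarith [rt_sq, mul_pos rt_pos (show (0:ℝ) < 1 + rt - u by linarith)]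

lemma Mp_one : Mp 1 = N1 := by
  rw [Mp, N1]
  congr 1 <;> push_cast <;> ring

lemma Mp_mul_N1 (n : ℕ) : Mp n * N1 = rt • Mp (n+1) := by
  ext i j
  fin_cases i <;> fin_cases j <;>
    simp [Mp, N1, Matrix.mul_apply, Fin.sum_univ_two, Matrix.smul_apply, smul_eq_mul] <;>
    push_cast <;> ring_nf <;>
    linear_combination (n:ℝ) * rt_sq

lemma iter_one : ∀ n : ℕ, 1 ≤ n → ∀ u v : ℝ, cc n < u → u < 1 + rt → 1 + rt < v →
    Fhat^[n] (u, v) = (mob (Mp n) u, mob (Mp n) v) := by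
  intro n hn
  induction n, hn using Nat.le_induction with
  | base =>
      intro u v h1 h2 h3
      rw [cc_one] at h1
      rw [Function.iterate_one]
      rw [Fhat_sector (p := (u,v)) (sec1 h1 (le_of_lt h2)) one_ne_zero gamnu1, Mp_one]
      rfl
  | succ n hn ih =>
      intro u v h1 h2 h3
      have hu1 : 1 < u := by linarith [cc_ge_one (hn.trans (Nat.le_succ n))]
      have hstep : Fhat (u, v) = Tp N1 (u, v) :=
        Fhat_sector (p := (u,v)) (sec1 hu1 (le_of_lt h2)) one_ne_zero gamnu1
      have hu' := N1_u hn h1 h2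
      have hv' := N1_v h3
      have hv3 : 1 + rt < v := h3
      rw [Function.iterate_succ_apply, hstep]
      show Fhat^[n] (mob N1 u, mob N1 v) = _
      rw [ih (mob N1 u) (mob N1 v) hu'.1 hu'.2 hv']
      have hcomp : ∀ x : ℝ, 1 < x → mob (Mp n) (mob N1 x) = mob (Mp (n+1)) x := by
        intro x hx
        have hden : N1 1 0 * x + N1 1 1 ≠ 0 := by
          rw [N1]
          norm_num
          nlinarith
        rw [← mob_mul _ _ _ hden, Mp_mul_N1, mob_smul _ (ne_of_gt rt_pos)]
      rw [hcomp u hu1, hcomp v (by nlinarith [rt_pos] : 1 < v)]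

lemma n1_eq (n : ℕ) (hn : 1 ≤ n) {u : ℝ} (h1 : cc n < u) (h2 : u ≤ cc (n+1)) : n1 u = n := by
  have hua : u < 1 + rt := lt_of_le_of_lt h2 (cc_lt_top (hn.trans (Nat.le_succ n)))
  have hiter : ∀ j, 1 ≤ j → j ≤ n → F^[j] u = mob (Mp j) u := by
    intro j hj1 hjn
    have hcc : cc j < u := lt_of_le_of_lt (cc_le_cc hj1 hjn) h1
    have h := iter_one j hj1 u (2 + 2*rt) hcc hua (by nlinarith [rt_pos])
    have hfst := Fhat_iter_fst j (u, 2 + 2*rt)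
    rw [h] at hfst
    exact hfst.symm
  have hmem : ∀ j, 1 ≤ j → j < n → F^[j] u ∈ Set.Ioc (1:ℝ) (1 + rt) := by
    intro j hj1 hjn
    rw [hiter j hj1 (le_of_lt hjn)]
    refine ⟨Mp_gt_one hj1 ?_ hua, le_of_lt (Mp_lt_a hj1 (lt_of_le_of_lt (cc_le_cc hj1 (le_of_lt hjn)) h1) hua)⟩
    exact lt_of_le_of_lt (cc_le_cc (Nat.succ_le_succ (Nat.zero_le j)) hjn) h1
  have hout : F^[n] u ∉ Set.Ioc (1:ℝ) (1 + rt) := by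
    rw [hiter n hn le_rfl]
    intro hmem'
    exact absurd hmem'.1 (not_lt.mpr (Mp_le_one hn h1 h2))
  unfold n1
  apply IsLeast.csInf_eq
  constructor
  · exact ⟨hn, hout⟩
  · intro m hm
    by_contra hlt
    push_neg at hlt
    exact hm.2 (hmem m hm.1 hlt)

lemma Ghat_one (n : ℕ) (hn : 1 ≤ n) {p : ℝ × ℝ}
    (h1 : cc n < p.1) (h2 : p.1 ≤ cc (n+1)) (h3 : 1 + 2*rt < p.2) :
    Ghat p = Tp (Mp n) p := by
  have hmem : p.1 ∈ Set.Ioc (1:ℝ) (1 + rt) :=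
    ⟨lt_of_le_of_lt (cc_ge_one hn) h1,
     le_of_lt (lt_of_le_of_lt h2 (cc_lt_top (hn.trans (Nat.le_succ n))))⟩
  have hlt : p.1 < 1 + rt := lt_of_le_of_lt h2 (cc_lt_top (hn.trans (Nat.le_succ n)))
  unfold Ghat nG
  rw [if_pos hmem, n1_eq n hn h1 h2]
  exact iter_one n hn p.1 p.2 h1 hlt (by linarith [rt_pos])

lemma mob_L (n : ℕ) (x : ℝ) : mob (L n) x = x + 2*n*(1+rt) := by
  rw [L, mob_eval]
  norm_num

lemma iter_seven : ∀ n : ℕ, ∀ u v : ℝ, u + 2*(n:ℝ)*(1+rt) ≤ -(1+rt) →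
    Fhat^[n+1] (u, v) = (mob (L (n+1)) u, mob (L (n+1)) v) := by
  intro n
  induction n with
  | zero =>
      intro u v h
      push_cast at h
      rw [Function.iterate_one]
      exact Fhat_sector (p := (u,v)) (sec7 (by linarith)) (by norm_num) gamnu7
  | succ n ih =>
      intro u v h
      have ha : (0:ℝ) < 1 + rt := by linarith [rt_pos]
      have hn0 : (0:ℝ) ≤ 2*((n:ℝ)+1)*(1+rt) := by positivity
      have hu7 : u ≤ -(1+rt) := by push_cast at h ⊢; nlinarith
      have hstep : Fhat (u, v) = Tp (L 1) (u, v) :=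
        Fhat_sector (p := (u,v)) (sec7 hu7) (by norm_num) gamnu7
      rw [show n + 1 + 1 = (n + 1) + 1 from rfl, Function.iterate_succ_apply, hstep]
      show Fhat^[n+1] (mob (L 1) u, mob (L 1) v) = _
      have hcond : mob (L 1) u + 2*(n:ℝ)*(1+rt) ≤ -(1+rt) := by
        rw [mob_L]
        push_cast at h ⊢
        nlinarith
      rw [ih (mob (L 1) u) (mob (L 1) v) hcond]
      rw [Prod.mk.injEq]
      constructor <;> (rw [mob_L, mob_L, mob_L]; push_cast; ring)

lemma n7_eq (n : ℕ) (hn : 1 ≤ n) {u : ℝ}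
    (h1 : -(1+rt) - 2*(n:ℝ)*(1+rt) < u) (h2 : u ≤ -(1+rt) - 2*((n:ℝ)-1)*(1+rt)) :
    n7 u = n := by
  have ha : (0:ℝ) < 1 + rt := by linarith [rt_pos]
  have hn1 : (1:ℝ) ≤ (n:ℝ) := by exact_mod_cast hn
  have hiter : ∀ j : ℕ, 1 ≤ j → j ≤ n → F^[j] u = u + 2*(j:ℝ)*(1+rt) := by
    intro j hj1 hjn
    obtain ⟨k, rfl⟩ : ∃ k, j = k + 1 := ⟨j - 1, (Nat.succ_pred_eq_of_pos hj1).symm⟩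
    have hk : (k:ℝ) ≤ (n:ℝ) - 1 := by
      have : (k+1 : ℕ) ≤ n := hjn
      have : ((k:ℝ)+1) ≤ (n:ℝ) := by exact_mod_cast this
      linarith
    have hcond : u + 2*(k:ℝ)*(1+rt) ≤ -(1+rt) := by nlinarith
    have h := iter_seven k u 0 hcond
    have hfst := Fhat_iter_fst (k+1) (u, 0)
    rw [h] at hfst
    have hval : F^[k+1] u = mob (L (k+1)) u := by simpa using hfst.symm
    rw [hval, mob_L]
  have hmem : ∀ j, 1 ≤ j → j < n → F^[j] u ∈ Set.Iic (-(1+rt)) := by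
    intro j hj1 hjn
    rw [hiter j hj1 (le_of_lt hjn)]
    have : (j:ℝ) ≤ (n:ℝ) - 1 := by
      have : (j+1 : ℕ) ≤ n := hjn
      have : ((j:ℝ)+1) ≤ (n:ℝ) := by exact_mod_cast this
      linarith
    simp only [Set.mem_Iic]
    nlinarith
  have hout : F^[n] u ∉ Set.Iic (-(1+rt)) := by
    rw [hiter n hn le_rfl]
    simp only [Set.mem_Iic, not_le]
    linarith
  unfold n7
  apply IsLeast.csInf_eq
  constructor
  · exact ⟨hn, hout⟩
  · intro m hm
    by_contra hlt
    push_neg at hlt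
    exact hm.2 (hmem m hm.1 hlt)

lemma Ghat_seven (n : ℕ) (hn : 1 ≤ n) {p : ℝ × ℝ}
    (h1 : -(1+rt) - 2*(n:ℝ)*(1+rt) < p.1) (h2 : p.1 ≤ -(1+rt) - 2*((n:ℝ)-1)*(1+rt)) :
    Ghat p = Tp (L n) p := by
  have ha : (0:ℝ) < 1 + rt := by linarith [rt_pos]
  have hn1 : (1:ℝ) ≤ (n:ℝ) := by exact_mod_cast hn
  have h7 : p.1 ≤ -(1+rt) := by nlinarith
  have hnot : p.1 ∉ Set.Ioc (1:ℝ) (1 + rt) := by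
    intro hmem; have := hmem.1; linarith
  unfold Ghat nG
  rw [if_neg hnot, if_pos (Set.mem_Iic.mpr h7), n7_eq n hn h1 h2]
  obtain ⟨k, rfl⟩ : ∃ k, n = k + 1 := ⟨n - 1, (Nat.succ_pred_eq_of_pos hn).symm⟩
  have hcond : p.1 + 2*(k:ℝ)*(1+rt) ≤ -(1+rt) := by
    push_cast at h2
    nlinarith
  exact iter_seven k p.1 p.2 hcond

lemma Ghat_mid {p : ℝ × ℝ} {i : ℕ} (hi0 : i ≠ 0)
    (h1 : -(1+rt) < p.1) (h2 : p.1 ≤ 1) (hsec : sectorIndex p.1 = i)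
    {Nmat : Matrix (Fin 2) (Fin 2) ℝ} (hmob : mob (gam * nu i) = mob Nmat) :
    Ghat p = Tp Nmat p := by
  have hnot1 : p.1 ∉ Set.Ioc (1:ℝ) (1 + rt) := by
    intro hmem; have := hmem.1; linarith
  have hnot7 : p.1 ∉ Set.Iic (-(1+rt)) := by
    intro hmem; rw [Set.mem_Iic] at hmem; linarith
  unfold Ghat nG
  rw [if_neg hnot1, if_neg hnot7, if_pos (by linarith [rt_pos] : p.1 ≤ 1 + rt)]
  rw [Function.iterate_one]
  exact Fhat_sector hsec hi0 hmob


lemma Tp_eval (M : Matrix (Fin 2) (Fin 2) ℝ) (p : ℝ × ℝ) :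
    Tp M p = (mob M p.1, mob M p.2) := rfl

lemma detN2 : N2.det ≠ 0 := by
  rw [N2, Matrix.det_fin_two_of]; intro h; nlinarith [rt_pos]

lemma adjN2 : N2.adjugate = !![1, -(1+2*rt); 1, -3-2*rt] := by
  rw [N2, Matrix.adjugate_fin_two_of]
  norm_num

lemma mobN2 (u : ℝ) : mob N2 u = ((-3-2*rt)*u + (1+2*rt))/(-1*u + 1) := by
  rw [show N2 = !![(-3-2*rt), 1+2*rt; -1, 1] from rfl, mob_eval]

lemma mobAdjN2 (u : ℝ) : mob N2.adjugate u = (1*u + -(1+2*rt))/(1*u + (-3-2*rt)) := by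
  rw [adjN2, mob_eval]

lemma key_mid0 (A : Set (ℝ × ℝ)) (hA : MeasurableSet A) :
    mu0 (Tp N2 ⁻¹' A ∩ (Set.Ioo (rt-1) 1 ×ˢ Set.Ioi (1+rt)))
      = mu0 (A ∩ (Set.Iio (1+rt) ×ˢ Set.Ioo (3+2*rt) (3+3*rt))) := by
  apply piece N2 detN2 _ _ measurableSet_Iio measurableSet_Ioo _ {p | p.1 = 1} (null_vline 1)
  · intro y hy
    rw [Set.mem_Iio] at hy
    rw [adjN2]
    norm_num
    intro h
    nlinarith [rt_pos]
  · intro y hy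
    rw [Set.mem_Ioo] at hy
    rw [adjN2]
    norm_num
    intro h
    nlinarith [hy.1]
  · rintro p ⟨h1, h2⟩
    rw [Set.mem_Ioo] at h1
    rw [Set.mem_Ioi] at h2
    constructor
    · rw [show N2 1 0 = -1 from rfl, show N2 1 1 = 1 from rfl]
      intro h; nlinarith [h1.2]
    · rw [show N2 1 0 = -1 from rfl, show N2 1 1 = 1 from rfl]
      intro h; nlinarith [rt_pos]
  · rintro q ⟨hx, hy⟩
    rw [Set.mem_Iio] at hx
    rw [Set.mem_Ioo] at hy
    rw [Tp_eval, mobAdjN2, mobAdjN2]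
    have hdx : 1*q.1 + (-3-2*rt) < 0 := by nlinarith [rt_pos]
    have hdy : 0 < 1*q.2 + (-3-2*rt) := by nlinarith [hy.1]
    constructor
    · rw [Set.mem_Ioo]
      constructor
      · rw [lt_div_iff_of_neg hdx]
        nlinarith [rt_sq, rt_pos, rt_gt, rt_lt, hx]
      · rw [div_lt_iff_of_neg hdx]
        nlinarith [rt_pos]
    · rw [Set.mem_Ioi, lt_div_iff₀ hdy]
      nlinarith [rt_sq, hy.2]
  · rintro p ⟨⟨h1, h2⟩, -⟩
    rw [Set.mem_Ioo] at h1
    rw [Set.mem_Ioi] at h2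
    rw [Tp_eval, mobN2, mobN2]
    have hdx : 0 < -1*p.1 + 1 := by nlinarith [h1.2]
    have hdy : -1*p.2 + 1 < 0 := by nlinarith [rt_pos]
    constructor
    · rw [Set.mem_Iio, div_lt_iff₀ hdx]
      nlinarith [rt_sq, rt_gt, rt_lt, h1.1]
    · rw [Set.mem_Ioo]
      constructor
      · rw [lt_div_iff_of_neg hdy]
        nlinarith [rt_pos]
      · rw [div_lt_iff_of_neg hdy]
        nlinarith [rt_sq, h2, mul_pos rt_pos (show (0:ℝ) < p.2 - 1 - rt by linarith)]
  · exact hA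

lemma gh_mid0 {p : ℝ × ℝ} (hp : p ∈ Set.Ioo (rt-1) 1 ×ˢ Set.Ioi (1+rt)) :
    Ghat p = Tp N2 p := by
  rcases hp with ⟨h1, -⟩
  rw [Set.mem_Ioo] at h1
  exact Ghat_mid (by norm_num) (by nlinarith [rt_gt, h1.1] : -(1+rt) < p.1) (le_of_lt h1.2)
    (sec2 h1.1 (le_of_lt h1.2)) gamnu2

lemma detN3 : N3.det ≠ 0 := by
  rw [N3, Matrix.det_fin_two_of]; intro h; nlinarith [rt_pos]

lemma adjN3 : N3.adjugate = !![0, 1; -1, 2+2*rt] := by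
  rw [N3, Matrix.adjugate_fin_two_of]; norm_num

lemma mobN3 (u : ℝ) : mob N3 u = ((2+2*rt)*u + -1)/(1*u + 0) := by
  rw [show N3 = !![(2+2*rt), -1; 1, 0] from rfl, mob_eval]

lemma mobAdjN3 (u : ℝ) : mob N3.adjugate u = (0*u + 1)/(-1*u + (2+2*rt)) := by
  rw [adjN3, mob_eval]

lemma key_mid1 (A : Set (ℝ × ℝ)) (hA : MeasurableSet A) :
    mu0 (Tp N3 ⁻¹' A ∩ (Set.Ioc 0 (rt-1) ×ˢ Set.Ioi (1+rt)))
      = mu0 (A ∩ (Set.Iio (1+rt) ×ˢ Set.Ioo (3+rt) (2+2*rt))) := by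
  apply piece N3 detN3 _ _ measurableSet_Iio measurableSet_Ioo _ {p | p.1 = rt-1}
    (null_vline (rt-1))
  · intro y hy
    rw [Set.mem_Iio] at hy
    rw [adjN3]
    norm_num
    intro h; nlinarith [rt_pos]
  · intro y hy
    rw [Set.mem_Ioo] at hy
    rw [adjN3]
    norm_num
    intro h; nlinarith [hy.2]
  · rintro p ⟨h1, h2⟩
    rw [Set.mem_Ioc] at h1
    rw [Set.mem_Ioi] at h2
    constructor
    · rw [show N3 1 0 = 1 from rfl, show N3 1 1 = 0 from rfl]
      intro h; nlinarith [h1.1]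
    · rw [show N3 1 0 = 1 from rfl, show N3 1 1 = 0 from rfl]
      intro h; nlinarith [rt_pos]
  · rintro q ⟨hx, hy⟩
    rw [Set.mem_Iio] at hx
    rw [Set.mem_Ioo] at hy
    rw [Tp_eval, mobAdjN3, mobAdjN3]
    have hdx : 0 < -1*q.1 + (2+2*rt) := by nlinarith [rt_pos]
    have hdy : 0 < -1*q.2 + (2+2*rt) := by nlinarith [hy.2]
    constructor
    · rw [Set.mem_Ioc]
      constructor
      · rw [lt_div_iff₀ hdx]; nlinarith [hdx]
      · rw [div_le_iff₀ hdx]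
        nlinarith [rt_sq, rt_gt, mul_pos (show (0:ℝ) < rt-1 by nlinarith [rt_gt])
          (show (0:ℝ) < (1+rt) - q.1 by linarith)]
    · rw [Set.mem_Ioi, lt_div_iff₀ hdy]
      nlinarith [rt_sq, mul_pos (show (0:ℝ) < 1+rt by linarith [rt_pos])
        (show (0:ℝ) < q.2 - 3 - rt by linarith [hy.1])]
  · rintro p ⟨⟨h1, h2⟩, hz⟩
    rw [Set.mem_Ioc] at h1
    rw [Set.mem_Ioi] at h2
    have hzu : p.1 < rt - 1 := lt_of_le_of_ne h1.2 hz
    rw [Tp_eval, mobN3, mobN3]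
    have hdx : 0 < 1*p.1 + 0 := by nlinarith [h1.1]
    have hdy : 0 < 1*p.2 + 0 := by nlinarith [rt_pos]
    constructor
    · rw [Set.mem_Iio, div_lt_iff₀ hdx]
      nlinarith [rt_sq, mul_pos (show (0:ℝ) < 1+rt by linarith [rt_pos])
        (show (0:ℝ) < (rt-1) - p.1 by linarith)]
    · rw [Set.mem_Ioo]
      constructor
      · rw [lt_div_iff₀ hdy]
        nlinarith [rt_sq, mul_pos (show (0:ℝ) < rt-1 by nlinarith [rt_gt])
          (show (0:ℝ) < p.2 - 1 - rt by linarith)]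
      · rw [div_lt_iff₀ hdy]
        nlinarith [hdy]
  · exact hA

lemma gh_mid1 {p : ℝ × ℝ} (hp : p ∈ Set.Ioc 0 (rt-1) ×ˢ Set.Ioi (1+rt)) :
    Ghat p = Tp N3 p := by
  rcases hp with ⟨h1, -⟩
  rw [Set.mem_Ioc] at h1
  exact Ghat_mid (by norm_num) (by nlinarith [rt_pos, h1.1] : -(1+rt) < p.1)
    (by nlinarith [rt_lt, h1.2] : p.1 ≤ 1) (sec3 h1.1 h1.2) gamnu3

lemma detN4 : N4.det ≠ 0 := by
  rw [N4, Matrix.det_fin_two_of]; intro h; nlinarith [rt_pos]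

lemma adjN4 : N4.adjugate = !![0, 1; 1, -2-2*rt] := by
  rw [N4, Matrix.adjugate_fin_two_of]; norm_num

lemma mobN4 (u : ℝ) : mob N4 u = ((-2-2*rt)*u + -1)/(-1*u + 0) := by
  rw [show N4 = !![(-2-2*rt), -1; -1, 0] from rfl, mob_eval]

lemma mobAdjN4 (u : ℝ) : mob N4.adjugate u = (0*u + 1)/(1*u + (-2-2*rt)) := by
  rw [adjN4, mob_eval]

lemma key_mid2 (A : Set (ℝ × ℝ)) (hA : MeasurableSet A) :
    mu0 (Tp N4 ⁻¹' A ∩ (Set.Ioo (1-rt) 0 ×ˢ Set.Ioi (1+rt)))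
      = mu0 (A ∩ (Set.Iio (1+rt) ×ˢ Set.Ioo (2+2*rt) (1+3*rt))) := by
  apply piece N4 detN4 _ _ measurableSet_Iio measurableSet_Ioo _ {p | p.1 = 0}
    (null_vline 0)
  · intro y hy
    rw [Set.mem_Iio] at hy
    rw [adjN4]
    norm_num
    intro h; nlinarith [rt_pos]
  · intro y hy
    rw [Set.mem_Ioo] at hy
    rw [adjN4]
    norm_num
    intro h; nlinarith [hy.1]
  · rintro p ⟨h1, h2⟩
    rw [Set.mem_Ioo] at h1
    rw [Set.mem_Ioi] at h2
    constructor
    · rw [show N4 1 0 = -1 from rfl, show N4 1 1 = 0 from rfl]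
      intro h; nlinarith [h1.2]
    · rw [show N4 1 0 = -1 from rfl, show N4 1 1 = 0 from rfl]
      intro h; nlinarith [rt_pos]
  · rintro q ⟨hx, hy⟩
    rw [Set.mem_Iio] at hx
    rw [Set.mem_Ioo] at hy
    rw [Tp_eval, mobAdjN4, mobAdjN4]
    have hdx : 1*q.1 + (-2-2*rt) < 0 := by nlinarith [rt_pos]
    have hdy : 0 < 1*q.2 + (-2-2*rt) := by nlinarith [hy.1]
    constructor
    · rw [Set.mem_Ioo]
      constructor
      · rw [lt_div_iff_of_neg hdx]
        nlinarith [rt_sq, rt_gt, mul_pos (show (0:ℝ) < rt-1 by nlinarith [rt_gt])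
          (show (0:ℝ) < (1+rt) - q.1 by linarith)]
      · rw [div_lt_iff_of_neg hdx]
        nlinarith [hdx]
    · rw [Set.mem_Ioi, lt_div_iff₀ hdy]
      nlinarith [rt_sq, mul_pos (show (0:ℝ) < 1+rt by linarith [rt_pos])
        (show (0:ℝ) < (1+3*rt) - q.2 by linarith [hy.2])]
  · rintro p ⟨⟨h1, h2⟩, -⟩
    rw [Set.mem_Ioo] at h1
    rw [Set.mem_Ioi] at h2
    rw [Tp_eval, mobN4, mobN4]
    have hdx : 0 < -1*p.1 + 0 := by nlinarith [h1.2]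
    have hdy : -1*p.2 + 0 < 0 := by nlinarith [rt_pos]
    constructor
    · rw [Set.mem_Iio, div_lt_iff₀ hdx]
      nlinarith [rt_sq, mul_pos (show (0:ℝ) < 1+rt by linarith [rt_pos])
        (show (0:ℝ) < p.1 - (1-rt) by linarith)]
    · rw [Set.mem_Ioo]
      constructor
      · rw [lt_div_iff_of_neg hdy]
        nlinarith [hdy]
      · rw [div_lt_iff_of_neg hdy]
        nlinarith [rt_sq, mul_pos (show (0:ℝ) < rt-1 by nlinarith [rt_gt])
          (show (0:ℝ) < p.2 - 1 - rt by linarith)]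
  · exact hA

lemma gh_mid2 {p : ℝ × ℝ} (hp : p ∈ Set.Ioo (1-rt) 0 ×ˢ Set.Ioi (1+rt)) :
    Ghat p = Tp N4 p := by
  rcases hp with ⟨h1, -⟩
  rw [Set.mem_Ioo] at h1
  exact Ghat_mid (by norm_num) (by nlinarith [rt_pos, h1.1] : -(1+rt) < p.1)
    (by linarith [h1.2] : p.1 ≤ 1) (sec4 h1.1 (le_of_lt h1.2)) gamnu4

lemma detN5 : N5.det ≠ 0 := by
  rw [N5, Matrix.det_fin_two_of]; intro h; nlinarith [rt_pos]

lemma adjN5 : N5.adjugate = !![1, -(1+2*rt); -1, 3+2*rt] := by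
  rw [N5, Matrix.adjugate_fin_two_of]

lemma mobN5 (u : ℝ) : mob N5 u = ((3+2*rt)*u + (1+2*rt))/(1*u + 1) := by
  rw [show N5 = !![(3+2*rt), 1+2*rt; 1, 1] from rfl, mob_eval]

lemma mobAdjN5 (u : ℝ) : mob N5.adjugate u = (1*u + -(1+2*rt))/(-1*u + (3+2*rt)) := by
  rw [adjN5, mob_eval]

lemma key_mid3 (A : Set (ℝ × ℝ)) (hA : MeasurableSet A) :
    mu0 (Tp N5 ⁻¹' A ∩ (Set.Ioc (-1) (1-rt) ×ˢ Set.Ioi (1+rt)))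
      = mu0 (A ∩ (Set.Iio (1+rt) ×ˢ Set.Ioo (1+3*rt) (3+2*rt))) := by
  apply piece N5 detN5 _ _ measurableSet_Iio measurableSet_Ioo _ {p | p.1 = 1-rt}
    (null_vline (1-rt))
  · intro y hy
    rw [Set.mem_Iio] at hy
    rw [adjN5]
    norm_num
    intro h; nlinarith [rt_pos]
  · intro y hy
    rw [Set.mem_Ioo] at hy
    rw [adjN5]
    norm_num
    intro h; nlinarith [hy.2]
  · rintro p ⟨h1, h2⟩
    rw [Set.mem_Ioc] at h1
    rw [Set.mem_Ioi] at h2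
    constructor
    · rw [show N5 1 0 = 1 from rfl, show N5 1 1 = 1 from rfl]
      intro h; nlinarith [h1.1]
    · rw [show N5 1 0 = 1 from rfl, show N5 1 1 = 1 from rfl]
      intro h; nlinarith [rt_pos]
  · rintro q ⟨hx, hy⟩
    rw [Set.mem_Iio] at hx
    rw [Set.mem_Ioo] at hy
    rw [Tp_eval, mobAdjN5, mobAdjN5]
    have hdx : 0 < -1*q.1 + (3+2*rt) := by nlinarith [rt_pos]
    have hdy : 0 < -1*q.2 + (3+2*rt) := by nlinarith [hy.2]
    constructor
    · rw [Set.mem_Ioc]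
      constructor
      · rw [lt_div_iff₀ hdx]
        nlinarith [hdx]
      · rw [div_le_iff₀ hdx]
        nlinarith [rt_sq, rt_gt, rt_lt, mul_pos (show (0:ℝ) < 2-rt by nlinarith [rt_lt])
          (show (0:ℝ) < (1+rt) - q.1 by linarith)]
    · rw [Set.mem_Ioi, lt_div_iff₀ hdy]
      nlinarith [rt_sq, mul_pos (show (0:ℝ) < 2+rt by linarith [rt_pos])
        (show (0:ℝ) < q.2 - 1 - 3*rt by linarith [hy.1])]
  · rintro p ⟨⟨h1, h2⟩, hz⟩
    rw [Set.mem_Ioc] at h1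
    rw [Set.mem_Ioi] at h2
    have hzu : p.1 < 1 - rt := lt_of_le_of_ne h1.2 hz
    rw [Tp_eval, mobN5, mobN5]
    have hdx : 0 < 1*p.1 + 1 := by nlinarith [h1.1]
    have hdy : 0 < 1*p.2 + 1 := by nlinarith [rt_pos]
    constructor
    · rw [Set.mem_Iio, div_lt_iff₀ hdx]
      nlinarith [rt_sq, mul_pos (show (0:ℝ) < 2+rt by linarith [rt_pos])
        (show (0:ℝ) < (1-rt) - p.1 by linarith)]
    · rw [Set.mem_Ioo]
      constructor
      · rw [lt_div_iff₀ hdy]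
        nlinarith [rt_sq, mul_pos (show (0:ℝ) < 2-rt by nlinarith [rt_lt])
          (show (0:ℝ) < p.2 - 1 - rt by linarith)]
      · rw [div_lt_iff₀ hdy]
        nlinarith [rt_sq, rt_gt, hdy]
  · exact hA

lemma gh_mid3 {p : ℝ × ℝ} (hp : p ∈ Set.Ioc (-1) (1-rt) ×ˢ Set.Ioi (1+rt)) :
    Ghat p = Tp N5 p := by
  rcases hp with ⟨h1, -⟩
  rw [Set.mem_Ioc] at h1
  exact Ghat_mid (by norm_num) (by nlinarith [rt_pos, h1.1] : -(1+rt) < p.1)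
    (by nlinarith [rt_pos, h1.2] : p.1 ≤ 1) (sec5 h1.1 h1.2) gamnu5

lemma detN6 : N6.det ≠ 0 := by
  rw [N6, Matrix.det_fin_two_of]; intro h; nlinarith [rt_pos]

lemma adjN6 : N6.adjugate = !![-1, 3+2*rt; 1, -1-2*rt] := by
  rw [N6, Matrix.adjugate_fin_two_of]
  ext i j
  fin_cases i <;> fin_cases j <;> norm_num <;> ring

lemma mobN6 (u : ℝ) : mob N6 u = ((-1-2*rt)*u + (-3-2*rt))/(-1*u + -1) := by
  rw [show N6 = !![(-1-2*rt), -3-2*rt; -1, -1] from rfl, mob_eval]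

lemma mobAdjN6 (u : ℝ) : mob N6.adjugate u = (-1*u + (3+2*rt))/(1*u + (-1-2*rt)) := by
  rw [adjN6, mob_eval]

lemma key_mid4 (A : Set (ℝ × ℝ)) (hA : MeasurableSet A) :
    mu0 (Tp N6 ⁻¹' A ∩ (Set.Ioo (-(1+rt)) (-1) ×ˢ Set.Ioi (1+rt)))
      = mu0 (A ∩ (Set.Iio (1+rt) ×ˢ Set.Ioo (1+2*rt) (3+rt))) := by
  apply piece N6 detN6 _ _ measurableSet_Iio measurableSet_Ioo _ {p | p.1 = -1}
    (null_vline (-1))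
  · intro y hy
    rw [Set.mem_Iio] at hy
    rw [adjN6]
    norm_num
    intro h; nlinarith [rt_pos]
  · intro y hy
    rw [Set.mem_Ioo] at hy
    rw [adjN6]
    norm_num
    intro h; nlinarith [hy.1]
  · rintro p ⟨h1, h2⟩
    rw [Set.mem_Ioo] at h1
    rw [Set.mem_Ioi] at h2
    constructor
    · rw [show N6 1 0 = -1 from rfl, show N6 1 1 = -1 from rfl]
      intro h; nlinarith [h1.2]
    · rw [show N6 1 0 = -1 from rfl, show N6 1 1 = -1 from rfl]
      intro h; nlinarith [rt_pos]
  · rintro q ⟨hx, hy⟩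
    rw [Set.mem_Iio] at hx
    rw [Set.mem_Ioo] at hy
    rw [Tp_eval, mobAdjN6, mobAdjN6]
    have hdx : 1*q.1 + (-1-2*rt) < 0 := by nlinarith [rt_pos]
    have hdy : 0 < 1*q.2 + (-1-2*rt) := by nlinarith [hy.1]
    constructor
    · rw [Set.mem_Ioo]
      constructor
      · rw [lt_div_iff_of_neg hdx]
        nlinarith [rt_sq, mul_pos rt_pos (show (0:ℝ) < (1+rt) - q.1 by linarith)]
      · rw [div_lt_iff_of_neg hdx]
        nlinarith [hdx]
    · rw [Set.mem_Ioi, lt_div_iff₀ hdy]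
      nlinarith [rt_sq, mul_pos (show (0:ℝ) < 2+rt by linarith [rt_pos])
        (show (0:ℝ) < (3+rt) - q.2 by linarith [hy.2])]
  · rintro p ⟨⟨h1, h2⟩, -⟩
    rw [Set.mem_Ioo] at h1
    rw [Set.mem_Ioi] at h2
    rw [Tp_eval, mobN6, mobN6]
    have hdx : 0 < -1*p.1 + -1 := by nlinarith [h1.2]
    have hdy : -1*p.2 + -1 < 0 := by nlinarith [rt_pos]
    constructor
    · rw [Set.mem_Iio, div_lt_iff₀ hdx]
      nlinarith [rt_sq, mul_pos rt_pos (show (0:ℝ) < p.1 + 1 + rt by linarith [h1.1])]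
    · rw [Set.mem_Ioo]
      constructor
      · rw [lt_div_iff_of_neg hdy]
        nlinarith [hdy]
      · rw [div_lt_iff_of_neg hdy]
        nlinarith [rt_sq, mul_pos (show (0:ℝ) < 2-rt by nlinarith [rt_lt])
          (show (0:ℝ) < p.2 - 1 - rt by linarith)]
  · exact hA

lemma gh_mid4 {p : ℝ × ℝ} (hp : p ∈ Set.Ioo (-(1+rt)) (-1) ×ˢ Set.Ioi (1+rt)) :
    Ghat p = Tp N6 p := by
  rcases hp with ⟨h1, -⟩
  rw [Set.mem_Ioo] at h1
  exact Ghat_mid (by norm_num) h1.1 (by linarith [h1.2] : p.1 ≤ 1)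
    (sec6 h1.1 (le_of_lt h1.2)) gamnu6
/-- Right endpoints of the `Σ₁`-piece images. -/
def ee (n : ℕ) : ℝ := 1 + rt + rt / n

lemma lt_ee_iff {n : ℕ} (hn : 1 ≤ n) (x : ℝ) : x < ee n ↔ (x - (1+rt)) * n < rt := by
  have hm : (0:ℝ) < n := by exact_mod_cast hn
  have h1 : x < ee n ↔ x - (1+rt) < rt / n := by unfold ee; constructor <;> intro <;> linarith
  rw [h1, lt_div_iff₀ hm]

lemma ee_lt_iff {n : ℕ} (hn : 1 ≤ n) (x : ℝ) : ee n < x ↔ rt < (x - (1+rt)) * n := by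
  have hm : (0:ℝ) < n := by exact_mod_cast hn
  have h1 : ee n < x ↔ rt / n < x - (1+rt) := by unfold ee; constructor <;> intro <;> linarith
  rw [h1, div_lt_iff₀ hm]

lemma detMp {n : ℕ} : (Mp n).det = 2 := by
  rw [Mp, Matrix.det_fin_two_of]
  linear_combination (1 - (n:ℝ)^2) * rt_sq

lemma adjMp (n : ℕ) : (Mp n).adjugate = !![rt - n*(1+rt), n*(3+2*rt); -(n:ℝ), rt + n*(1+rt)] := by
  rw [Mp, Matrix.adjugate_fin_two_of]
  ext i j
  fin_cases i <;> fin_cases j <;> norm_num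

lemma mobAdjMp (n : ℕ) (u : ℝ) :
    mob (Mp n).adjugate u
      = ((rt - n*(1+rt))*u + n*(3+2*rt))/(-(n:ℝ)*u + (rt + n*(1+rt))) := by
  rw [adjMp, mob_eval]

/-- `Mp n` as a constant plus fraction. -/
lemma Ia (n : ℕ) (x : ℝ) (hden : (n:ℝ)*x + (rt - n*(1+rt)) ≠ 0) :
    mob (Mp n) x = (1+rt) + rt*(x-(1+rt))/((n:ℝ)*x + (rt - n*(1+rt))) := by
  rw [mobMp, add_div' _ _ _ hden, div_eq_div_iff hden hden]
  linear_combination ((n:ℝ) * ((n:ℝ)*x + (rt - (n:ℝ)*(1+rt)))) * rt_sq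

lemma Ib (n : ℕ) (x : ℝ) (hden : -(n:ℝ)*x + (rt + n*(1+rt)) ≠ 0) :
    mob (Mp n).adjugate x = (1+rt) + rt*(x-(1+rt))/(-(n:ℝ)*x + (rt + n*(1+rt))) := by
  rw [mobAdjMp, add_div' _ _ _ hden, div_eq_div_iff hden hden]
  linear_combination (-(n:ℝ) * (-(n:ℝ)*x + (rt + (n:ℝ)*(1+rt)))) * rt_sq

/-- strict version of `Mp_le_one`. -/
lemma lt_cc_iff {n : ℕ} (hn : 1 ≤ n) (x : ℝ) : x < cc n ↔ rt < (1 + rt - x) * n := by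
  have hm : (0:ℝ) < n := by exact_mod_cast hn
  have h1 : x < cc n ↔ rt / n < 1 + rt - x := by unfold cc; constructor <;> intro <;> linarith
  rw [h1, div_lt_iff₀ hm]

lemma Mp_lt_one {n : ℕ} (hn : 1 ≤ n) {u : ℝ} (hu : cc n < u) (hu2 : u < cc (n+1)) :
    mob (Mp n) u < 1 := by
  have hden := Mp_den_pos hn hu
  rw [lt_cc_iff (by omega : 1 ≤ n + 1) u] at hu2
  push_cast at hu2
  rw [mobMp, div_lt_iff₀ hden]
  nlinarith [rt_sq, mul_lt_mul_of_pos_left hu2 rt_pos]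

lemma key_one (n : ℕ) (hn : 1 ≤ n) (A : Set (ℝ × ℝ)) (hA : MeasurableSet A) :
    mu0 (Tp (Mp n) ⁻¹' A ∩ (Set.Ioc (cc n) (cc (n+1)) ×ˢ Set.Ioi (1+2*rt)))
      = mu0 (A ∩ (Set.Iio 1 ×ˢ Set.Ioo (ee (n+1)) (ee n))) := by
  have hm : (0:ℝ) < n := by exact_mod_cast hn
  have hdet : (Mp n).det ≠ 0 := by rw [detMp]; norm_num
  apply piece (Mp n) hdet _ _ measurableSet_Iio measurableSet_Ioo _ {p | p.1 = cc (n+1)}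
    (null_vline (cc (n+1)))
  · intro y hy
    rw [Set.mem_Iio] at hy
    rw [adjMp]
    show -(n:ℝ) * y + (rt + (n:ℝ)*(1+rt)) ≠ 0
    nlinarith [rt_pos]
  · intro y hy
    rw [Set.mem_Ioo] at hy
    have h2 := (lt_ee_iff hn y).mp hy.2
    rw [adjMp]
    show -(n:ℝ) * y + (rt + (n:ℝ)*(1+rt)) ≠ 0
    nlinarith [h2]
  · rintro p ⟨h1, h2⟩
    rw [Set.mem_Ioc] at h1
    rw [Set.mem_Ioi] at h2
    have hd1 : 0 < (n:ℝ)*p.1 + (rt - (n:ℝ)*(1+rt)) := Mp_den_pos hn h1.1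
    have hd2 : 0 < (n:ℝ)*p.2 + (rt - (n:ℝ)*(1+rt)) := by nlinarith [rt_pos]
    constructor
    · show (n:ℝ)*p.1 + (rt - (n:ℝ)*(1+rt)) ≠ 0
      exact ne_of_gt hd1
    · show (n:ℝ)*p.2 + (rt - (n:ℝ)*(1+rt)) ≠ 0
      exact ne_of_gt hd2
  · rintro q ⟨hx, hy⟩
    rw [Set.mem_Iio] at hx
    rw [Set.mem_Ioo] at hy
    have hdx : 0 < -(n:ℝ)*q.1 + (rt + n*(1+rt)) := by nlinarith [rt_pos]
    have hdy : 0 < -(n:ℝ)*q.2 + (rt + n*(1+rt)) := by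
      have h2 := (lt_ee_iff hn q.2).mp hy.2
      nlinarith [h2]
    rw [Tp_eval]
    constructor
    · show mob (Mp n).adjugate q.1 ∈ Set.Ioc (cc n) (cc (n+1))
      rw [Set.mem_Ioc, cc_lt_iff hn, le_cc_iff (by omega : 1 ≤ n + 1),
        Ib n q.1 (ne_of_gt hdx)]
      push_cast
      constructor
      · have he : 1 + rt - (1 + rt + rt*(q.1-(1+rt))/(-(n:ℝ)*q.1 + (rt + n*(1+rt))))
            = rt*((1+rt)-q.1)/(-(n:ℝ)*q.1 + (rt + n*(1+rt))) := by ring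
        rw [he, div_mul_eq_mul_div, div_lt_iff₀ hdx]
        nlinarith [rt_sq]
      · have he : 1 + rt - (1 + rt + rt*(q.1-(1+rt))/(-(n:ℝ)*q.1 + (rt + n*(1+rt))))
            = rt*((1+rt)-q.1)/(-(n:ℝ)*q.1 + (rt + n*(1+rt))) := by ring
        rw [he, div_mul_eq_mul_div, le_div_iff₀ hdx]
        nlinarith [rt_sq, mul_le_mul_of_nonneg_left
          (show rt ≤ 1 + rt - q.1 by linarith) (le_of_lt rt_pos)]
    · show mob (Mp n).adjugate q.2 ∈ Set.Ioi (1+2*rt)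
      rw [Set.mem_Ioi, Ib n q.2 (ne_of_gt hdy)]
      have h1 := (ee_lt_iff (by omega : 1 ≤ n + 1) q.2).mp hy.1
      push_cast at h1
      have hgoal : rt < rt*(q.2-(1+rt))/(-(n:ℝ)*q.2 + (rt + n*(1+rt))) := by
        rw [lt_div_iff₀ hdy]
        nlinarith [rt_sq, mul_lt_mul_of_pos_left h1 rt_pos]
      linarith
  · rintro p ⟨⟨h1, h2⟩, hz⟩
    rw [Set.mem_Ioc] at h1
    rw [Set.mem_Ioi] at h2
    have hzu : p.1 < cc (n+1) := lt_of_le_of_ne h1.2 hz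
    have hdv : 0 < (n:ℝ)*p.2 + (rt - (n:ℝ)*(1+rt)) := by nlinarith [rt_pos]
    rw [Tp_eval]
    constructor
    · show mob (Mp n) p.1 ∈ Set.Iio 1
      rw [Set.mem_Iio]
      exact Mp_lt_one hn h1.1 hzu
    · show mob (Mp n) p.2 ∈ Set.Ioo (ee (n+1)) (ee n)
      rw [Set.mem_Ioo, lt_ee_iff hn, ee_lt_iff (by omega : 1 ≤ n + 1),
        Ia n p.2 (ne_of_gt hdv)]
      push_cast
      constructor
      · have hgoal : rt < rt*(p.2-(1+rt))/((n:ℝ)*p.2 + (rt - n*(1+rt))) * ((n:ℝ)+1) := by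
          rw [div_mul_eq_mul_div, lt_div_iff₀ hdv]
          nlinarith [rt_sq, mul_pos rt_pos (show (0:ℝ) < p.2 - 1 - 2*rt by linarith)]
        linarith
      · have he : (1 + rt + rt*(p.2-(1+rt))/((n:ℝ)*p.2 + (rt - n*(1+rt))) - (1+rt)) * (n:ℝ)
            = rt*(p.2-(1+rt))*(n:ℝ)/((n:ℝ)*p.2 + (rt - n*(1+rt))) := by ring
        rw [he, div_lt_iff₀ hdv]
        nlinarith [rt_sq]
  · exact hA

lemma gh_one (n : ℕ) (hn : 1 ≤ n) {p : ℝ × ℝ}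
    (hp : p ∈ Set.Ioc (cc n) (cc (n+1)) ×ˢ Set.Ioi (1+2*rt)) :
    Ghat p = Tp (Mp n) p := by
  rcases hp with ⟨h1, h2⟩
  rw [Set.mem_Ioc] at h1
  rw [Set.mem_Ioi] at h2
  exact Ghat_one n hn h1.1 h1.2 h2

lemma detL (n : ℕ) : (L n).det ≠ 0 := by
  rw [L, Matrix.det_fin_two_of]; norm_num

lemma adjL (n : ℕ) : (L n).adjugate = !![1, -(2*n*(1+rt)); 0, 1] := by
  rw [L, Matrix.adjugate_fin_two_of]
  ext i j
  fin_cases i <;> fin_cases j <;> norm_num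

lemma mobAdjL (n : ℕ) (x : ℝ) : mob (L n).adjugate x = x - 2*n*(1+rt) := by
  rw [adjL, mob_eval]
  norm_num
  ring

lemma key_seven (n : ℕ) (hn : 1 ≤ n) (A : Set (ℝ × ℝ)) (hA : MeasurableSet A) :
    mu0 (Tp (L n) ⁻¹' A ∩
        (Set.Ioc (-(1+rt)-2*(n:ℝ)*(1+rt)) (-(1+rt)-2*((n:ℝ)-1)*(1+rt)) ×ˢ
          Set.Ioo (1+rt) (3+3*rt)))
      = mu0 (A ∩ (Set.Ioo (-(1+rt)) (1+rt) ×ˢ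
          Set.Ioo ((2*(n:ℝ)+1)*(1+rt)) ((2*(n:ℝ)+3)*(1+rt)))) := by
  have ha : (0:ℝ) < 1 + rt := by linarith [rt_pos]
  apply piece (L n) (detL n) _ _ measurableSet_Ioo measurableSet_Ioo _
    {p | p.1 = -(1+rt)-2*((n:ℝ)-1)*(1+rt)} (null_vline _)
  · intro y hy
    rw [adjL]
    norm_num
  · intro y hy
    rw [adjL]
    norm_num
  · rintro p ⟨h1, h2⟩
    constructor
    · show (0:ℝ)*p.1 + 1 ≠ 0
      norm_num
    · show (0:ℝ)*p.2 + 1 ≠ 0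
      norm_num
  · rintro q ⟨hx, hy⟩
    rw [Set.mem_Ioo] at hx
    rw [Set.mem_Ioo] at hy
    constructor
    · show mob (L n).adjugate q.1 ∈ Set.Ioc (-(1+rt)-2*(n:ℝ)*(1+rt)) (-(1+rt)-2*((n:ℝ)-1)*(1+rt))
      rw [mobAdjL, Set.mem_Ioc]
      constructor
      · linarith [hx.1]
      · nlinarith [hx.2]
    · show mob (L n).adjugate q.2 ∈ Set.Ioo (1+rt) (3+3*rt)
      rw [mobAdjL, Set.mem_Ioo]
      constructor
      · nlinarith [hy.1]
      · nlinarith [hy.2]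
  · rintro p ⟨⟨h1, h2⟩, hz⟩
    rw [Set.mem_Ioc] at h1
    rw [Set.mem_Ioo] at h2
    have hzu : p.1 < -(1+rt)-2*((n:ℝ)-1)*(1+rt) := lt_of_le_of_ne h1.2 hz
    constructor
    · show mob (L n) p.1 ∈ Set.Ioo (-(1+rt)) (1+rt)
      rw [mob_L, Set.mem_Ioo]
      constructor
      · linarith [h1.1]
      · nlinarith [hzu]
    · show mob (L n) p.2 ∈ Set.Ioo ((2*(n:ℝ)+1)*(1+rt)) ((2*(n:ℝ)+3)*(1+rt))
      rw [mob_L, Set.mem_Ioo]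
      constructor
      · nlinarith [h2.1]
      · nlinarith [h2.2]
  · exact hA

lemma gh_seven (n : ℕ) (hn : 1 ≤ n) {p : ℝ × ℝ}
    (hp : p ∈ Set.Ioc (-(1+rt)-2*(n:ℝ)*(1+rt)) (-(1+rt)-2*((n:ℝ)-1)*(1+rt)) ×ˢ
      Set.Ioo (1+rt) (3+3*rt)) :
    Ghat p = Tp (L n) p := by
  rcases hp with ⟨h1, -⟩
  rw [Set.mem_Ioc] at h1
  exact Ghat_seven n hn h1.1 h1.2
/-! ### Indexed pieces -/

/-- Index type for the pieces. -/
abbrev Idx : Type := (Fin 5) ⊕ ℕ ⊕ ℕ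

def Mset : Idx → Matrix (Fin 2) (Fin 2) ℝ
  | .inl k => ![N2, N3, N4, N5, N6] k
  | .inr (.inl n) => Mp (n+1)
  | .inr (.inr n) => L (n+1)

def Pu : Idx → Set ℝ
  | .inl k => ![Set.Ioo (rt-1) 1, Set.Ioc 0 (rt-1), Set.Ioo (1-rt) 0,
      Set.Ioc (-1) (1-rt), Set.Ioo (-(1+rt)) (-1)] k
  | .inr (.inl n) => Set.Ioc (cc (n+1)) (cc (n+1+1))
  | .inr (.inr n) => Set.Ioc (-(1+rt)-2*((n+1:ℕ):ℝ)*(1+rt)) (-(1+rt)-2*(((n+1:ℕ):ℝ)-1)*(1+rt))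

def Pv : Idx → Set ℝ
  | .inl _ => Set.Ioi (1+rt)
  | .inr (.inl _) => Set.Ioi (1+2*rt)
  | .inr (.inr _) => Set.Ioo (1+rt) (3+3*rt)

def Pset (k : Idx) : Set (ℝ × ℝ) := Pu k ×ˢ Pv k

def Qu : Idx → Set ℝ
  | .inl _ => Set.Iio (1+rt)
  | .inr (.inl _) => Set.Iio 1
  | .inr (.inr _) => Set.Ioo (-(1+rt)) (1+rt)

def Qv : Idx → Set ℝ
  | .inl k => ![Set.Ioo (3+2*rt) (3+3*rt), Set.Ioo (3+rt) (2+2*rt), Set.Ioo (2+2*rt) (1+3*rt),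
      Set.Ioo (1+3*rt) (3+2*rt), Set.Ioo (1+2*rt) (3+rt)] k
  | .inr (.inl n) => Set.Ioo (ee (n+1+1)) (ee (n+1))
  | .inr (.inr n) => Set.Ioo ((2*((n+1:ℕ):ℝ)+1)*(1+rt)) ((2*((n+1:ℕ):ℝ)+3)*(1+rt))

def Qset (k : Idx) : Set (ℝ × ℝ) := Qu k ×ˢ Qv k

lemma keyk (k : Idx) (A : Set (ℝ × ℝ)) (hA : MeasurableSet A) :
    mu0 (Tp (Mset k) ⁻¹' A ∩ Pset k) = mu0 (A ∩ Qset k) := by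
  rcases k with k | n | n
  · fin_cases k
    · exact key_mid0 A hA
    · exact key_mid1 A hA
    · exact key_mid2 A hA
    · exact key_mid3 A hA
    · exact key_mid4 A hA
  · exact key_one (n+1) (by omega) A hA
  · exact key_seven (n+1) (by omega) A hA

lemma ghk (k : Idx) {p : ℝ × ℝ} (hp : p ∈ Pset k) : Ghat p = Tp (Mset k) p := by
  rcases k with k | n | n
  · fin_cases k
    · exact gh_mid0 hp
    · exact gh_mid1 hp
    · exact gh_mid2 hp
    · exact gh_mid3 hp
    · exact gh_mid4 hp
  · exact gh_one (n+1) (by omega) hp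
  · exact gh_seven (n+1) (by omega) hp

lemma Pset_meas (k : Idx) : MeasurableSet (Pset k) := by
  rcases k with k | n | n
  · fin_cases k
    · exact measurableSet_Ioo.prod measurableSet_Ioi
    · exact measurableSet_Ioc.prod measurableSet_Ioi
    · exact measurableSet_Ioo.prod measurableSet_Ioi
    · exact measurableSet_Ioc.prod measurableSet_Ioi
    · exact measurableSet_Ioo.prod measurableSet_Ioi
  · exact measurableSet_Ioc.prod measurableSet_Ioi
  · exact measurableSet_Ioc.prod measurableSet_Ioo

lemma Qset_meas (k : Idx) : MeasurableSet (Qset k) := by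
  rcases k with k | n | n
  · fin_cases k <;> exact measurableSet_Iio.prod measurableSet_Ioo
  · exact measurableSet_Iio.prod measurableSet_Ioo
  · exact measurableSet_Ioo.prod measurableSet_Ioo

/-! ### Disjointness via coordinate bounds -/

def plo : Idx → ℝ
  | .inl k => ![rt-1, 0, 1-rt, -1, -(1+rt)] k
  | .inr (.inl n) => cc (n+1)
  | .inr (.inr n) => -(1+rt)-2*((n+1:ℕ):ℝ)*(1+rt)

def phi : Idx → ℝ
  | .inl k => ![1, rt-1, 0, 1-rt, -1] k
  | .inr (.inl n) => cc (n+1+1)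
  | .inr (.inr n) => -(1+rt)-2*(((n+1:ℕ):ℝ)-1)*(1+rt)

lemma Pu_sub (k : Idx) : Pu k ⊆ Set.Ioc (plo k) (phi k) := by
  rcases k with k | n | n
  · fin_cases k
    · exact Set.Ioo_subset_Ioc_self
    · exact le_refl _
    · exact Set.Ioo_subset_Ioc_self
    · exact le_refl _
    · exact Set.Ioo_subset_Ioc_self
  · exact le_refl _
  · exact le_refl _

lemma Psep (k l : Idx) (hne : k ≠ l) : phi k ≤ plo l ∨ phi l ≤ plo k := by
  have h7top : ∀ n : ℕ, phi (.inr (.inr n)) ≤ -(1+rt) := by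
    intro n
    show -(1+rt)-2*(((n+1:ℕ):ℝ)-1)*(1+rt) ≤ -(1+rt)
    have : (0:ℝ) ≤ ((n+1:ℕ):ℝ) - 1 := by push_cast; linarith
    nlinarith [rt_pos]
  have h7ord : ∀ n m : ℕ, n < m → phi (.inr (.inr m)) ≤ plo (.inr (.inr n)) := by
    intro n m hnm
    show -(1+rt)-2*(((m+1:ℕ):ℝ)-1)*(1+rt) ≤ -(1+rt)-2*((n+1:ℕ):ℝ)*(1+rt)
    have hc : ((n+1:ℕ):ℝ) ≤ ((m+1:ℕ):ℝ) - 1 := by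
      push_cast
      have : (n:ℝ) + 1 ≤ (m:ℝ) := by exact_mod_cast hnm
      linarith
    nlinarith [rt_pos, mul_le_mul_of_nonneg_right hc (show (0:ℝ) ≤ 1+rt by linarith [rt_pos])]
  have h1ord : ∀ n m : ℕ, n < m → phi (.inr (.inl n)) ≤ plo (.inr (.inl m)) := by
    intro n m hnm
    show cc (n+1+1) ≤ cc (m+1)
    exact cc_le_cc (by omega) (by omega)
  have hmidtop : ∀ k : Fin 5, phi (.inl k) ≤ 1 := by
    intro k
    fin_cases k <;> simp [phi] <;> nlinarith [rt_gt, rt_lt]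
  have hmidbot : ∀ k : Fin 5, -(1+rt) ≤ plo (.inl k) := by
    intro k
    fin_cases k <;> simp [plo] <;> nlinarith [rt_gt, rt_lt]
  have honebot : ∀ n : ℕ, (1:ℝ) ≤ plo (.inr (.inl n)) := by
    intro n
    exact cc_ge_one (by omega)
  rcases k with k | n | n <;> rcases l with l | m | m
  · -- mid mid
    fin_cases k <;> fin_cases l <;>
      first
        | exact absurd rfl hne
        | (left; simp [plo, phi]; all_goals nlinarith [rt_gt, rt_lt, rt_pos])
        | (right; simp [plo, phi]; all_goals nlinarith [rt_gt, rt_lt, rt_pos])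
  · left; exact le_trans (hmidtop k) (honebot m)
  · right; exact le_trans (h7top m) (hmidbot k)
  · right; exact le_trans (hmidtop l) (honebot n)
  · rcases Nat.lt_or_ge n m with h | h
    · left; exact h1ord n m h
    · rcases Nat.lt_or_ge m n with h' | h'
      · right; exact h1ord m n h'
      · exact absurd (by omega : n = m) (fun hh => hne (by rw [hh]))
  · right
    exact le_trans (h7top m) (le_trans (by nlinarith [rt_pos] : -(1+rt) ≤ (1:ℝ)) (honebot n))
  · left; exact le_trans (h7top n) (hmidbot l)
  · left
    exact le_trans (h7top n) (le_trans (by nlinarith [rt_pos] : -(1+rt) ≤ (1:ℝ)) (honebot m))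
  · rcases Nat.lt_or_ge n m with h | h
    · right; exact h7ord n m h
    · rcases Nat.lt_or_ge m n with h' | h'
      · left; exact h7ord m n h'
      · exact absurd (by omega : n = m) (fun hh => hne (by rw [hh]))

lemma Pdisj : Pairwise (Function.onFun Disjoint Pset) := by
  intro k l hne
  rw [Function.onFun, Set.disjoint_left]
  rintro p ⟨hu1, -⟩ ⟨hu2, -⟩
  have h1 := Pu_sub k hu1
  have h2 := Pu_sub l hu2
  rcases Psep k l hne with h | h
  · rw [Set.mem_Ioc] at h1 h2
    linarith [h1.2, h2.1]
  · rw [Set.mem_Ioc] at h1 h2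
    linarith [h2.2, h1.1]
/-! ### Q-side disjointness -/

def qlo : Idx → ℝ
  | .inl k => ![3+2*rt, 3+rt, 2+2*rt, 1+3*rt, 1+2*rt] k
  | .inr (.inl n) => ee (n+1+1)
  | .inr (.inr n) => (2*((n+1:ℕ):ℝ)+1)*(1+rt)

def qhi : Idx → ℝ
  | .inl k => ![3+3*rt, 2+2*rt, 1+3*rt, 3+2*rt, 3+rt] k
  | .inr (.inl n) => ee (n+1)
  | .inr (.inr n) => (2*((n+1:ℕ):ℝ)+3)*(1+rt)

lemma Qv_subo (k : Idx) : Qv k ⊆ Set.Ioo (qlo k) (qhi k) := by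
  rcases k with k | n | n
  · fin_cases k <;> exact le_refl _
  · exact le_refl _
  · exact le_refl _

lemma Qv_sub (k : Idx) : Qv k ⊆ Set.Ioc (qlo k) (qhi k) := by
  rcases k with k | n | n
  · fin_cases k <;> exact Set.Ioo_subset_Ioc_self
  · exact Set.Ioo_subset_Ioc_self
  · exact Set.Ioo_subset_Ioc_self

lemma ee_anti {j n : ℕ} (hj : 1 ≤ j) (hjn : j ≤ n) : ee n ≤ ee j := by
  have hmj : (0:ℝ) < j := by exact_mod_cast hj
  have : rt / n ≤ rt / j := by
    apply div_le_div_of_nonneg_left (le_of_lt rt_pos) hmj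
    exact_mod_cast hjn
  unfold ee; linarith

lemma ee_one : ee 1 = 1 + 2*rt := by unfold ee; norm_num; ring

lemma ee_gt {n : ℕ} (hn : 1 ≤ n) : 1 + rt < ee n := by
  have hm : (0:ℝ) < n := by exact_mod_cast hn
  have : 0 < rt / n := div_pos rt_pos hm
  unfold ee; linarith

lemma Qsep (k l : Idx) (hne : k ≠ l) : qhi k ≤ qlo l ∨ qhi l ≤ qlo k := by
  have honehi : ∀ n : ℕ, qhi (.inr (.inl n)) ≤ 1 + 2*rt := by
    intro n
    show ee (n+1) ≤ 1 + 2*rt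
    rw [← ee_one]
    exact ee_anti le_rfl (by omega)
  have hmidlo : ∀ k : Fin 5, 1 + 2*rt ≤ qlo (.inl k) := by
    intro k
    fin_cases k <;> simp [qlo] <;> nlinarith [rt_gt, rt_lt]
  have hmidhi : ∀ k : Fin 5, qhi (.inl k) ≤ 3 + 3*rt := by
    intro k
    fin_cases k <;> simp [qhi] <;> nlinarith [rt_gt, rt_lt]
  have hsevenlo : ∀ n : ℕ, 3 + 3*rt ≤ qlo (.inr (.inr n)) := by
    intro n
    show 3 + 3*rt ≤ (2*((n+1:ℕ):ℝ)+1)*(1+rt)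
    have : (1:ℝ) ≤ ((n+1:ℕ):ℝ) := by exact_mod_cast Nat.one_le_iff_ne_zero.mpr (by omega)
    nlinarith [rt_pos]
  have honeord : ∀ n m : ℕ, n < m → qhi (.inr (.inl m)) ≤ qlo (.inr (.inl n)) := by
    intro n m hnm
    show ee (m+1) ≤ ee (n+1+1)
    exact ee_anti (by omega) (by omega)
  have hsevenord : ∀ n m : ℕ, n < m → qhi (.inr (.inr n)) ≤ qlo (.inr (.inr m)) := by
    intro n m hnm
    show (2*((n+1:ℕ):ℝ)+3)*(1+rt) ≤ (2*((m+1:ℕ):ℝ)+1)*(1+rt)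
    have : ((n+1:ℕ):ℝ) + 1 ≤ ((m+1:ℕ):ℝ) := by
      push_cast
      have : (n:ℝ) + 1 ≤ (m:ℝ) := by exact_mod_cast hnm
      linarith
    nlinarith [rt_pos]
  have h12lt33 : (1:ℝ) + 2*rt ≤ 3 + 3*rt := by nlinarith [rt_pos]
  rcases k with k | n | n <;> rcases l with l | m | m
  · fin_cases k <;> fin_cases l <;>
      first
        | exact absurd rfl hne
        | (left; simp [qlo, qhi]; all_goals nlinarith [rt_gt, rt_lt, rt_pos])
        | (right; simp [qlo, qhi]; all_goals nlinarith [rt_gt, rt_lt, rt_pos])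
  · right; exact le_trans (honehi m) (hmidlo k)
  · left; exact le_trans (hmidhi k) (hsevenlo m)
  · left; exact le_trans (honehi n) (hmidlo l)
  · rcases Nat.lt_or_ge n m with h | h
    · right; exact honeord n m h
    · rcases Nat.lt_or_ge m n with h' | h'
      · left; exact honeord m n h'
      · exact absurd (by omega : n = m) (fun hh => hne (by rw [hh]))
  · left; exact le_trans (honehi n) (le_trans h12lt33 (hsevenlo m))
  · right; exact le_trans (hmidhi l) (hsevenlo n)
  · right; exact le_trans (honehi m) (le_trans h12lt33 (hsevenlo n))
  · rcases Nat.lt_or_ge n m with h | h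
    · left; exact hsevenord n m h
    · rcases Nat.lt_or_ge m n with h' | h'
      · right; exact hsevenord m n h'
      · exact absurd (by omega : n = m) (fun hh => hne (by rw [hh]))

lemma Qdisj : Pairwise (Function.onFun Disjoint Qset) := by
  intro k l hne
  rw [Function.onFun, Set.disjoint_left]
  rintro p ⟨-, hv1⟩ ⟨-, hv2⟩
  have h1 := Qv_sub k hv1
  have h2 := Qv_sub l hv2
  rcases Qsep k l hne with h | h
  · rw [Set.mem_Ioc] at h1 h2
    linarith [h1.2, h2.1]
  · rw [Set.mem_Ioc] at h1 h2
    linarith [h2.2, h1.1]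

/-! ### Membership helpers for `Dgauss` -/

lemma memD1 {p : ℝ × ℝ} (h1 : 1 < p.1) (h2 : p.1 < 1+rt) (h3 : 1+2*rt < p.2) :
    p ∈ Dgauss :=
  Or.inl (Or.inl ⟨Set.mem_Ioo.mpr ⟨h1, h2⟩, Set.mem_Ioi.mpr h3⟩)

lemma memD2 {p : ℝ × ℝ} (h1 : -(1+rt) < p.1) (h2 : p.1 < 1) (h3 : 1+rt < p.2) :
    p ∈ Dgauss :=
  Or.inl (Or.inr ⟨Set.mem_Ioo.mpr ⟨h1, h2⟩, Set.mem_Ioi.mpr h3⟩)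

lemma memD3 {p : ℝ × ℝ} (h1 : p.1 < -(1+rt)) (h3 : 1+rt < p.2) (h4 : p.2 < 3+3*rt) :
    p ∈ Dgauss :=
  Or.inr ⟨Set.mem_Iio.mpr h1, Set.mem_Ioo.mpr ⟨h3, h4⟩⟩

lemma D_cases {p : ℝ × ℝ} (hp : p ∈ Dgauss) :
    (1 < p.1 ∧ p.1 < 1+rt ∧ 1+2*rt < p.2) ∨
    (-(1+rt) < p.1 ∧ p.1 < 1 ∧ 1+rt < p.2) ∨
    (p.1 < -(1+rt) ∧ 1+rt < p.2 ∧ p.2 < 3+3*rt) := by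
  rcases hp with (⟨h1, h2⟩ | ⟨h1, h2⟩) | ⟨h1, h2⟩
  · rw [Set.mem_Ioo] at h1; rw [Set.mem_Ioi] at h2
    exact Or.inl ⟨h1.1, h1.2, h2⟩
  · rw [Set.mem_Ioo] at h1; rw [Set.mem_Ioi] at h2
    exact Or.inr (Or.inl ⟨h1.1, h1.2, h2⟩)
  · rw [Set.mem_Iio] at h1; rw [Set.mem_Ioo] at h2
    exact Or.inr (Or.inr ⟨h1, h2.1, h2.2⟩)

/-! ### Coverage of `D` by the `P`-pieces -/

lemma P_cover {p : ℝ × ℝ} (hp : p ∈ Dgauss) (h0 : p.1 ≠ 0) (h1 : p.1 ≠ -1) :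
    ∃ k, p ∈ Pset k := by
  rcases D_cases hp with ⟨hu1, hu2, hv⟩ | ⟨hu1, hu2, hv⟩ | ⟨hu1, hv1, hv2⟩
  · -- Σ₁ region
    set t := 1 + rt - p.1 with ht
    have ht0 : 0 < t := by rw [ht]; linarith
    have htrt : t < rt := by rw [ht]; linarith
    set r := rt / t with hr
    have hr1 : 1 < r := (one_lt_div ht0).mpr htrt
    have hr0 : 0 ≤ r := by linarith
    have htr : t * r = rt := by rw [hr]; field_simp
    set m := ⌈r⌉₊ with hm
    have hm2 : 2 ≤ m := by
      have h' : 1 < m := Nat.lt_ceil.mpr (by exact_mod_cast hr1)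
      omega
    refine ⟨.inr (.inl (m - 2)), Set.mem_prod.mpr ⟨?_, hv⟩⟩
    show p.1 ∈ Set.Ioc (cc (m-2+1)) (cc (m-2+1+1))
    have e1 : m - 2 + 1 = m - 1 := by omega
    have e2 : m - 2 + 1 + 1 = m := by omega
    rw [e2, e1, Set.mem_Ioc, cc_lt_iff (by omega), le_cc_iff (by omega)]
    have hcast : ((m - 1 : ℕ):ℝ) = (m:ℝ) - 1 := by
      have h' : (1:ℕ) ≤ m := by omega
      push_cast [h']
      ring
    constructor
    · rw [hcast]
      have hlt : ((m:ℝ) - 1) < r := by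
        have h' := Nat.ceil_lt_add_one hr0
        rw [← hm] at h'
        linarith
      have := mul_lt_mul_of_pos_left hlt ht0
      rw [htr] at this
      calc (1 + rt - p.1) * ((m:ℝ)-1) = t * ((m:ℝ)-1) := by rw [ht]
        _ < rt := this
    · have hle : r ≤ (m:ℝ) := Nat.le_ceil r
      have := mul_le_mul_of_nonneg_left hle (le_of_lt ht0)
      rw [htr] at this
      calc rt ≤ t * (m:ℝ) := this
        _ = (1 + rt - p.1) * (m:ℝ) := by rw [ht]
  · -- middle region
    rcases le_or_gt p.1 (-1) with h | h
    · exact ⟨.inl 4, Set.mem_prod.mpr ⟨Set.mem_Ioo.mpr ⟨hu1, lt_of_le_of_ne h h1⟩,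
        Set.mem_Ioi.mpr hv⟩⟩
    rcases le_or_gt p.1 (1-rt) with h2 | h2
    · exact ⟨.inl 3, Set.mem_prod.mpr ⟨Set.mem_Ioc.mpr ⟨h, h2⟩, Set.mem_Ioi.mpr hv⟩⟩
    rcases le_or_gt p.1 0 with h3 | h3
    · exact ⟨.inl 2, Set.mem_prod.mpr ⟨Set.mem_Ioo.mpr ⟨h2, lt_of_le_of_ne h3 h0⟩,
        Set.mem_Ioi.mpr hv⟩⟩
    rcases le_or_gt p.1 (rt-1) with h4 | h4
    · exact ⟨.inl 1, Set.mem_prod.mpr ⟨Set.mem_Ioc.mpr ⟨h3, h4⟩, Set.mem_Ioi.mpr hv⟩⟩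
    · exact ⟨.inl 0, Set.mem_prod.mpr ⟨Set.mem_Ioo.mpr ⟨h4, hu2⟩, Set.mem_Ioi.mpr hv⟩⟩
  · -- Σ₇ region
    have ha : (0:ℝ) < 2*(1+rt) := by linarith [rt_pos]
    set s := (-(1+rt) - p.1) / (2*(1+rt)) with hs
    have hs0 : 0 ≤ s := le_of_lt (div_pos (by linarith) ha)
    have hsm : s * (2*(1+rt)) = -(1+rt) - p.1 := by rw [hs]; field_simp
    set m := ⌊s⌋₊ with hm
    refine ⟨.inr (.inr m), Set.mem_prod.mpr ⟨?_, Set.mem_Ioo.mpr ⟨hv1, hv2⟩⟩⟩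
    show p.1 ∈ Set.Ioc (-(1+rt)-2*((m+1:ℕ):ℝ)*(1+rt)) (-(1+rt)-2*(((m+1:ℕ):ℝ)-1)*(1+rt))
    have h1' : (m:ℝ) ≤ s := Nat.floor_le hs0
    have h2' : s < (m:ℝ) + 1 := Nat.lt_floor_add_one s
    rw [Set.mem_Ioc]
    push_cast
    constructor
    · nlinarith [mul_lt_mul_of_pos_right h2' ha, hsm]
    · nlinarith [mul_le_mul_of_nonneg_right h1' (le_of_lt ha), hsm]

/-! ### The `P`-pieces are inside `D` (up to one line) -/

lemma P_sub (k : Idx) : Pset k ⊆ Dgauss ∪ {p | p.1 = -(1+rt)} := by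
  rcases k with k | n | n
  · rintro p ⟨hu, hv⟩
    left
    fin_cases k
    · have hu' : p.1 ∈ Set.Ioo (rt-1) 1 := hu
      have hv' : 1+rt < p.2 := hv
      rw [Set.mem_Ioo] at hu'
      exact memD2 (by nlinarith [rt_gt, hu'.1]) hu'.2 hv'
    · have hu' : p.1 ∈ Set.Ioc 0 (rt-1) := hu
      have hv' : 1+rt < p.2 := hv
      rw [Set.mem_Ioc] at hu'
      exact memD2 (by nlinarith [rt_pos, hu'.1]) (by nlinarith [rt_lt, hu'.2]) hv'
    · have hu' : p.1 ∈ Set.Ioo (1-rt) 0 := hu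
      have hv' : 1+rt < p.2 := hv
      rw [Set.mem_Ioo] at hu'
      exact memD2 (by nlinarith [rt_pos, hu'.1]) (by linarith [hu'.2]) hv'
    · have hu' : p.1 ∈ Set.Ioc (-1) (1-rt) := hu
      have hv' : 1+rt < p.2 := hv
      rw [Set.mem_Ioc] at hu'
      exact memD2 (by nlinarith [rt_pos, hu'.1]) (by nlinarith [rt_pos, hu'.2]) hv'
    · have hu' : p.1 ∈ Set.Ioo (-(1+rt)) (-1) := hu
      have hv' : 1+rt < p.2 := hv
      rw [Set.mem_Ioo] at hu'
      exact memD2 hu'.1 (by linarith [hu'.2]) hv'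
  · rintro p ⟨hu, hv⟩
    left
    rw [show Pu (.inr (.inl n)) = Set.Ioc (cc (n+1)) (cc (n+1+1)) from rfl, Set.mem_Ioc] at hu
    have hv' : 1+2*rt < p.2 := hv
    refine memD1 ?_ ?_ hv'
    · linarith [cc_ge_one (show 1 ≤ n+1 by omega), hu.1]
    · linarith [cc_lt_top (show 1 ≤ n+1+1 by omega), hu.2]
  · rintro p ⟨hu, hv⟩
    rw [show Pu (.inr (.inr n)) = Set.Ioc (-(1+rt)-2*((n+1:ℕ):ℝ)*(1+rt))
        (-(1+rt)-2*(((n+1:ℕ):ℝ)-1)*(1+rt)) from rfl, Set.mem_Ioc] at hu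
    rw [show Pv (.inr (.inr n)) = Set.Ioo (1+rt) (3+3*rt) from rfl, Set.mem_Ioo] at hv
    by_cases he : p.1 = -(1+rt)
    · right; exact he
    · left
      have hle : p.1 ≤ -(1+rt) := by
        have : (0:ℝ) ≤ ((n+1:ℕ):ℝ) - 1 := by push_cast; linarith
        nlinarith [hu.2, rt_pos]
      exact memD3 (lt_of_le_of_ne hle he) hv.1 hv.2

/-! ### The `Q`-pieces are inside `D` (up to two lines) -/

lemma memD_gen {p : ℝ × ℝ} (hu : p.1 < 1+rt) (h1 : p.1 ≠ 1) (h2 : p.1 ≠ -(1+rt))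
    (hv1 : 1+rt < p.2) (hv2lo : p.1 ≤ 1 ∨ 1+2*rt < p.2)
    (hv2hi : -(1+rt) ≤ p.1 ∨ p.2 < 3+3*rt) : p ∈ Dgauss := by
  rcases lt_trichotomy p.1 1 with h | h | h
  · rcases lt_trichotomy p.1 (-(1+rt)) with h' | h' | h'
    · exact memD3 h' hv1 (hv2hi.resolve_left (not_le.mpr h'))
    · exact absurd h' h2
    · exact memD2 h' h hv1
  · exact absurd h h1
  · exact memD1 h hu (hv2lo.resolve_left (not_le.mpr h))

lemma Q_sub (k : Idx) : Qset k ⊆ Dgauss ∪ ({p | p.1 = 1} ∪ {p | p.1 = -(1+rt)}) := by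
  rintro p ⟨hu, hv⟩
  by_cases he1 : p.1 = 1
  · right; left; exact he1
  by_cases he2 : p.1 = -(1+rt)
  · right; right; exact he2
  left
  rcases k with k | n | n
  · rw [show Qu (.inl k) = Set.Iio (1+rt) from rfl, Set.mem_Iio] at hu
    have h1 := Qv_subo (.inl k) hv
    rw [Set.mem_Ioo] at h1
    have hlo : 1+2*rt ≤ qlo (.inl k) := by
      fin_cases k <;> simp [qlo] <;> nlinarith [rt_gt, rt_lt]
    have hhi : qhi (.inl k) ≤ 3+3*rt := by
      fin_cases k <;> simp [qhi] <;> nlinarith [rt_gt, rt_lt]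
    exact memD_gen hu he1 he2 (by nlinarith [rt_pos, h1.1]) (Or.inr (by linarith [h1.1]))
      (Or.inr (by linarith [h1.2]))
  · rw [show Qu (.inr (.inl n)) = Set.Iio 1 from rfl, Set.mem_Iio] at hu
    rw [show Qv (.inr (.inl n)) = Set.Ioo (ee (n+1+1)) (ee (n+1)) from rfl, Set.mem_Ioo] at hv
    have hgt := ee_gt (show 1 ≤ n+1+1 by omega)
    have hle : ee (n+1) ≤ 1+2*rt := by rw [← ee_one]; exact ee_anti le_rfl (by omega)
    exact memD_gen (by linarith [rt_pos]) he1 he2 (by linarith [hv.1])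
      (Or.inl (le_of_lt hu)) (Or.inr (by nlinarith [hv.2, rt_pos]))
  · rw [show Qu (.inr (.inr n)) = Set.Ioo (-(1+rt)) (1+rt) from rfl, Set.mem_Ioo] at hu
    rw [show Qv (.inr (.inr n)) = Set.Ioo ((2*((n+1:ℕ):ℝ)+1)*(1+rt))
        ((2*((n+1:ℕ):ℝ)+3)*(1+rt)) from rfl, Set.mem_Ioo] at hv
    have hn1 : (1:ℝ) ≤ ((n+1:ℕ):ℝ) := by push_cast; linarith
    have hvlo : 1+2*rt < p.2 := by nlinarith [hv.1, rt_pos, rt_gt]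
    exact memD_gen hu.2 he1 he2 (by nlinarith [rt_pos]) (Or.inr hvlo) (Or.inl (le_of_lt hu.1))

/-! ### Coverage of `D` by the `Q`-pieces -/

def CV : Set ℝ :=
  (Set.range (fun m : ℕ => ee m)) ∪ (Set.range (fun m : ℕ => (2*(m:ℝ)+1)*(1+rt))) ∪
    {3+rt, 2+2*rt, 1+3*rt, 3+2*rt, 3+3*rt, 1+2*rt}

lemma CV_countable : CV.Countable :=
  ((Set.countable_range _).union (Set.countable_range _)).union
    (Set.Finite.countable (Set.toFinite _))

lemma Q_cover {p : ℝ × ℝ} (hp : p ∈ Dgauss) (hv : p.2 ∉ CV) : ∃ k, p ∈ Qset k := by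
  have hvsep : ∀ x : ℝ, x ∈ ({3+rt, 2+2*rt, 1+3*rt, 3+2*rt, 3+3*rt, 1+2*rt} : Set ℝ) →
      p.2 ≠ x := by
    intro x hx he
    exact hv (Or.inr (he ▸ hx))
  have hvee : ∀ m : ℕ, p.2 ≠ ee m := fun m he => hv (Or.inl (Or.inl ⟨m, he.symm⟩))
  have hvsev : ∀ m : ℕ, p.2 ≠ (2*(m:ℝ)+1)*(1+rt) := fun m he =>
    hv (Or.inl (Or.inr ⟨m, he.symm⟩))
  have hu_top : p.1 < 1+rt := by
    rcases D_cases hp with ⟨h1, h2, h3⟩ | ⟨h1, h2, h3⟩ | ⟨h1, h2, h3⟩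
    · exact h2
    · linarith [rt_pos]
    · linarith [rt_pos]
  have hv_bot : 1+rt < p.2 := by
    rcases D_cases hp with ⟨h1, h2, h3⟩ | ⟨h1, h2, h3⟩ | ⟨h1, h2, h3⟩
    · linarith [rt_pos]
    · exact h3
    · exact h2
  rcases lt_trichotomy p.2 (1+2*rt) with hc | hc | hc
  · -- Σ₁-image region
    have hu1 : p.1 < 1 := by
      rcases D_cases hp with ⟨h1, h2, h3⟩ | ⟨h1, h2, h3⟩ | ⟨h1, h2, h3⟩
      · linarith
      · exact h2
      · linarith [rt_pos]
    set t := p.2 - (1+rt) with ht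
    have ht0 : 0 < t := by rw [ht]; linarith
    have htrt : t < rt := by rw [ht]; linarith
    set r := rt / t with hr
    have hr1 : 1 < r := (one_lt_div ht0).mpr htrt
    have hr0 : 0 ≤ r := by linarith
    have htr : t * r = rt := by rw [hr]; field_simp
    set m := ⌈r⌉₊ with hm
    have hm2 : 2 ≤ m := by
      have h' : 1 < m := Nat.lt_ceil.mpr (by exact_mod_cast hr1)
      omega
    have hrm : r ≠ (m:ℝ) := by
      intro he
      apply hvee m
      have hm0 : (m:ℝ) ≠ 0 := Nat.cast_ne_zero.mpr (by omega)
      have : t = rt / m := by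
        rw [← htr, he, mul_div_assoc, div_self hm0, mul_one]
      rw [show ee m = 1 + rt + rt/m from rfl, ← this, ht]
      ring
    refine ⟨.inr (.inl (m - 2)), Set.mem_prod.mpr ⟨hu1, ?_⟩⟩
    show p.2 ∈ Set.Ioo (ee (m-2+1+1)) (ee (m-2+1))
    have e1 : m - 2 + 1 = m - 1 := by omega
    have e2 : m - 2 + 1 + 1 = m := by omega
    rw [e2, e1, Set.mem_Ioo, ee_lt_iff (by omega), lt_ee_iff (by omega)]
    have hcast : ((m - 1 : ℕ):ℝ) = (m:ℝ) - 1 := by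
      have h' : (1:ℕ) ≤ m := by omega
      push_cast [h']
      ring
    constructor
    · -- rt < t * m  ⇔  r < m
      have hlt : r < (m:ℝ) := lt_of_le_of_ne (Nat.le_ceil r) hrm
      have := mul_lt_mul_of_pos_left hlt ht0
      rw [htr] at this
      calc rt < t * (m:ℝ) := this
        _ = (p.2 - (1+rt)) * (m:ℝ) := by rw [ht]
    · rw [hcast]
      have hlt : ((m:ℝ) - 1) < r := by
        have h' := Nat.ceil_lt_add_one hr0
        rw [← hm] at h'
        linarith
      have := mul_lt_mul_of_pos_left hlt ht0
      rw [htr] at this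
      calc (p.2 - (1+rt)) * ((m:ℝ)-1) = t * ((m:ℝ)-1) := by rw [ht]
        _ < rt := this
  · exact absurd hc (hvsep (1+2*rt) (by norm_num))
  · rcases lt_trichotomy p.2 (3+3*rt) with hd | hd | hd
    · -- middle-image region
      have hQu : p.1 ∈ Set.Iio (1+rt) := hu_top
      rcases lt_trichotomy p.2 (3+rt) with h5 | h5 | h5
      · exact ⟨.inl 4, Set.mem_prod.mpr ⟨hQu, Set.mem_Ioo.mpr ⟨hc, h5⟩⟩⟩
      · exact absurd h5 (hvsep (3+rt) (by norm_num))
      rcases lt_trichotomy p.2 (2+2*rt) with h6 | h6 | h6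
      · exact ⟨.inl 1, Set.mem_prod.mpr ⟨hQu, Set.mem_Ioo.mpr ⟨h5, h6⟩⟩⟩
      · exact absurd h6 (hvsep (2+2*rt) (by norm_num))
      rcases lt_trichotomy p.2 (1+3*rt) with h7 | h7 | h7
      · exact ⟨.inl 2, Set.mem_prod.mpr ⟨hQu, Set.mem_Ioo.mpr ⟨h6, h7⟩⟩⟩
      · exact absurd h7 (hvsep (1+3*rt) (by norm_num))
      rcases lt_trichotomy p.2 (3+2*rt) with h8 | h8 | h8
      · exact ⟨.inl 3, Set.mem_prod.mpr ⟨hQu, Set.mem_Ioo.mpr ⟨h7, h8⟩⟩⟩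
      · exact absurd h8 (hvsep (3+2*rt) (by norm_num))
      · exact ⟨.inl 0, Set.mem_prod.mpr ⟨hQu, Set.mem_Ioo.mpr ⟨h8, hd⟩⟩⟩
    · exact absurd hd (hvsep (3+3*rt) (by norm_num))
    · -- Σ₇-image region
      have hu7 : -(1+rt) < p.1 ∧ p.1 < 1+rt := by
        rcases D_cases hp with ⟨h1, h2, h3⟩ | ⟨h1, h2, h3⟩ | ⟨h1, h2, h3⟩
        · constructor <;> nlinarith [rt_pos]
        · constructor <;> nlinarith [rt_pos]
        · linarith
      have ha : (0:ℝ) < 2*(1+rt) := by linarith [rt_pos]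
      set s := (p.2 - 3*(1+rt)) / (2*(1+rt)) with hs
      have hs0 : 0 ≤ s := le_of_lt (div_pos (by nlinarith) ha)
      have hsm : s * (2*(1+rt)) = p.2 - 3*(1+rt) := by rw [hs]; field_simp
      set m := ⌊s⌋₊ with hm
      have h1' : (m:ℝ) ≤ s := Nat.floor_le hs0
      have h2' : s < (m:ℝ) + 1 := Nat.lt_floor_add_one s
      have hne : p.2 ≠ (2*((m+1:ℕ):ℝ)+1)*(1+rt) := hvsev (m+1)
      refine ⟨.inr (.inr m), Set.mem_prod.mpr ⟨Set.mem_Ioo.mpr hu7, ?_⟩⟩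
      show p.2 ∈ Set.Ioo ((2*((m+1:ℕ):ℝ)+1)*(1+rt)) ((2*((m+1:ℕ):ℝ)+3)*(1+rt))
      rw [Set.mem_Ioo]
      have hge : (2*((m+1:ℕ):ℝ)+1)*(1+rt) ≤ p.2 := by
        push_cast
        nlinarith [mul_le_mul_of_nonneg_right h1' (le_of_lt ha), hsm]
      constructor
      · exact lt_of_le_of_ne hge (fun he => hne he.symm)
      · push_cast
        nlinarith [mul_lt_mul_of_pos_right h2' ha, hsm]
lemma Dmeas : MeasurableSet Dgauss := by
  unfold Dgauss
  exact ((measurableSet_Ioo.prod measurableSet_Ioi).union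
    (measurableSet_Ioo.prod measurableSet_Ioi)).union
    (measurableSet_Iio.prod measurableSet_Ioo)

lemma gmh : gaussMeasureHat = mu0.restrict Dgauss := by
  rw [gaussMeasureHat, mu0, MeasureTheory.restrict_withDensity Dmeas,
    ← MeasureTheory.withDensity_indicator Dmeas]
  rfl

lemma two_lines_null (z w : ℝ) : mu0 ({p : ℝ × ℝ | p.1 = z} ∪ {p : ℝ × ℝ | p.1 = w}) = 0 :=
  le_antisymm (le_trans (measure_union_le _ _)
    (by rw [null_vline, null_vline]; norm_num)) (zero_le')

theorem invariant_aux (A : Set (ℝ × ℝ)) (hA : MeasurableSet A) :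
    mu0 (Ghat ⁻¹' A ∩ Dgauss) = mu0 (A ∩ Dgauss) := by
  have hWm : ∀ k : Idx, MeasurableSet (Tp (Mset k) ⁻¹' A ∩ Pset k) :=
    fun k => ((Tp_measurable _) hA).inter (Pset_meas k)
  have hdisjP : Pairwise (Function.onFun Disjoint (fun k : Idx => Tp (Mset k) ⁻¹' A ∩ Pset k)) :=
    fun k l hne => (Pdisj hne).mono Set.inter_subset_right Set.inter_subset_right
  have hQm : ∀ k : Idx, MeasurableSet (A ∩ Qset k) := fun k => hA.inter (Qset_meas k)
  have hdisjQ : Pairwise (Function.onFun Disjoint (fun k : Idx => A ∩ Qset k)) :=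
    fun k l hne => (Qdisj hne).mono Set.inter_subset_right Set.inter_subset_right
  have step1 : mu0 (Ghat ⁻¹' A ∩ Dgauss) = mu0 (⋃ k : Idx, Tp (Mset k) ⁻¹' A ∩ Pset k) := by
    apply le_antisymm
    · have hsub : Ghat ⁻¹' A ∩ Dgauss ⊆
          (⋃ k : Idx, Tp (Mset k) ⁻¹' A ∩ Pset k) ∪
            ({p : ℝ × ℝ | p.1 = 0} ∪ {p : ℝ × ℝ | p.1 = -1}) := by
        rintro p ⟨hpA, hpD⟩
        by_cases h0 : p.1 = 0
        · exact Or.inr (Or.inl h0)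
        by_cases h1 : p.1 = -1
        · exact Or.inr (Or.inr h1)
        obtain ⟨k, hk⟩ := P_cover hpD h0 h1
        refine Or.inl (Set.mem_iUnion.mpr ⟨k, ?_, hk⟩)
        rw [Set.mem_preimage, ← ghk k hk]
        exact hpA
      calc mu0 (Ghat ⁻¹' A ∩ Dgauss)
          ≤ mu0 ((⋃ k : Idx, Tp (Mset k) ⁻¹' A ∩ Pset k) ∪
            ({p : ℝ × ℝ | p.1 = 0} ∪ {p : ℝ × ℝ | p.1 = -1})) := measure_mono hsub
        _ ≤ mu0 (⋃ k : Idx, Tp (Mset k) ⁻¹' A ∩ Pset k) +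
            mu0 ({p : ℝ × ℝ | p.1 = 0} ∪ {p : ℝ × ℝ | p.1 = -1}) := measure_union_le _ _
        _ = mu0 (⋃ k : Idx, Tp (Mset k) ⁻¹' A ∩ Pset k) := by
            rw [two_lines_null, add_zero]
    · have hsub : (⋃ k : Idx, Tp (Mset k) ⁻¹' A ∩ Pset k) ⊆
          (Ghat ⁻¹' A ∩ Dgauss) ∪ {p : ℝ × ℝ | p.1 = -(1+rt)} := by
        intro p hp
        obtain ⟨k, hk⟩ := Set.mem_iUnion.mp hp
        rcases P_sub k hk.2 with hD | hline
        · refine Or.inl ⟨?_, hD⟩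
          rw [Set.mem_preimage, ghk k hk.2]
          exact hk.1
        · exact Or.inr hline
      calc mu0 (⋃ k : Idx, Tp (Mset k) ⁻¹' A ∩ Pset k)
          ≤ mu0 ((Ghat ⁻¹' A ∩ Dgauss) ∪ {p : ℝ × ℝ | p.1 = -(1+rt)}) := measure_mono hsub
        _ ≤ mu0 (Ghat ⁻¹' A ∩ Dgauss) + mu0 {p : ℝ × ℝ | p.1 = -(1+rt)} := measure_union_le _ _
        _ = mu0 (Ghat ⁻¹' A ∩ Dgauss) := by rw [null_vline, add_zero]
  have step2 : mu0 (⋃ k : Idx, Tp (Mset k) ⁻¹' A ∩ Pset k)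
      = ∑' k : Idx, mu0 (Tp (Mset k) ⁻¹' A ∩ Pset k) := measure_iUnion hdisjP hWm
  have step3 : ∑' k : Idx, mu0 (Tp (Mset k) ⁻¹' A ∩ Pset k)
      = ∑' k : Idx, mu0 (A ∩ Qset k) := tsum_congr (fun k => keyk k A hA)
  have step4 : ∑' k : Idx, mu0 (A ∩ Qset k) = mu0 (⋃ k : Idx, A ∩ Qset k) :=
    (measure_iUnion hdisjQ hQm).symm
  have step5 : mu0 (⋃ k : Idx, A ∩ Qset k) = mu0 (A ∩ Dgauss) := by
    apply le_antisymm
    · have hsub : (⋃ k : Idx, A ∩ Qset k) ⊆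
          (A ∩ Dgauss) ∪ ({p : ℝ × ℝ | p.1 = 1} ∪ {p : ℝ × ℝ | p.1 = -(1+rt)}) := by
        intro p hp
        obtain ⟨k, hk⟩ := Set.mem_iUnion.mp hp
        rcases Q_sub k hk.2 with hD | hline
        · exact Or.inl ⟨hk.1, hD⟩
        · exact Or.inr hline
      calc mu0 (⋃ k : Idx, A ∩ Qset k)
          ≤ mu0 ((A ∩ Dgauss) ∪ ({p : ℝ × ℝ | p.1 = 1} ∪ {p : ℝ × ℝ | p.1 = -(1+rt)})) :=
            measure_mono hsub
        _ ≤ mu0 (A ∩ Dgauss) + mu0 ({p : ℝ × ℝ | p.1 = 1} ∪ {p : ℝ × ℝ | p.1 = -(1+rt)}) :=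
            measure_union_le _ _
        _ = mu0 (A ∩ Dgauss) := by rw [two_lines_null, add_zero]
    · have hsub : A ∩ Dgauss ⊆ (⋃ k : Idx, A ∩ Qset k) ∪ {p : ℝ × ℝ | p.2 ∈ CV} := by
        rintro p ⟨hpA, hpD⟩
        by_cases hcv : p.2 ∈ CV
        · exact Or.inr hcv
        obtain ⟨k, hk⟩ := Q_cover hpD hcv
        exact Or.inl (Set.mem_iUnion.mpr ⟨k, hpA, hk⟩)
      calc mu0 (A ∩ Dgauss)
          ≤ mu0 ((⋃ k : Idx, A ∩ Qset k) ∪ {p : ℝ × ℝ | p.2 ∈ CV}) := measure_mono hsub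
        _ ≤ mu0 (⋃ k : Idx, A ∩ Qset k) + mu0 {p : ℝ × ℝ | p.2 ∈ CV} := measure_union_le _ _
        _ = mu0 (⋃ k : Idx, A ∩ Qset k) := by rw [null_hset CV_countable, add_zero]
  rw [step1, step2, step3, step4, step5]

end OctagonAux

/-- The measure `μ̂_G` with density `1/(u-v)²` on `D` is invariant under the natural
extension `Ĝ` of the octagon Gauss map. -/
theorem gaussMeasureHat_invariant (A : Set (ℝ × ℝ)) (hA : MeasurableSet A) :
    gaussMeasureHat (Ghat ⁻¹' A) = gaussMeasureHat A := by
  rw [OctagonAux.gmh, Measure.restrict_apply' OctagonAux.Dmeas,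
    Measure.restrict_apply' OctagonAux.Dmeas]
  exact OctagonAux.invariant_aux A hA
end
end

section
/- The natural extension Ĝ of the octagon Gauss map is, up to null sets, a bijection of its domain D onto itself: there exist Lebesgue-null sets N₁, N₂ ⊆ D such that Ĝ restricted to D \ N₁ is a bijection onto D \ N₂. -/
open MeasureTheory Set

noncomputable section

local notation "σ" => Real.sqrt 2

lemma s2_sq : σ * σ = 2 := Real.mul_self_sqrt (by norm_num)
lemma s2_pos : (0:ℝ) < σ := Real.sqrt_pos.2 (by norm_num)
lemma s2_gt : (1.414:ℝ) < σ := by nlinarith [s2_sq, s2_pos]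
lemma s2_lt : σ < 1.415 := by nlinarith [s2_sq, s2_pos]

lemma mob_smul (r : ℝ) (hr : r ≠ 0) (M : Matrix (Fin 2) (Fin 2) ℝ) (x : ℝ) :
    mob (r • M) x = mob M x := by
  simp only [mob, Matrix.smul_apply, smul_eq_mul]
  rw [show r * M 0 0 * x + r * M 0 1 = r * (M 0 0 * x + M 0 1) by ring,
    show r * M 1 0 * x + r * M 1 1 = r * (M 1 0 * x + M 1 1) by ring,
    mul_div_mul_left _ _ hr]

lemma s2_inv_ne : (σ)⁻¹ ≠ 0 := by positivity

lemma mg1 (x : ℝ) : mob (gam * nu 1) x = ((1 + 2*σ)*x - (3 + 2*σ))/(x - 1) := by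
  rw [show nu 1 = (σ)⁻¹ • !![1, 1; 1, -1] from rfl, Matrix.mul_smul, mob_smul _ s2_inv_ne]
  simp only [mob, gam, Matrix.mul_fin_two]
  norm_num; ring_nf

lemma mg2 (x : ℝ) : mob (gam * nu 2) x = ((3 + 2*σ)*x - (1 + 2*σ))/(x - 1) := by
  rw [show nu 2 = (σ)⁻¹ • !![1, 1; -1, 1] from rfl, Matrix.mul_smul, mob_smul _ s2_inv_ne]
  simp only [mob, gam, Matrix.mul_fin_two]
  norm_num
  rw [show (-1 + (-(2 * σ) + -2)) * x + (-1 + (2 + 2 * σ)) = -(((3 + 2*σ)*x - (1 + 2*σ))) by ring,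
    show -x + 1 = -(x - 1) by ring, neg_div_neg_eq]

lemma mg3 (x : ℝ) : mob (gam * nu 3) x = ((2 + 2*σ)*x - 1)/x := by
  simp only [mob, gam, show nu 3 = !![0,1;1,0] from rfl, Matrix.mul_fin_two]
  norm_num; ring_nf

lemma mg4 (x : ℝ) : mob (gam * nu 4) x = ((2 + 2*σ)*x + 1)/x := by
  simp only [mob, gam, show nu 4 = !![0,1;-1,0] from rfl, Matrix.mul_fin_two]
  norm_num
  rw [show (-(2 * σ) + -2) * x + -1 = -((2 + 2*σ)*x + 1) by ring, show -x = -(x) from rfl, neg_div_neg_eq]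

lemma mg5 (x : ℝ) : mob (gam * nu 5) x = ((3 + 2*σ)*x + (1 + 2*σ))/(x + 1) := by
  rw [show nu 5 = (σ)⁻¹ • !![-1, 1; 1, 1] from rfl, Matrix.mul_smul, mob_smul _ s2_inv_ne]
  simp only [mob, gam, Matrix.mul_fin_two]
  norm_num; ring_nf

lemma mg6 (x : ℝ) : mob (gam * nu 6) x = ((1 + 2*σ)*x + (3 + 2*σ))/(x + 1) := by
  rw [show nu 6 = (σ)⁻¹ • !![-1, 1; -1, -1] from rfl, Matrix.mul_smul, mob_smul _ s2_inv_ne]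
  simp only [mob, gam, Matrix.mul_fin_two]
  norm_num
  rw [show (1 + (-(2 * σ) + -2)) * x + (-1 + (-(2 * σ) + -2)) = -(((1 + 2*σ)*x + (3 + 2*σ))) by ring,
    show -x + -1 = -(x + 1) by ring, neg_div_neg_eq]

lemma mg7 (x : ℝ) : mob (gam * nu 7) x = x + (2 + 2*σ) := by
  simp only [mob, gam, show nu 7 = !![-1,0;0,1] from rfl, Matrix.mul_fin_two]
  norm_num

lemma sec1 {u : ℝ} (h1 : 1 < u) (h2 : u ≤ 1 + σ) : sectorIndex u = 1 := by
  rw [sectorIndex, if_neg (by linarith), if_pos h1]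

lemma sec2 {u : ℝ} (h1 : σ - 1 < u) (h2 : u ≤ 1) : sectorIndex u = 2 := by
  have := s2_gt
  rw [sectorIndex, if_neg (by linarith), if_neg (by linarith), if_pos h1]

lemma sec3 {u : ℝ} (h1 : 0 < u) (h2 : u ≤ σ - 1) : sectorIndex u = 3 := by
  have := s2_gt; have := s2_lt
  rw [sectorIndex, if_neg (by linarith), if_neg (by linarith), if_neg (by linarith), if_pos h1]

lemma sec4 {u : ℝ} (h1 : 1 - σ < u) (h2 : u ≤ 0) : sectorIndex u = 4 := by
  have := s2_gt; have := s2_lt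
  rw [sectorIndex, if_neg (by linarith), if_neg (by linarith), if_neg (by linarith),
    if_neg (by linarith), if_pos h1]

lemma sec5 {u : ℝ} (h1 : -1 < u) (h2 : u ≤ 1 - σ) : sectorIndex u = 5 := by
  have := s2_gt; have := s2_lt
  rw [sectorIndex, if_neg (by linarith), if_neg (by linarith), if_neg (by linarith),
    if_neg (by linarith), if_neg (by linarith), if_pos h1]

lemma sec6 {u : ℝ} (h1 : -(1 + σ) < u) (h2 : u ≤ -1) : sectorIndex u = 6 := by
  have := s2_gt; have := s2_lt
  rw [sectorIndex, if_neg (by linarith), if_neg (by linarith), if_neg (by linarith),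
    if_neg (by linarith), if_neg (by linarith), if_neg (by linarith), if_pos h1]

lemma sec7 {u : ℝ} (h2 : u ≤ -(1 + σ)) : sectorIndex u = 7 := by
  have := s2_gt; have := s2_lt
  rw [sectorIndex, if_neg (by linarith), if_neg (by linarith), if_neg (by linarith),
    if_neg (by linarith), if_neg (by linarith), if_neg (by linarith), if_neg (by linarith)]

lemma Fhat_eq {p : ℝ × ℝ} (h : sectorIndex p.1 ≠ 0) :
    Fhat p = (mob (gam * nu (sectorIndex p.1)) p.1, mob (gam * nu (sectorIndex p.1)) p.2) := by
  rw [Fhat, if_neg h]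

lemma F_eq {u : ℝ} (h : sectorIndex u ≠ 0) : F u = mob (gam * nu (sectorIndex u)) u := by
  rw [F, if_neg h]

lemma Fhat_fst (p : ℝ × ℝ) : (Fhat p).1 = F p.1 := by
  rw [Fhat, F]; split_ifs <;> rfl

lemma Fhat_iter_fst (n : ℕ) (p : ℝ × ℝ) : (Fhat^[n] p).1 = F^[n] p.1 := by
  induction n generalizing p with
  | zero => rfl
  | succ n ih => rw [Function.iterate_succ_apply, Function.iterate_succ_apply, ih, Fhat_fst]

local notation "Λ" => (1 + Real.sqrt 2 : ℝ)
local notation "Ł" => (2 + 2 * Real.sqrt 2 : ℝ)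

/- ### C family : sector 7, translations -/

lemma Fhat_C_iter : ∀ (m : ℕ) (p : ℝ × ℝ), (∀ j : ℕ, j < m → p.1 + j * Ł ≤ -Λ) →
    Fhat^[m] p = (p.1 + m * Ł, p.2 + m * Ł) := by
  intro m
  induction m with
  | zero => intro p _; simp
  | succ m ih =>
    intro p h
    have h0 : p.1 ≤ -Λ := by have := h 0 (by omega); simpa using this
    have hsec : sectorIndex p.1 = 7 := sec7 h0
    have hF : Fhat p = (p.1 + Ł, p.2 + Ł) := by
      rw [Fhat_eq (by rw [hsec]; norm_num), hsec, mg7, mg7]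
    rw [Function.iterate_succ_apply, hF, ih]
    · simp only [Prod.mk.injEq]
      constructor <;> (push_cast; ring)
    · intro j hj
      have := h (j+1) (by omega)
      push_cast at this ⊢
      linarith

lemma F_C_iter (m : ℕ) (u : ℝ) (h : ∀ j : ℕ, j < m → u + j * Ł ≤ -Λ) :
    F^[m] u = u + m * Ł := by
  have := Fhat_C_iter m (u, 0) (by simpa using h)
  have h2 := Fhat_iter_fst m (u, 0)
  rw [this] at h2
  exact h2.symm

lemma C_between {n : ℕ} {u : ℝ} (h2 : u < -Λ - n * Ł) {j : ℕ} (hj : j ≤ n) :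
    u + j * Ł ≤ -Λ := by
  have hc : (j:ℝ) ≤ (n:ℝ) := by exact_mod_cast hj
  nlinarith [s2_pos]

lemma n7_C {n : ℕ} {u : ℝ} (h1 : -Λ - (n+1) * Ł < u) (h2 : u < -Λ - n * Ł) :
    n7 u = n + 1 := by
  unfold n7
  have hiter : F^[n+1] u = u + ((n:ℝ)+1) * Ł := by
    have := F_C_iter (n+1) u (fun j hj => C_between h2 (by omega))
    push_cast at this
    exact this
  have hmem : n + 1 ∈ {m | 0 < m ∧ F^[m] u ∉ Set.Iic (-Λ)} := by
    refine ⟨by omega, ?_⟩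
    rw [hiter, Set.mem_Iic]
    push_cast
    intro hc
    linarith
  refine le_antisymm (Nat.sInf_le hmem) ?_
  by_contra hlt
  push_neg at hlt
  have hin := Nat.sInf_mem (⟨n+1, hmem⟩ : {m | 0 < m ∧ F^[m] u ∉ Set.Iic (-Λ)}.Nonempty)
  set k := sInf {m | 0 < m ∧ F^[m] u ∉ Set.Iic (-Λ)} with hk
  obtain ⟨hk0, hknot⟩ := hin
  apply hknot
  rw [Set.mem_Iic, F_C_iter k u (fun j hj => C_between h2 (by omega))]
  exact C_between h2 (by omega)

lemma nG_C {u : ℝ} (h : u ≤ -Λ) : nG u = n7 u := by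
  have := s2_pos
  rw [nG, if_neg, if_pos (show u ∈ Set.Iic (-Λ) from h)]
  simp only [Set.mem_Ioc, not_and_or, not_lt]
  left; linarith

lemma Ghat_C {n : ℕ} {p : ℝ × ℝ} (h1 : -Λ - (n+1) * Ł < p.1) (h2 : p.1 < -Λ - n * Ł) :
    Ghat p = (p.1 + (n+1) * Ł, p.2 + (n+1) * Ł) := by
  have hle : p.1 ≤ -Λ := by nlinarith [s2_pos]
  rw [Ghat, nG_C hle, n7_C h1 h2]
  have := Fhat_C_iter (n+1) p (fun j hj => C_between h2 (by omega))
  push_cast at this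
  exact this

def UC (n : ℕ) : Set (ℝ × ℝ) :=
  {p | -Λ - (n+1) * Ł < p.1 ∧ p.1 < -Λ - n * Ł ∧ p.1 + (n+1) * Ł ≠ 1 ∧ Λ < p.2 ∧ p.2 < Λ + Ł}
def VC (n : ℕ) : Set (ℝ × ℝ) :=
  {q | -Λ < q.1 ∧ q.1 < Λ ∧ q.1 ≠ 1 ∧ Λ + (n+1) * Ł < q.2 ∧ q.2 < Λ + (n+2) * Ł}

lemma Ghat_UC {n : ℕ} {p : ℝ × ℝ} (hp : p ∈ UC n) : Ghat p ∈ VC n := by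
  obtain ⟨h1, h2, h3, h4, h5⟩ := hp
  rw [Ghat_C h1 h2]
  refine ⟨by push_cast; linarith, by push_cast; push_cast at h2; linarith, h3, ?_, ?_⟩
    <;> push_cast <;> push_cast at h4 h5 <;> linarith

lemma Ghat_VC {n : ℕ} {q : ℝ × ℝ} (hq : q ∈ VC n) :
    (q.1 - (n+1) * Ł, q.2 - (n+1) * Ł) ∈ UC n ∧
      Ghat (q.1 - (n+1) * Ł, q.2 - (n+1) * Ł) = q := by
  obtain ⟨h1, h2, h3, h4, h5⟩ := hq
  have hu : (q.1 - (n+1) * Ł, q.2 - (n+1) * Ł) ∈ UC n := by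
    refine ⟨by push_cast; linarith, by push_cast; push_cast at h2; linarith,
      by simpa using h3, by push_cast; push_cast at h4; linarith,
      by push_cast; push_cast at h5; linarith⟩
  refine ⟨hu, ?_⟩
  rw [Ghat_C hu.1 hu.2.1]
  simp

/- ### A family : sector 1, accelerated -/

def Tm (k : ℕ) (x : ℝ) : ℝ := Λ + σ * (x - Λ) / (σ + k * (x - Λ))
def Sm (k : ℕ) (y : ℝ) : ℝ := Λ + σ * (y - Λ) / (σ - k * (y - Λ))
def bb (n : ℕ) : ℝ := Λ - σ / (n + 1)

lemma sp2 : σ ^ 2 = 2 := Real.sq_sqrt (by norm_num)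

lemma Tm_zero (x : ℝ) : Tm 0 x = x := by
  have := s2_pos
  simp only [Tm, Nat.cast_zero, zero_mul, add_zero]
  field_simp
  ring

lemma bb_lt_lam (n : ℕ) : bb n < Λ := by
  have := s2_pos
  have h2 : 0 < σ / ((n:ℝ)+1) := by positivity
  simp only [bb]; linarith

lemma bb_ge_one (n : ℕ) : 1 ≤ bb n := by
  have := s2_pos
  have h0 : (0:ℝ) ≤ (n:ℝ) := Nat.cast_nonneg n
  have : σ / ((n:ℝ)+1) ≤ σ := by
    rw [div_le_iff₀ (by linarith)]; nlinarith
  simp only [bb]; linarith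

lemma bb_lt {j : ℕ} {x : ℝ} : bb j < x ↔ (Λ - x) * ((j:ℝ)+1) < σ := by
  rw [bb, ← lt_div_iff₀ (by positivity : (0:ℝ) < (j:ℝ)+1)]
  constructor <;> intro <;> linarith

lemma lt_bb {j : ℕ} {x : ℝ} : x < bb j ↔ σ < (Λ - x) * ((j:ℝ)+1) := by
  rw [bb, ← div_lt_iff₀ (by positivity : (0:ℝ) < (j:ℝ)+1)]
  constructor <;> intro <;> linarith

lemma Tm_form {k : ℕ} {x : ℝ} : Tm k x = Λ - σ * (Λ - x) / (σ - k * (Λ - x)) := by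
  rw [Tm, show x - Λ = -(Λ - x) by ring, show σ + (k:ℝ) * -(Λ - x) = σ - k*(Λ-x) by ring,
    mul_neg, neg_div, ← sub_eq_add_neg]

lemma Tm_mem {k m : ℕ} {x : ℝ} (h1 : bb (m + k) < x) (h2 : x < bb (m + k + 1)) :
    bb m < Tm k x ∧ Tm k x < bb (m + 1) := by
  have hs := s2_pos
  rw [bb_lt] at h1; rw [lt_bb] at h2
  push_cast at h1 h2
  set t := Λ - x with ht
  have htpos : 0 < t := by nlinarith
  have hkm : (0:ℝ) ≤ (m:ℝ) := Nat.cast_nonneg m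
  have hk0 : (0:ℝ) ≤ (k:ℝ) := Nat.cast_nonneg k
  have hden : 0 < σ - (k:ℝ) * t := by nlinarith
  rw [bb_lt, lt_bb, Tm_form, ← ht]
  push_cast
  rw [show Λ - (Λ - σ * t / (σ - (k:ℝ)*t)) = σ * t / (σ - (k:ℝ)*t) by ring]
  constructor
  · rw [div_mul_eq_mul_div, div_lt_iff₀ hden]; nlinarith
  · rw [div_mul_eq_mul_div, lt_div_iff₀ hden]; nlinarith

lemma Tm_final {n : ℕ} {x : ℝ} (h1 : bb n < x) (h2 : x < bb (n + 1)) :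
    Tm (n + 1) x < 1 := by
  have hs := s2_pos
  rw [bb_lt] at h1; rw [lt_bb] at h2
  push_cast at h1 h2
  set t := Λ - x with ht
  have htpos : 0 < t := by nlinarith
  have hn0 : (0:ℝ) ≤ (n:ℝ) := Nat.cast_nonneg n
  have hden : 0 < σ - ((n:ℝ)+1) * t := by nlinarith
  rw [Tm_form, ← ht]
  push_cast
  have : σ < σ * t / (σ - ((n:ℝ)+1)*t) := by
    rw [lt_div_iff₀ hden]; nlinarith
  linarith

lemma Tm_v_pos {k : ℕ} {v : ℝ} (hv : Λ < v) : Λ < Tm k v ∧ 0 < σ + k * (v - Λ) := by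
  have hs := s2_pos
  have hw : 0 < v - Λ := by linarith
  have hden : 0 < σ + (k:ℝ) * (v - Λ) := by positivity
  refine ⟨?_, hden⟩
  rw [Tm]
  have : 0 < σ * (v - Λ) / (σ + (k:ℝ) * (v - Λ)) := by positivity
  linarith

lemma Tm_v_img {n : ℕ} {v : ℝ} (hv : Λ + σ < v) :
    Λ + σ / ((n:ℝ) + 2) < Tm (n+1) v ∧ Tm (n+1) v < Λ + σ / ((n:ℝ) + 1) := by
  have hs := s2_pos
  have hw : σ < v - Λ := by linarith
  have hwp : 0 < v - Λ := by linarith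
  have hn0 : (0:ℝ) ≤ (n:ℝ) := Nat.cast_nonneg n
  have hden : 0 < σ + ((n:ℝ)+1) * (v - Λ) := by positivity
  have hn1 : (0:ℝ) < (n:ℝ) + 1 := by positivity
  have hn2 : (0:ℝ) < (n:ℝ) + 2 := by positivity
  rw [Tm]
  push_cast
  constructor
  · have : σ / ((n:ℝ)+2) < σ * (v - Λ) / (σ + ((n:ℝ)+1) * (v - Λ)) := by
      rw [div_lt_div_iff₀ hn2 hden]; nlinarith
    linarith
  · have : σ * (v - Λ) / (σ + ((n:ℝ)+1) * (v - Λ)) < σ / ((n:ℝ)+1) := by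
      rw [div_lt_div_iff₀ hden hn1]; nlinarith
    linarith

lemma genA (r L c x : ℝ) (hr : r ≠ 0) (h : r + c*(x-L) ≠ 0) :
    L + r*(L + r*(x-L)/(r + c*(x-L)) - L)/(r - c*(L + r*(x-L)/(r + c*(x-L)) - L)) = x := by
  have h4 : r - c*(L + r*(x-L)/(r + c*(x-L)) - L) = r*r/(r + c*(x-L)) := by
    field_simp; ring
  rw [h4, show L + r*(x-L)/(r + c*(x-L)) - L = r*(x-L)/(r + c*(x-L)) by ring]
  rw [← mul_div_assoc, div_div_div_cancel_right₀ h]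
  field_simp
  ring

lemma genB (r L c y : ℝ) (hr : r ≠ 0) (h : r - c*(y-L) ≠ 0) :
    L + r*(L + r*(y-L)/(r - c*(y-L)) - L)/(r + c*(L + r*(y-L)/(r - c*(y-L)) - L)) = y := by
  have h4 : r + c*(L + r*(y-L)/(r - c*(y-L)) - L) = r*r/(r - c*(y-L)) := by
    field_simp; ring
  rw [h4, show L + r*(y-L)/(r - c*(y-L)) - L = r*(y-L)/(r - c*(y-L)) by ring]
  rw [← mul_div_assoc, div_div_div_cancel_right₀ h]
  field_simp
  ring

lemma genC (r L c x : ℝ) (hr : r ≠ 0) (h1 : r + (x-L) ≠ 0) (h2 : r + (c+1)*(x-L) ≠ 0) :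
    L + r*(L + r*(x-L)/(r + (x-L)) - L)/(r + c*(L + r*(x-L)/(r + (x-L)) - L))
      = L + r*(x-L)/(r + (c+1)*(x-L)) := by
  have h4 : r + c*(L + r*(x-L)/(r + (x-L)) - L) = r*(r + (c+1)*(x-L))/(r + (x-L)) := by
    field_simp; ring
  rw [h4, show L + r*(x-L)/(r + (x-L)) - L = r*(x-L)/(r + (x-L)) by ring]
  field_simp

lemma Sm_Tm {k : ℕ} {x : ℝ} (h : σ + k * (x - Λ) ≠ 0) : Sm k (Tm k x) = x :=
  genA σ Λ k x (ne_of_gt s2_pos) h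

lemma Tm_Sm {k : ℕ} {y : ℝ} (h : σ - k * (y - Λ) ≠ 0) : Tm k (Sm k y) = y :=
  genB σ Λ k y (ne_of_gt s2_pos) h

lemma Tm_comp {k : ℕ} {x : ℝ} (hd1 : σ + (x - Λ) ≠ 0) (hd2 : σ + ((k:ℝ) + 1) * (x - Λ) ≠ 0) :
    Tm k (Tm 1 x) = Tm (k + 1) x := by
  simp only [Tm, Nat.cast_one, Nat.cast_add, one_mul]
  exact genC σ Λ k x (ne_of_gt s2_pos) hd1 hd2

lemma Sm_u {n : ℕ} {y : ℝ} (hy : y < 1) :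
    bb n < Sm (n + 1) y ∧ Sm (n + 1) y < bb (n + 1) := by
  have hs := s2_pos
  set t := Λ - y with ht
  have htg : σ < t := by simp only [ht]; linarith
  have htp : 0 < t := by linarith
  have hn0 : (0:ℝ) ≤ (n:ℝ) := Nat.cast_nonneg n
  have hden : 0 < σ + ((n:ℝ)+1) * t := by positivity
  have hform : Sm (n+1) y = Λ - σ * t / (σ + ((n:ℝ)+1) * t) := by
    rw [Sm, show y - Λ = -t by simp only [ht]; ring]
    push_cast
    rw [show σ - ((n:ℝ)+1) * -t = σ + ((n:ℝ)+1)*t by ring, mul_neg, neg_div, ← sub_eq_add_neg]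
  rw [bb_lt, lt_bb, hform]
  push_cast
  rw [show Λ - (Λ - σ * t / (σ + ((n:ℝ)+1)*t)) = σ * t / (σ + ((n:ℝ)+1)*t) by ring]
  constructor
  · rw [div_mul_eq_mul_div, div_lt_iff₀ hden]; nlinarith
  · rw [div_mul_eq_mul_div, lt_div_iff₀ hden]; nlinarith

lemma Sm_v {n : ℕ} {y : ℝ} (h1 : Λ + σ / ((n:ℝ)+2) < y) (h2 : y < Λ + σ / ((n:ℝ)+1)) :
    Λ + σ < Sm (n + 1) y ∧ σ - ((n:ℝ)+1) * (y - Λ) ≠ 0 := by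
  have hs := s2_pos
  set t := y - Λ with ht
  have hn0 : (0:ℝ) ≤ (n:ℝ) := Nat.cast_nonneg n
  have hn1 : (0:ℝ) < (n:ℝ) + 1 := by positivity
  have hn2 : (0:ℝ) < (n:ℝ) + 2 := by positivity
  have hup : ((n:ℝ) + 1) * t < σ := by
    have h : t < σ / ((n:ℝ) + 1) := by simp only [ht]; linarith
    rw [lt_div_iff₀ hn1] at h; linarith
  have hlo : σ < ((n:ℝ) + 2) * t := by
    have h : σ / ((n:ℝ) + 2) < t := by simp only [ht]; linarith
    rw [div_lt_iff₀ hn2] at h; linarith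
  have htpos : 0 < t := by nlinarith
  have hden : 0 < σ - ((n:ℝ)+1) * t := by linarith
  refine ⟨?_, ne_of_gt hden⟩
  rw [Sm, ← ht]
  push_cast
  have : σ < σ * t / (σ - ((n:ℝ)+1) * t) := by
    rw [lt_div_iff₀ hden]; nlinarith
  linarith

lemma mg1_Tm {x : ℝ} (h : x ≠ 1) : mob (gam * nu 1) x = Tm 1 x := by
  have hd : x - 1 ≠ 0 := sub_ne_zero.2 h
  rw [mg1, Tm]
  push_cast
  rw [one_mul, show σ + (x - Λ) = x - 1 by ring]
  field_simp
  linear_combination sp2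

lemma bb_zero : bb 0 = 1 := by
  simp only [bb, Nat.cast_zero, zero_add, div_one]
  ring

lemma denAx {j : ℕ} {c : ℝ} {u : ℝ} (hj : (j:ℝ) ≤ c) (h : (Λ - u) * c < σ) :
    0 < σ + j * (u - Λ) := by
  have hj0 : (0:ℝ) ≤ (j:ℝ) := Nat.cast_nonneg j
  rcases le_or_gt (Λ - u) 0 with hc | hc
  · nlinarith [s2_pos]
  · nlinarith [s2_pos]

lemma den_one {u c : ℝ} (hc : 1 ≤ c) (h : (Λ - u) * c < σ) : 0 < σ + (u - Λ) := by
  rcases le_or_gt (Λ - u) 0 with hx | hx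
  · nlinarith [s2_pos]
  · nlinarith [s2_pos]

lemma v_ne_one {v : ℝ} (hv : Λ < v) : v ≠ 1 := by
  intro h; rw [h] at hv; nlinarith [s2_pos]

lemma A_iter : ∀ n k : ℕ, k ≤ n + 1 → ∀ u v : ℝ, bb n < u → u < bb (n+1) → Λ < v →
    Fhat^[k] (u, v) = (Tm k u, Tm k v) := by
  intro n
  induction n with
  | zero =>
    intro k hk u v h1 h2 hv
    have hu1 : 1 < u := by rw [← bb_zero]; exact h1
    have huL : u < Λ := lt_trans h2 (bb_lt_lam _)
    interval_cases k
    · simp [Tm_zero]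
    · have hsec : sectorIndex u = 1 := sec1 hu1 (le_of_lt huL)
      rw [Function.iterate_one, Fhat_eq (p := (u,v)) (by rw [hsec]; norm_num)]
      simp only [hsec]
      rw [mg1_Tm (ne_of_gt hu1), mg1_Tm (v_ne_one hv)]
  | succ n ih =>
    intro k hk u v h1 h2 hv
    match k with
    | 0 => simp [Tm_zero]
    | (j+1) =>
      have hu1 : 1 < u := lt_of_le_of_lt (bb_ge_one (n+1)) h1
      have huL : u < Λ := lt_trans h2 (bb_lt_lam _)
      have hsec : sectorIndex u = 1 := sec1 hu1 (le_of_lt huL)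
      have hstep : Fhat (u, v) = (Tm 1 u, Tm 1 v) := by
        rw [Fhat_eq (p := (u,v)) (by rw [hsec]; norm_num)]
        simp only [hsec]
        rw [mg1_Tm (ne_of_gt hu1), mg1_Tm (v_ne_one hv)]
      have hmem := Tm_mem (k := 1) (m := n) h1 h2
      have hvpos := (Tm_v_pos (k := 1) hv).1
      have hj : j ≤ n + 1 := by omega
      rw [Function.iterate_succ_apply, hstep, ih j hj _ _ hmem.1 hmem.2 hvpos]
      have hbu : (Λ - u) * ((n:ℝ)+2) < σ := by
        have h := bb_lt.1 h1; push_cast at h; linarith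
      have hd1u : σ + (u - Λ) ≠ 0 :=
        ne_of_gt (den_one (by linarith [Nat.cast_nonneg (α := ℝ) n]) hbu)
      have hd2u : σ + ((j:ℝ)+1) * (u - Λ) ≠ 0 := by
        have hcast : ((j+1 : ℕ):ℝ) ≤ (n:ℝ)+2 := by
          push_cast
          have : (j:ℝ) ≤ (n:ℝ)+1 := by exact_mod_cast hj
          linarith
        have h := denAx hcast hbu
        push_cast at h
        exact ne_of_gt h
      have hd1v : σ + (v - Λ) ≠ 0 := ne_of_gt (by nlinarith [s2_pos])
      have hd2v : σ + ((j:ℝ)+1) * (v - Λ) ≠ 0 := by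
        have h0 : (0:ℝ) ≤ (j:ℝ) := Nat.cast_nonneg j
        exact ne_of_gt (by nlinarith [s2_pos])
      rw [Tm_comp hd1u hd2u, Tm_comp hd1v hd2v]

lemma n1_A {n : ℕ} {u : ℝ} (h1 : bb n < u) (h2 : u < bb (n+1)) : n1 u = n + 1 := by
  have hF : ∀ k, k ≤ n+1 → F^[k] u = Tm k u := by
    intro k hk
    have h := A_iter n k hk u (Λ+1) h1 h2 (by linarith [s2_pos])
    have h2' := Fhat_iter_fst k (u, Λ+1)
    rw [h] at h2'
    exact h2'.symm
  unfold n1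
  have hmem : (n+1) ∈ {m | 0 < m ∧ F^[m] u ∉ Set.Ioc (1:ℝ) Λ} := by
    refine ⟨by omega, ?_⟩
    rw [hF (n+1) le_rfl, Set.mem_Ioc]
    intro hc
    linarith [Tm_final h1 h2, hc.1]
  refine le_antisymm (Nat.sInf_le hmem) ?_
  by_contra hlt
  push_neg at hlt
  have hin := Nat.sInf_mem (⟨n+1, hmem⟩ : {m | 0 < m ∧ F^[m] u ∉ Set.Ioc (1:ℝ) Λ}.Nonempty)
  set k := sInf {m | 0 < m ∧ F^[m] u ∉ Set.Ioc (1:ℝ) Λ} with hkdef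
  obtain ⟨hk0, hknot⟩ := hin
  apply hknot
  have hkn : k ≤ n := by omega
  obtain ⟨m, rfl⟩ : ∃ m, n = m + k := ⟨n - k, by omega⟩
  have hb := Tm_mem (k := k) (m := m) h1 h2
  rw [hF k (by omega), Set.mem_Ioc]
  exact ⟨lt_of_le_of_lt (bb_ge_one m) hb.1, le_of_lt (lt_trans hb.2 (bb_lt_lam _))⟩

def UA (n : ℕ) : Set (ℝ×ℝ) :=
  {p | bb n < p.1 ∧ p.1 < bb (n+1) ∧ Tm (n+1) p.1 ≠ -Λ ∧ Λ + σ < p.2}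
def VA (n : ℕ) : Set (ℝ×ℝ) :=
  {q | q.1 < 1 ∧ q.1 ≠ -Λ ∧ Λ + σ/((n:ℝ)+2) < q.2 ∧ q.2 < Λ + σ/((n:ℝ)+1)}

lemma Ghat_A {n : ℕ} {p : ℝ×ℝ} (h1 : bb n < p.1) (h2 : p.1 < bb (n+1)) (hv : Λ < p.2) :
    Ghat p = (Tm (n+1) p.1, Tm (n+1) p.2) := by
  have hioc : p.1 ∈ Set.Ioc (1:ℝ) Λ :=
    ⟨lt_of_le_of_lt (bb_ge_one n) h1, le_of_lt (lt_trans h2 (bb_lt_lam _))⟩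
  rw [Ghat, nG, if_pos hioc, n1_A h1 h2]
  have h := A_iter n (n+1) le_rfl p.1 p.2 h1 h2 hv
  rw [Prod.mk.eta] at h
  exact h

lemma Ghat_UA {n : ℕ} {p : ℝ×ℝ} (hp : p ∈ UA n) : Ghat p ∈ VA n := by
  obtain ⟨h1, h2, h3, h4⟩ := hp
  have hv : Λ < p.2 := by nlinarith [s2_pos]
  rw [Ghat_A h1 h2 hv]
  exact ⟨Tm_final h1 h2, h3, (Tm_v_img h4).1, (Tm_v_img h4).2⟩

lemma VA_surj {n : ℕ} {q : ℝ×ℝ} (hq : q ∈ VA n) :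
    (Sm (n+1) q.1, Sm (n+1) q.2) ∈ UA n ∧ Ghat (Sm (n+1) q.1, Sm (n+1) q.2) = q := by
  obtain ⟨h1, h2, h3, h4⟩ := hq
  have hden1 : σ - ((n+1:ℕ):ℝ) * (q.1 - Λ) ≠ 0 := by
    have h0 : (0:ℝ) ≤ ((n+1:ℕ):ℝ) := Nat.cast_nonneg _
    have : Λ - q.1 > σ := by nlinarith [s2_pos]
    exact ne_of_gt (by nlinarith [s2_pos])
  have hrt1 : Tm (n+1) (Sm (n+1) q.1) = q.1 := Tm_Sm hden1
  have hSu := Sm_u (n := n) h1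
  have hSv := Sm_v (n := n) h3 h4
  have hden2 : σ - ((n+1:ℕ):ℝ) * (q.2 - Λ) ≠ 0 := by
    have h := hSv.2; push_cast at h ⊢; exact h
  have hrt2 : Tm (n+1) (Sm (n+1) q.2) = q.2 := Tm_Sm hden2
  have hmem : (Sm (n+1) q.1, Sm (n+1) q.2) ∈ UA n := by
    refine ⟨hSu.1, hSu.2, ?_, hSv.1⟩
    rw [hrt1]
    exact h2
  refine ⟨hmem, ?_⟩
  have hv : Λ < Sm (n+1) q.2 := by linarith [hSv.1, s2_pos]
  rw [Ghat_A hmem.1 hmem.2.1 hv]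
  simp only []
  rw [hrt1, hrt2]

/- ### B family : sectors 2-6 -/

def aB : ℕ → ℝ
  | 2 => 3 + 2*σ | 3 => 2 + 2*σ | 4 => 2 + 2*σ | 5 => 3 + 2*σ | 6 => 1 + 2*σ | _ => 1
def bB : ℕ → ℝ
  | 2 => -(1 + 2*σ) | 3 => -1 | 4 => 1 | 5 => 1 + 2*σ | 6 => 3 + 2*σ | _ => 0
def dB : ℕ → ℝ
  | 2 => -1 | 3 => 0 | 4 => 0 | 5 => 1 | 6 => 1 | _ => 1
def uloB : ℕ → ℝ
  | 2 => σ - 1 | 3 => 0 | 4 => 1 - σ | 5 => -1 | 6 => -(1+σ) | _ => 0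
def uhiB : ℕ → ℝ
  | 2 => 1 | 3 => σ - 1 | 4 => 0 | 5 => 1 - σ | 6 => -1 | _ => 0
def vloB : ℕ → ℝ
  | 2 => 3 + 2*σ | 3 => 3 + σ | 4 => 2 + 2*σ | 5 => 1 + 3*σ | 6 => 1 + 2*σ | _ => 0
def vhiB : ℕ → ℝ
  | 2 => 3 + 3*σ | 3 => 2 + 2*σ | 4 => 1 + 3*σ | 5 => 3 + 2*σ | 6 => 3 + σ | _ => 0

def TB (j : ℕ) (x : ℝ) : ℝ := (aB j * x + bB j) / (x + dB j)
def SB (j : ℕ) (y : ℝ) : ℝ := (dB j * y - bB j) / (aB j - y)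

lemma moA (a b d x : ℝ) (hdet : a*d - b ≠ 0) (hden : x + d ≠ 0) :
    (d * ((a*x+b)/(x+d)) - b) / (a - (a*x+b)/(x+d)) = x := by
  have h1 : d * ((a*x+b)/(x+d)) - b = (a*d - b)*x/(x+d) := by field_simp; ring
  have h2 : a - (a*x+b)/(x+d) = (a*d - b)/(x+d) := by field_simp; ring
  rw [h1, h2]
  field_simp

lemma moB (a b d y : ℝ) (hdet : a*d - b ≠ 0) (hden : a - y ≠ 0) :
    (a * ((d*y - b)/(a - y)) + b) / ((d*y - b)/(a - y) + d) = y := by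
  have h1 : a * ((d*y-b)/(a-y)) + b = (a*d - b)*y/(a - y) := by field_simp; ring
  have h2 : (d*y-b)/(a-y) + d = (a*d - b)/(a - y) := by field_simp; ring
  rw [h1, h2]
  field_simp

lemma detB {j : ℕ} (h2 : 2 ≤ j) (h6 : j ≤ 6) : aB j * dB j - bB j ≠ 0 := by
  interval_cases j <;> simp [aB, bB, dB] <;> ring_nf <;> nlinarith [s2_pos]

lemma SB_TB {j : ℕ} (h2 : 2 ≤ j) (h6 : j ≤ 6) {x : ℝ} (hden : x + dB j ≠ 0) :
    SB j (TB j x) = x := by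
  rw [TB, SB]
  exact moA _ _ _ _ (detB h2 h6) hden

lemma TB_SB {j : ℕ} (h2 : 2 ≤ j) (h6 : j ≤ 6) {y : ℝ} (hden : aB j - y ≠ 0) :
    TB j (SB j y) = y := by
  rw [TB, SB]
  exact moB _ _ _ _ (detB h2 h6) hden

lemma fB_eq {j : ℕ} (h2 : 2 ≤ j) (h6 : j ≤ 6) (x : ℝ) :
    mob (gam * nu j) x = TB j x := by
  interval_cases j
  · rw [mg2]; simp only [TB, aB, bB, dB]; try ring_nf
  · rw [mg3]; simp only [TB, aB, bB, dB]; try ring_nf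
  · rw [mg4]; simp only [TB, aB, bB, dB]; try ring_nf
  · rw [mg5]; simp only [TB, aB, bB, dB]; try ring_nf
  · rw [mg6]; simp only [TB, aB, bB, dB]; try ring_nf

lemma secB {j : ℕ} (h2 : 2 ≤ j) (h6 : j ≤ 6) {x : ℝ}
    (hx1 : uloB j < x) (hx2 : x < uhiB j) : sectorIndex x = j := by
  interval_cases j
  · exact sec2 hx1 (le_of_lt hx2)
  · exact sec3 hx1 (le_of_lt hx2)
  · exact sec4 hx1 (le_of_lt hx2)
  · exact sec5 hx1 (le_of_lt hx2)
  · exact sec6 hx1 (le_of_lt hx2)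

lemma B_u {j : ℕ} (h2 : 2 ≤ j) (h6 : j ≤ 6) {x : ℝ}
    (hx1 : uloB j < x) (hx2 : x < uhiB j) : x + dB j ≠ 0 ∧ TB j x < Λ := by
  have hs := s2_pos
  have hg := s2_gt
  have hl := s2_lt
  interval_cases j <;>
    simp only [TB, aB, bB, dB, uloB, uhiB] at hx1 hx2 ⊢
  · refine ⟨by intro h; nlinarith, ?_⟩
    rw [div_lt_iff_of_neg (by linarith)]
    nlinarith [sp2]
  · refine ⟨by intro h; nlinarith, ?_⟩
    rw [add_zero, div_lt_iff₀ (by linarith)]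
    nlinarith [sp2]
  · refine ⟨by intro h; nlinarith, ?_⟩
    rw [add_zero, div_lt_iff_of_neg (by linarith)]
    nlinarith [sp2]
  · refine ⟨by intro h; nlinarith, ?_⟩
    rw [div_lt_iff₀ (by linarith)]
    nlinarith [sp2]
  · refine ⟨by intro h; nlinarith, ?_⟩
    rw [div_lt_iff_of_neg (by linarith)]
    nlinarith [sp2]

lemma B_v {j : ℕ} (h2 : 2 ≤ j) (h6 : j ≤ 6) {v : ℝ} (hv : Λ < v) :
    v + dB j ≠ 0 ∧ vloB j < TB j v ∧ TB j v < vhiB j := by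
  have hs := s2_pos
  have hg := s2_gt
  have hl := s2_lt
  interval_cases j <;>
    simp only [TB, aB, bB, dB, vloB, vhiB] at hv ⊢
  · refine ⟨by intro h; nlinarith, ?_, ?_⟩
    · rw [lt_div_iff₀ (by linarith)]; nlinarith [sp2]
    · rw [div_lt_iff₀ (by linarith)]; nlinarith [sp2]
  · refine ⟨by intro h; nlinarith, ?_, ?_⟩
    · rw [add_zero, lt_div_iff₀ (by linarith)]; nlinarith [sp2]
    · rw [add_zero, div_lt_iff₀ (by linarith)]; nlinarith [sp2]
  · refine ⟨by intro h; nlinarith, ?_, ?_⟩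
    · rw [add_zero, lt_div_iff₀ (by linarith)]; nlinarith [sp2]
    · rw [add_zero, div_lt_iff₀ (by linarith)]; nlinarith [sp2]
  · refine ⟨by intro h; nlinarith, ?_, ?_⟩
    · rw [lt_div_iff₀ (by linarith)]; nlinarith [sp2]
    · rw [div_lt_iff₀ (by linarith)]; nlinarith [sp2]
  · refine ⟨by intro h; nlinarith, ?_, ?_⟩
    · rw [lt_div_iff₀ (by linarith)]; nlinarith [sp2]
    · rw [div_lt_iff₀ (by linarith)]; nlinarith [sp2]

lemma B_Su {j : ℕ} (h2 : 2 ≤ j) (h6 : j ≤ 6) {y : ℝ} (hy : y < Λ) :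
    aB j - y ≠ 0 ∧ uloB j < SB j y ∧ SB j y < uhiB j := by
  have hs := s2_pos
  have hg := s2_gt
  have hl := s2_lt
  interval_cases j <;>
    simp only [SB, aB, bB, dB, uloB, uhiB] at hy ⊢
  · refine ⟨by intro h; nlinarith, ?_, ?_⟩
    · rw [lt_div_iff₀ (by linarith)]; nlinarith [sp2]
    · rw [div_lt_iff₀ (by linarith)]; nlinarith [sp2]
  · refine ⟨by intro h; nlinarith, ?_, ?_⟩
    · rw [lt_div_iff₀ (by linarith)]; nlinarith [sp2]
    · rw [div_lt_iff₀ (by linarith)]; nlinarith [sp2]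
  · refine ⟨by intro h; nlinarith, ?_, ?_⟩
    · rw [lt_div_iff₀ (by linarith)]; nlinarith [sp2]
    · rw [div_lt_iff₀ (by linarith)]; nlinarith [sp2]
  · refine ⟨by intro h; nlinarith, ?_, ?_⟩
    · rw [lt_div_iff₀ (by linarith)]; nlinarith [sp2]
    · rw [div_lt_iff₀ (by linarith)]; nlinarith [sp2]
  · refine ⟨by intro h; nlinarith, ?_, ?_⟩
    · rw [lt_div_iff₀ (by linarith)]; nlinarith [sp2]
    · rw [div_lt_iff₀ (by linarith)]; nlinarith [sp2]

lemma B_Sv {j : ℕ} (h2 : 2 ≤ j) (h6 : j ≤ 6) {y : ℝ}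
    (hy1 : vloB j < y) (hy2 : y < vhiB j) : aB j - y ≠ 0 ∧ Λ < SB j y := by
  have hs := s2_pos
  have hg := s2_gt
  have hl := s2_lt
  interval_cases j <;>
    simp only [SB, aB, bB, dB, vloB, vhiB] at hy1 hy2 ⊢
  · refine ⟨by intro h; nlinarith, ?_⟩
    rw [lt_div_iff_of_neg (by linarith)]; nlinarith [sp2]
  · refine ⟨by intro h; nlinarith, ?_⟩
    rw [lt_div_iff₀ (by linarith)]; nlinarith [sp2]
  · refine ⟨by intro h; nlinarith, ?_⟩
    rw [lt_div_iff_of_neg (by linarith)]; nlinarith [sp2]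
  · refine ⟨by intro h; nlinarith, ?_⟩
    rw [lt_div_iff₀ (by linarith)]; nlinarith [sp2]
  · refine ⟨by intro h; nlinarith, ?_⟩
    rw [lt_div_iff_of_neg (by linarith)]; nlinarith [sp2]

lemma nG_B {u : ℝ} (h1 : -Λ < u) (h2 : u < 1) : nG u = 1 := by
  have := s2_pos
  rw [nG, if_neg, if_neg, if_pos (by linarith)]
  · simp only [Set.mem_Iic, not_le]; linarith
  · simp only [Set.mem_Ioc, not_and_or, not_lt]; left; linarith

def UB (j : ℕ) : Set (ℝ×ℝ) :=
  {p | uloB j < p.1 ∧ p.1 < uhiB j ∧ TB j p.1 ≠ 1 ∧ TB j p.1 ≠ -Λ ∧ Λ < p.2}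
def VB (j : ℕ) : Set (ℝ×ℝ) :=
  {q | q.1 < Λ ∧ q.1 ≠ 1 ∧ q.1 ≠ -Λ ∧ vloB j < q.2 ∧ q.2 < vhiB j}

lemma uB_bounds {j : ℕ} (h2 : 2 ≤ j) (h6 : j ≤ 6) {x : ℝ}
    (hx1 : uloB j < x) (hx2 : x < uhiB j) : -Λ < x ∧ x < 1 := by
  have hs := s2_pos
  have hg := s2_gt
  have hl := s2_lt
  interval_cases j <;> simp only [uloB, uhiB] at hx1 hx2 <;> constructor <;> linarith

lemma Ghat_B {j : ℕ} (h2 : 2 ≤ j) (h6 : j ≤ 6) {p : ℝ×ℝ}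
    (hx1 : uloB j < p.1) (hx2 : p.1 < uhiB j) (hv : Λ < p.2) :
    Ghat p = (TB j p.1, TB j p.2) := by
  obtain ⟨hb1, hb2⟩ := uB_bounds h2 h6 hx1 hx2
  have hsec : sectorIndex p.1 = j := secB h2 h6 hx1 hx2
  rw [Ghat, nG_B hb1 hb2, Function.iterate_one, Fhat_eq (by omega), hsec,
    fB_eq h2 h6, fB_eq h2 h6]

lemma Ghat_UB {j : ℕ} (h2 : 2 ≤ j) (h6 : j ≤ 6) {p : ℝ×ℝ} (hp : p ∈ UB j) :
    Ghat p ∈ VB j := by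
  obtain ⟨hx1, hx2, hne1, hne2, hv⟩ := hp
  rw [Ghat_B h2 h6 hx1 hx2 hv]
  exact ⟨(B_u h2 h6 hx1 hx2).2, hne1, hne2, (B_v h2 h6 hv).2.1, (B_v h2 h6 hv).2.2⟩

lemma VB_surj {j : ℕ} (h2 : 2 ≤ j) (h6 : j ≤ 6) {q : ℝ×ℝ} (hq : q ∈ VB j) :
    (SB j q.1, SB j q.2) ∈ UB j ∧ Ghat (SB j q.1, SB j q.2) = q := by
  obtain ⟨hy, hne1, hne2, hv1, hv2⟩ := hq
  have hSu := B_Su h2 h6 hy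
  have hSv := B_Sv h2 h6 hv1 hv2
  have hrt1 : TB j (SB j q.1) = q.1 := TB_SB h2 h6 hSu.1
  have hrt2 : TB j (SB j q.2) = q.2 := TB_SB h2 h6 hSv.1
  have hmem : (SB j q.1, SB j q.2) ∈ UB j := by
    refine ⟨hSu.2.1, hSu.2.2, ?_, ?_, hSv.2⟩
    · rw [hrt1]; exact hne1
    · rw [hrt1]; exact hne2
  refine ⟨hmem, ?_⟩
  rw [Ghat_B h2 h6 hmem.1 hmem.2.1 hmem.2.2.2.2]
  simp only []
  rw [hrt1, hrt2]

/- ### unions, D-inclusions, injectivity helpers -/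

def UU : Set (ℝ×ℝ) :=
  (⋃ n, UA n) ∪ (⋃ j ∈ {j : ℕ | 2 ≤ j ∧ j ≤ 6}, UB j) ∪ (⋃ n, UC n)
def VV : Set (ℝ×ℝ) :=
  (⋃ n, VA n) ∪ (⋃ j ∈ {j : ℕ | 2 ≤ j ∧ j ≤ 6}, VB j) ∪ (⋃ n, VC n)

lemma vloB_ge {j : ℕ} (h2 : 2 ≤ j) (h6 : j ≤ 6) : 1 + 2*σ ≤ vloB j := by
  have := s2_gt; have := s2_lt
  interval_cases j <;> simp only [vloB] <;> linarith

lemma vhiB_le {j : ℕ} (h2 : 2 ≤ j) (h6 : j ≤ 6) : vhiB j ≤ 3 + 3*σ := by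
  have := s2_gt; have := s2_lt
  interval_cases j <;> simp only [vhiB] <;> linarith

lemma UA_sub (n : ℕ) : UA n ⊆ Dgauss := by
  rintro p ⟨h1, h2, h3, h4⟩
  left; left
  refine ⟨⟨lt_of_le_of_lt (bb_ge_one n) h1, lt_trans h2 (bb_lt_lam _)⟩, ?_⟩
  simp only [Set.mem_Ioi]; linarith

lemma UB_sub {j : ℕ} (h2 : 2 ≤ j) (h6 : j ≤ 6) : UB j ⊆ Dgauss := by
  rintro p ⟨hx1, hx2, _, _, hv⟩
  obtain ⟨hb1, hb2⟩ := uB_bounds h2 h6 hx1 hx2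
  left; right
  exact ⟨⟨hb1, hb2⟩, hv⟩

lemma UC_sub (n : ℕ) : UC n ⊆ Dgauss := by
  rintro p ⟨h1, h2, h3, h4, h5⟩
  right
  have hn : (0:ℝ) ≤ (n:ℝ) := Nat.cast_nonneg n
  have := s2_pos
  refine ⟨?_, ⟨h4, by linarith⟩⟩
  simp only [Set.mem_Iio]; nlinarith

lemma VA_sub (n : ℕ) : VA n ⊆ Dgauss := by
  rintro q ⟨h1, h2, h3, h4⟩
  have hs := s2_pos
  have hn : (0:ℝ) ≤ (n:ℝ) := Nat.cast_nonneg n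
  have hn1 : (0:ℝ) < (n:ℝ)+1 := by positivity
  have hq2 : Λ < q.2 := by
    have : 0 < σ/((n:ℝ)+2) := by positivity
    linarith
  have hq2' : q.2 < 1 + 2*σ := by
    have : σ/((n:ℝ)+1) ≤ σ := by rw [div_le_iff₀ hn1]; nlinarith
    linarith
  rcases lt_trichotomy q.1 (-Λ) with hc | hc | hc
  · right; exact ⟨hc, hq2, by linarith⟩
  · exact absurd hc h2
  · left; right; exact ⟨⟨hc, h1⟩, hq2⟩

lemma VB_sub {j : ℕ} (h2 : 2 ≤ j) (h6 : j ≤ 6) : VB j ⊆ Dgauss := by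
  rintro q ⟨h1, hne1, hne2, h4, h5⟩
  have hs := s2_pos
  have hlo := vloB_ge h2 h6
  have hhi := vhiB_le h2 h6
  rcases lt_trichotomy q.1 (-Λ) with hc | hc | hc
  · right; exact ⟨hc, by constructor <;> linarith⟩
  · exact absurd hc hne2
  · rcases lt_trichotomy q.1 1 with hd | hd | hd
    · left; right; exact ⟨⟨hc, hd⟩, by simp only [Set.mem_Ioi]; linarith⟩
    · exact absurd hd hne1
    · left; left; exact ⟨⟨hd, h1⟩, by simp only [Set.mem_Ioi]; linarith⟩

lemma VC_sub (n : ℕ) : VC n ⊆ Dgauss := by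
  rintro q ⟨h1, h2, h3, h4, h5⟩
  have hs := s2_pos
  have hn : (0:ℝ) ≤ (n:ℝ) := Nat.cast_nonneg n
  have hq2 : 1 + 2*σ < q.2 := by nlinarith
  rcases lt_trichotomy q.1 1 with hc | hc | hc
  · left; right; exact ⟨⟨h1, hc⟩, by simp only [Set.mem_Ioi]; nlinarith⟩
  · exact absurd hc h3
  · left; left; exact ⟨⟨hc, h2⟩, by simp only [Set.mem_Ioi]; linarith⟩

lemma UU_sub : UU ⊆ Dgauss := by
  intro p hp
  simp only [UU, Set.mem_union, Set.mem_iUnion] at hp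
  rcases hp with ((⟨n, hp⟩ | ⟨j, ⟨hj2, hj6⟩, hp⟩) | ⟨n, hp⟩)
  · exact UA_sub n hp
  · exact UB_sub hj2 hj6 hp
  · exact UC_sub n hp

lemma VV_sub : VV ⊆ Dgauss := by
  intro p hp
  simp only [VV, Set.mem_union, Set.mem_iUnion] at hp
  rcases hp with ((⟨n, hp⟩ | ⟨j, ⟨hj2, hj6⟩, hp⟩) | ⟨n, hp⟩)
  · exact VA_sub n hp
  · exact VB_sub hj2 hj6 hp
  · exact VC_sub n hp

/- disjointness of images via v-coordinate -/

lemma VAA {n m : ℕ} {x : ℝ×ℝ} (hn : x ∈ VA n) (hm : x ∈ VA m) : n = m := by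
  have hs := s2_pos
  have key : ∀ a b : ℕ, a < b → Λ + σ/((a:ℝ)+2) < x.2 → x.2 < Λ + σ/((b:ℝ)+1) → False := by
    intro a b hab h1 h2
    have hc : (a:ℝ)+2 ≤ (b:ℝ)+1 := by
      have : (a:ℝ)+1 ≤ (b:ℝ) := by exact_mod_cast hab
      linarith
    have ha2 : (0:ℝ) < (a:ℝ)+2 := by positivity
    have hb1 : (0:ℝ) < (b:ℝ)+1 := by positivity
    have : σ/((b:ℝ)+1) ≤ σ/((a:ℝ)+2) := by
      rw [div_le_div_iff₀ hb1 ha2]; nlinarith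
    linarith
  by_contra hne
  rcases lt_or_gt_of_ne hne with h | h
  · exact key n m h hn.2.2.1 hm.2.2.2
  · exact key m n h hm.2.2.1 hn.2.2.2

lemma VCC {n m : ℕ} {x : ℝ×ℝ} (hn : x ∈ VC n) (hm : x ∈ VC m) : n = m := by
  have hs := s2_pos
  have key : ∀ a b : ℕ, a < b → x.2 < Λ + ((a:ℝ)+2)*Ł → Λ + ((b:ℝ)+1)*Ł < x.2 → False := by
    intro a b hab h1 h2
    have hc : (a:ℝ)+2 ≤ (b:ℝ)+1 := by
      have : (a:ℝ)+1 ≤ (b:ℝ) := by exact_mod_cast hab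
      linarith
    nlinarith
  by_contra hne
  rcases lt_or_gt_of_ne hne with h | h
  · exact key n m h hn.2.2.2.2 hm.2.2.2.1
  · exact key m n h hm.2.2.2.2 hn.2.2.2.1

lemma VBB {j j' : ℕ} (h2 : 2 ≤ j) (h6 : j ≤ 6) (h2' : 2 ≤ j') (h6' : j' ≤ 6)
    {x : ℝ×ℝ} (hj : x ∈ VB j) (hj' : x ∈ VB j') : j = j' := by
  have hg := s2_gt; have hl := s2_lt
  have b1 := hj.2.2.2.1; have b2 := hj.2.2.2.2
  have b1' := hj'.2.2.2.1; have b2' := hj'.2.2.2.2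
  interval_cases j <;> interval_cases j' <;>
    first
    | rfl
    | (exfalso; simp only [vloB, vhiB] at b1 b2 b1' b2'; linarith)

lemma VA_v_lt {n : ℕ} {x : ℝ×ℝ} (hn : x ∈ VA n) : x.2 < 1 + 2*σ := by
  have hs := s2_pos
  have hn1 : (0:ℝ) < (n:ℝ)+1 := by positivity
  have : σ/((n:ℝ)+1) ≤ σ := by rw [div_le_iff₀ hn1]; nlinarith [Nat.cast_nonneg (α := ℝ) n]
  have := hn.2.2.2
  linarith

lemma VC_v_gt {n : ℕ} {x : ℝ×ℝ} (hn : x ∈ VC n) : 3 + 3*σ < x.2 := by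
  have hs := s2_pos
  have h := hn.2.2.2.1
  have hc : (0:ℝ) ≤ (n:ℝ) := Nat.cast_nonneg n
  nlinarith

lemma VAB {n j : ℕ} (h2 : 2 ≤ j) (h6 : j ≤ 6) {x : ℝ×ℝ}
    (hn : x ∈ VA n) (hj : x ∈ VB j) : False := by
  have := VA_v_lt hn
  have := vloB_ge h2 h6
  have := hj.2.2.2.1
  linarith

lemma VAC {n m : ℕ} {x : ℝ×ℝ} (hn : x ∈ VA n) (hm : x ∈ VC m) : False := by
  have := VA_v_lt hn
  have := VC_v_gt hm
  have := s2_pos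
  linarith

lemma VBC {j m : ℕ} (h2 : 2 ≤ j) (h6 : j ≤ 6) {x : ℝ×ℝ}
    (hj : x ∈ VB j) (hm : x ∈ VC m) : False := by
  have := vhiB_le h2 h6
  have := VC_v_gt hm
  have := hj.2.2.2.2
  linarith

/- injectivity within a branch -/

lemma UA_dens {n : ℕ} {p : ℝ×ℝ} (hp : p ∈ UA n) :
    σ + ((n+1:ℕ):ℝ) * (p.1 - Λ) ≠ 0 ∧ σ + ((n+1:ℕ):ℝ) * (p.2 - Λ) ≠ 0 := by
  obtain ⟨h1, h2, h3, h4⟩ := hp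
  have hs := s2_pos
  constructor
  · have hb : (Λ - p.1) * ((n:ℝ)+1) < σ := by
      have h := bb_lt.1 h1; push_cast at h; linarith
    exact ne_of_gt (denAx (by push_cast; linarith) hb)
  · have h0 : (0:ℝ) ≤ ((n+1:ℕ):ℝ) := Nat.cast_nonneg _
    have : 0 < p.2 - Λ := by linarith
    exact ne_of_gt (by positivity)

lemma UA_inj {n : ℕ} {p q : ℝ×ℝ} (hp : p ∈ UA n) (hq : q ∈ UA n)
    (h : Ghat p = Ghat q) : p = q := by
  have hs := s2_pos
  have hgp := Ghat_A hp.1 hp.2.1 (by linarith [hp.2.2.2])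
  have hgq := Ghat_A hq.1 hq.2.1 (by linarith [hq.2.2.2])
  rw [hgp, hgq, Prod.mk.injEq] at h
  have dp := UA_dens hp
  have dq := UA_dens hq
  have e1 : p.1 = q.1 := by
    have := congrArg (Sm (n+1)) h.1
    rwa [Sm_Tm dp.1, Sm_Tm dq.1] at this
  have e2 : p.2 = q.2 := by
    have := congrArg (Sm (n+1)) h.2
    rwa [Sm_Tm dp.2, Sm_Tm dq.2] at this
  exact Prod.ext e1 e2

lemma UB_inj {j : ℕ} (h2 : 2 ≤ j) (h6 : j ≤ 6) {p q : ℝ×ℝ} (hp : p ∈ UB j) (hq : q ∈ UB j)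
    (h : Ghat p = Ghat q) : p = q := by
  have hgp := Ghat_B h2 h6 hp.1 hp.2.1 hp.2.2.2.2
  have hgq := Ghat_B h2 h6 hq.1 hq.2.1 hq.2.2.2.2
  rw [hgp, hgq, Prod.mk.injEq] at h
  have dp1 := (B_u h2 h6 hp.1 hp.2.1).1
  have dq1 := (B_u h2 h6 hq.1 hq.2.1).1
  have dp2 := (B_v h2 h6 hp.2.2.2.2).1
  have dq2 := (B_v h2 h6 hq.2.2.2.2).1
  have e1 : p.1 = q.1 := by
    have := congrArg (SB j) h.1
    rwa [SB_TB h2 h6 dp1, SB_TB h2 h6 dq1] at this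
  have e2 : p.2 = q.2 := by
    have := congrArg (SB j) h.2
    rwa [SB_TB h2 h6 dp2, SB_TB h2 h6 dq2] at this
  exact Prod.ext e1 e2

lemma UC_inj {n : ℕ} {p q : ℝ×ℝ} (hp : p ∈ UC n) (hq : q ∈ UC n)
    (h : Ghat p = Ghat q) : p = q := by
  rw [Ghat_C hp.1 hp.2.1, Ghat_C hq.1 hq.2.1, Prod.mk.injEq] at h
  exact Prod.ext (by linarith [h.1]) (by linarith [h.2])

/- ### bad sets and coverage -/

def BadU : Set ℝ :=
  Set.range bb ∪ (⋃ n : ℕ, {x | Tm (n+1) x = -Λ}) ∪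
  (⋃ j ∈ {j : ℕ | 2 ≤ j ∧ j ≤ 6}, ({x : ℝ | TB j x = 1} ∪ {x : ℝ | TB j x = -Λ})) ∪
  {-1, 1-σ, 0, σ-1} ∪ Set.range (fun n : ℕ => -Λ - (n:ℝ)*Ł) ∪
  Set.range (fun n : ℕ => 1 - ((n:ℝ)+1)*Ł)

def BadV : Set ℝ :=
  Set.range (fun n : ℕ => Λ + σ/((n:ℝ)+1)) ∪
  ({3+σ, 2+2*σ, 1+3*σ, 3+2*σ, 1+2*σ, 3+3*σ} : Set ℝ) ∪
  Set.range (fun n : ℕ => Λ + ((n:ℝ)+1)*Ł)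

lemma TmLine_sub (n : ℕ) : {x : ℝ | Tm (n+1) x = -Λ}.Subsingleton := by
  have hs := s2_pos
  have hden : ∀ z : ℝ, Tm (n+1) z = -Λ → σ + ((n+1:ℕ):ℝ)*(z - Λ) ≠ 0 := by
    intro z hz hzero
    rw [Tm, hzero, div_zero, add_zero] at hz
    linarith
  intro x hx y hy
  simp only [Set.mem_setOf_eq] at hx hy
  have hx' := congrArg (Sm (n+1)) hx
  rw [Sm_Tm (hden x hx)] at hx'
  have hy' := congrArg (Sm (n+1)) hy
  rw [Sm_Tm (hden y hy)] at hy'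
  rw [hx', hy']

lemma TBLine_sub {j : ℕ} (h2 : 2 ≤ j) (h6 : j ≤ 6) {c : ℝ} (hc : c ≠ 0) :
    {x : ℝ | TB j x = c}.Subsingleton := by
  have hden : ∀ z : ℝ, TB j z = c → z + dB j ≠ 0 := by
    intro z hz hzero
    rw [TB, hzero, div_zero] at hz
    exact hc hz.symm
  intro x hx y hy
  simp only [Set.mem_setOf_eq] at hx hy
  have hx' := congrArg (SB j) hx
  rw [SB_TB h2 h6 (hden x hx)] at hx'
  have hy' := congrArg (SB j) hy
  rw [SB_TB h2 h6 (hden y hy)] at hy'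
  rw [hx', hy']

lemma neglam_ne : (-Λ : ℝ) ≠ 0 := by
  have := s2_pos; intro h; nlinarith

lemma BadU_cnt : BadU.Countable := by
  refine (((((Set.countable_range _).union ?_).union ?_).union ?_).union
    (Set.countable_range _)).union (Set.countable_range _)
  · exact Set.countable_iUnion (fun n => (TmLine_sub n).countable)
  · refine Set.Countable.biUnion (Set.to_countable _) (fun j hj => ?_)
    exact ((TBLine_sub hj.1 hj.2 one_ne_zero).countable).union
      ((TBLine_sub hj.1 hj.2 neglam_ne).countable)
  · exact ((((Set.finite_singleton _).insert _).insert _).insert _).countable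

lemma BadV_cnt : BadV.Countable := by
  refine ((Set.countable_range _).union ?_).union (Set.countable_range _)
  exact ((((((Set.finite_singleton _).insert _).insert _).insert _).insert _).insert _).countable

lemma coverU {p : ℝ×ℝ} (hp : p ∈ Dgauss) (hb : p.1 ∉ BadU) : p ∈ UU := by
  have hs := s2_pos
  have hg := s2_gt
  have hl := s2_lt
  simp only [BadU, Set.mem_union, Set.mem_range, Set.mem_iUnion, Set.mem_setOf_eq,
    Set.mem_insert_iff, Set.mem_singleton_iff, not_or, not_exists] at hb
  obtain ⟨⟨⟨⟨⟨hb1, hb2⟩, hb3⟩, hb4⟩, hb5⟩, hb6⟩ := hb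
  simp only [Dgauss, Set.mem_union, Set.mem_prod, Set.mem_Ioo, Set.mem_Ioi,
    Set.mem_Iio] at hp
  rcases hp with (⟨⟨hu1, hu2⟩, hv⟩ | ⟨⟨hu1, hu2⟩, hv⟩) | ⟨hu, hv1, hv2⟩
  · -- A part
    set t := Λ - p.1 with ht
    have htp : 0 < t := by simp only [ht]; linarith
    have hts : t < σ := by simp only [ht]; linarith
    set m := ⌊σ/t⌋₊ with hm
    have hm1 : 1 ≤ m := Nat.le_floor (by
      push_cast
      rw [le_div_iff₀ htp]; linarith)
    obtain ⟨n, hmn⟩ : ∃ n, m = n + 1 := ⟨m - 1, by omega⟩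
    have hfl : ((n:ℝ)+1) ≤ σ/t := by
      have h := Nat.floor_le (show (0:ℝ) ≤ σ/t by positivity)
      rw [← hm, hmn] at h; push_cast at h; linarith
    have hfu : σ/t < (n:ℝ)+2 := by
      have h := Nat.lt_floor_add_one (σ/t)
      rw [← hm, hmn] at h; push_cast at h; linarith
    have hstrict : ((n:ℝ)+1) < σ/t := by
      rcases lt_or_eq_of_le hfl with h | h
      · exact h
      · exfalso
        apply hb1 n
        have hσ : σ = ((n:ℝ)+1)*t := by
          rw [eq_comm, div_eq_iff (ne_of_gt htp)] at h
          linarith [h]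
        have hdiv : σ/((n:ℝ)+1) = t := by
          rw [hσ]
          exact mul_div_cancel_left₀ t (by positivity : ((n:ℝ)+1) ≠ 0)
        simp only [bb, hdiv, ht]
        ring
    refine Set.mem_union_left _ (Set.mem_union_left _ ?_)
    simp only [Set.mem_iUnion]
    refine ⟨n, ?_, ?_, hb2 n, by linarith⟩
    · rw [bb_lt]
      rw [lt_div_iff₀ htp] at hstrict
      push_cast
      rw [← ht]
      linarith
    · rw [lt_bb]
      rw [div_lt_iff₀ htp] at hfu
      push_cast
      rw [← ht]
      linarith
  · -- B part
    have hselect : ∃ j, 2 ≤ j ∧ j ≤ 6 ∧ uloB j < p.1 ∧ p.1 < uhiB j := by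
      rcases lt_trichotomy p.1 (-1) with h | h | h
      · exact ⟨6, by norm_num, by norm_num,
          by simp only [uloB]; exact hu1, by simp only [uhiB]; exact h⟩
      · exact absurd h (hb4.1)
      rcases lt_trichotomy p.1 (1-σ) with h' | h' | h'
      · exact ⟨5, by norm_num, by norm_num,
          by simp only [uloB]; exact h, by simp only [uhiB]; exact h'⟩
      · exact absurd h' (hb4.2.1)
      rcases lt_trichotomy p.1 0 with h'' | h'' | h''
      · exact ⟨4, by norm_num, by norm_num,
          by simp only [uloB]; exact h', by simp only [uhiB]; exact h''⟩
      · exact absurd h'' (hb4.2.2.1)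
      rcases lt_trichotomy p.1 (σ-1) with h3 | h3 | h3
      · exact ⟨3, by norm_num, by norm_num,
          by simp only [uloB]; exact h'', by simp only [uhiB]; exact h3⟩
      · exact absurd h3 (hb4.2.2.2)
      · exact ⟨2, by norm_num, by norm_num,
          by simp only [uloB]; exact h3, by simp only [uhiB]; exact hu2⟩
    obtain ⟨j, hj2, hj6, hx1, hx2⟩ := hselect
    refine Set.mem_union_left _ (Set.mem_union_right _ ?_)
    simp only [Set.mem_iUnion]
    have hbj := hb3 j
    exact ⟨j, ⟨hj2, hj6⟩, hx1, hx2, (hbj ⟨hj2, hj6⟩).1, (hbj ⟨hj2, hj6⟩).2, hv⟩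
  · -- C part
    set t := -Λ - p.1 with ht
    have htp : 0 < t := by simp only [ht]; linarith
    have hLp : (0:ℝ) < Ł := by linarith
    set m := ⌊t/Ł⌋₊ with hm
    have hfl : (m:ℝ) ≤ t/Ł := Nat.floor_le (by positivity)
    have hfu' : t/Ł < (m:ℝ)+1 := Nat.lt_floor_add_one _
    have hstrict : (m:ℝ) < t/Ł := by
      rcases lt_or_eq_of_le hfl with h | h
      · exact h
      · exfalso
        apply hb5 m
        rw [eq_comm, div_eq_iff (ne_of_gt hLp)] at h
        simp only [ht] at h
        linarith
    rw [lt_div_iff₀ hLp] at hstrict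
    rw [div_lt_iff₀ hLp] at hfu'
    refine Set.mem_union_right _ ?_
    simp only [Set.mem_iUnion]
    refine ⟨m, ?_, ?_, ?_, hv1, by linarith⟩
    · push_cast; simp only [ht] at hfu' ⊢; linarith
    · push_cast; simp only [ht] at hstrict ⊢; linarith
    · intro hcon
      apply hb6 m
      push_cast at hcon ⊢
      linarith

lemma coverV {q : ℝ×ℝ} (hq : q ∈ Dgauss) (hq1 : q.1 ≠ 1) (hq2 : q.1 ≠ -Λ)
    (hb : q.2 ∉ BadV) : q ∈ VV := by
  have hs := s2_pos
  have hg := s2_gt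
  have hl := s2_lt
  simp only [BadV, Set.mem_union, Set.mem_range, Set.mem_insert_iff,
    Set.mem_singleton_iff, not_or, not_exists] at hb
  obtain ⟨⟨hbA, hbF⟩, hbC⟩ := hb
  simp only [Dgauss, Set.mem_union, Set.mem_prod, Set.mem_Ioo, Set.mem_Ioi,
    Set.mem_Iio] at hq
  have h1 : q.1 < Λ := by
    rcases hq with (⟨⟨a, b⟩, c⟩ | ⟨⟨a, b⟩, c⟩) | ⟨a, b, c⟩ <;> linarith
  have h2 : Λ < q.2 := by
    rcases hq with (⟨⟨a, b⟩, c⟩ | ⟨⟨a, b⟩, c⟩) | ⟨a, b, c⟩ <;> linarith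
  have h3 : q.2 < 1 + 2*σ → q.1 < 1 := by
    intro h
    rcases hq with (⟨⟨a, b⟩, c⟩ | ⟨⟨a, b⟩, c⟩) | ⟨a, b, c⟩ <;> linarith
  have h4 : 3 + 3*σ < q.2 → -Λ < q.1 := by
    intro h
    rcases hq with (⟨⟨a, b⟩, c⟩ | ⟨⟨a, b⟩, c⟩) | ⟨a, b, c⟩ <;> linarith
  rcases lt_trichotomy q.2 (1 + 2*σ) with hv | hv | hv
  · -- VA branch
    set t := q.2 - Λ with ht
    have htp : 0 < t := by simp only [ht]; linarith
    have hts : t < σ := by simp only [ht]; linarith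
    set m := ⌊σ/t⌋₊ with hm
    have hm1 : 1 ≤ m := Nat.le_floor (by
      push_cast
      rw [le_div_iff₀ htp]; linarith)
    obtain ⟨n, hmn⟩ : ∃ n, m = n + 1 := ⟨m - 1, by omega⟩
    have hfl : ((n:ℝ)+1) ≤ σ/t := by
      have h := Nat.floor_le (show (0:ℝ) ≤ σ/t by positivity)
      rw [← hm, hmn] at h; push_cast at h; linarith
    have hfu : σ/t < (n:ℝ)+2 := by
      have h := Nat.lt_floor_add_one (σ/t)
      rw [← hm, hmn] at h; push_cast at h; linarith
    have hstrict : ((n:ℝ)+1) < σ/t := by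
      rcases lt_or_eq_of_le hfl with h | h
      · exact h
      · exfalso
        apply hbA n
        have hσ : σ = ((n:ℝ)+1)*t := by
          rw [eq_comm, div_eq_iff (ne_of_gt htp)] at h
          linarith [h]
        have hdiv : σ/((n:ℝ)+1) = t := by
          rw [hσ]
          exact mul_div_cancel_left₀ t (by positivity : ((n:ℝ)+1) ≠ 0)
        rw [hdiv]
        simp only [ht]
        ring
    refine Set.mem_union_left _ (Set.mem_union_left _ ?_)
    simp only [Set.mem_iUnion]
    refine ⟨n, h3 hv, hq2, ?_, ?_⟩
    · rw [lt_div_iff₀ htp] at hstrict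
      have : σ/((n:ℝ)+2) < t := by
        rw [div_lt_iff₀ (by positivity : (0:ℝ) < (n:ℝ)+2)]
        rw [div_lt_iff₀ htp] at hfu
        linarith
      simp only [ht] at this
      linarith
    · rw [lt_div_iff₀ htp] at hstrict
      have : t < σ/((n:ℝ)+1) := by
        rw [lt_div_iff₀ (by positivity : (0:ℝ) < (n:ℝ)+1)]
        linarith
      simp only [ht] at this
      linarith
  · exact absurd hv hbF.2.2.2.2.1
  · rcases lt_trichotomy q.2 (3 + 3*σ) with hw | hw | hw
    · -- VB branch
      have hsel : ∃ j, (2 ≤ j ∧ j ≤ 6) ∧ vloB j < q.2 ∧ q.2 < vhiB j := by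
        rcases lt_trichotomy q.2 (3+σ) with ha | ha | ha
        · exact ⟨6, by norm_num, by simp only [vloB]; exact hv, by simp only [vhiB]; exact ha⟩
        · exact absurd ha hbF.1
        rcases lt_trichotomy q.2 (2+2*σ) with hc | hc | hc
        · exact ⟨3, by norm_num, by simp only [vloB]; exact ha, by simp only [vhiB]; exact hc⟩
        · exact absurd hc hbF.2.1
        rcases lt_trichotomy q.2 (1+3*σ) with hd | hd | hd
        · exact ⟨4, by norm_num, by simp only [vloB]; exact hc, by simp only [vhiB]; exact hd⟩
        · exact absurd hd hbF.2.2.1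
        rcases lt_trichotomy q.2 (3+2*σ) with he | he | he
        · exact ⟨5, by norm_num, by simp only [vloB]; exact hd, by simp only [vhiB]; exact he⟩
        · exact absurd he hbF.2.2.2.1
        · exact ⟨2, by norm_num, by simp only [vloB]; exact he, by simp only [vhiB]; exact hw⟩
      obtain ⟨j, hj, hlo, hhi⟩ := hsel
      refine Set.mem_union_left _ (Set.mem_union_right _ ?_)
      simp only [Set.mem_iUnion]
      exact ⟨j, hj, h1, hq1, hq2, hlo, hhi⟩
    · exact absurd hw hbF.2.2.2.2.2
    · -- VC branch
      set t := q.2 - Λ with ht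
      have hLp : (0:ℝ) < Ł := by linarith
      have htL : Ł < t := by simp only [ht]; linarith
      have htp : 0 < t := by linarith
      set m := ⌊t/Ł⌋₊ with hm
      have hm1 : 1 ≤ m := Nat.le_floor (by
        push_cast
        rw [le_div_iff₀ hLp]; linarith)
      obtain ⟨n, hmn⟩ : ∃ n, m = n + 1 := ⟨m - 1, by omega⟩
      have hfl : ((n:ℝ)+1) ≤ t/Ł := by
        have h := Nat.floor_le (show (0:ℝ) ≤ t/Ł by positivity)
        rw [← hm, hmn] at h; push_cast at h; linarith
      have hfu : t/Ł < (n:ℝ)+2 := by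
        have h := Nat.lt_floor_add_one (t/Ł)
        rw [← hm, hmn] at h; push_cast at h; linarith
      have hstrict : ((n:ℝ)+1) < t/Ł := by
        rcases lt_or_eq_of_le hfl with h | h
        · exact h
        · exfalso
          apply hbC n
          rw [eq_comm, div_eq_iff (ne_of_gt hLp)] at h
          simp only [ht] at h
          linarith
      rw [lt_div_iff₀ hLp] at hstrict
      rw [div_lt_iff₀ hLp] at hfu
      refine Set.mem_union_right _ ?_
      simp only [Set.mem_iUnion]
      refine ⟨n, h4 hw, h1, hq1, ?_, ?_⟩
      · push_cast; simp only [ht] at hstrict ⊢; linarith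
      · push_cast; simp only [ht] at hfu ⊢; linarith

lemma vol_vert {B : Set ℝ} (hB : B.Countable) :
    volume (B ×ˢ (Set.univ : Set ℝ)) = 0 := by
  rw [Measure.volume_eq_prod, Measure.prod_prod, hB.measure_zero, zero_mul]

lemma vol_horiz {B : Set ℝ} (hB : B.Countable) :
    volume ((Set.univ : Set ℝ) ×ˢ B) = 0 := by
  rw [Measure.volume_eq_prod, Measure.prod_prod, hB.measure_zero, mul_zero]

lemma UU_maps {p : ℝ×ℝ} (hp : p ∈ UU) : Ghat p ∈ VV := by
  simp only [UU, Set.mem_union, Set.mem_iUnion] at hp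
  rcases hp with ((⟨n, hp⟩ | ⟨j, ⟨hj2, hj6⟩, hp⟩) | ⟨n, hp⟩)
  · exact Set.mem_union_left _ (Set.mem_union_left _
      (by simp only [Set.mem_iUnion]; exact ⟨n, Ghat_UA hp⟩))
  · exact Set.mem_union_left _ (Set.mem_union_right _
      (by simp only [Set.mem_iUnion]; exact ⟨j, ⟨hj2, hj6⟩, Ghat_UB hj2 hj6 hp⟩))
  · exact Set.mem_union_right _
      (by simp only [Set.mem_iUnion]; exact ⟨n, Ghat_UC hp⟩)

lemma UU_inj : Set.InjOn Ghat UU := by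
  intro p hp q hq heq
  simp only [UU, Set.mem_union, Set.mem_iUnion] at hp hq
  rcases hp with ((⟨n, hp⟩ | ⟨j, ⟨hj2, hj6⟩, hp⟩) | ⟨n, hp⟩) <;>
    rcases hq with ((⟨m, hq⟩ | ⟨j', ⟨hj2', hj6'⟩, hq⟩) | ⟨m, hq⟩)
  · have h1 := Ghat_UA hp; rw [heq] at h1
    have h2 := Ghat_UA hq
    obtain rfl := VAA h1 h2
    exact UA_inj hp hq heq
  · exact absurd heq (by
      have h1 := Ghat_UA hp; rw [heq] at h1
      exact absurd (VAB hj2' hj6' h1 (Ghat_UB hj2' hj6' hq)) not_false)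
  · exact absurd heq (by
      have h1 := Ghat_UA hp; rw [heq] at h1
      exact absurd (VAC h1 (Ghat_UC hq)) not_false)
  · exact absurd heq (by
      have h1 := Ghat_UB hj2 hj6 hp; rw [heq] at h1
      exact absurd (VAB hj2 hj6 (Ghat_UA hq) h1) not_false)
  · have h1 := Ghat_UB hj2 hj6 hp; rw [heq] at h1
    have h2 := Ghat_UB hj2' hj6' hq
    obtain rfl := VBB hj2 hj6 hj2' hj6' h1 h2
    exact UB_inj hj2 hj6 hp hq heq
  · exact absurd heq (by
      have h1 := Ghat_UB hj2 hj6 hp; rw [heq] at h1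
      exact absurd (VBC hj2 hj6 h1 (Ghat_UC hq)) not_false)
  · exact absurd heq (by
      have h1 := Ghat_UC hp; rw [heq] at h1
      exact absurd (VAC (Ghat_UA hq) h1) not_false)
  · exact absurd heq (by
      have h1 := Ghat_UC hp; rw [heq] at h1
      exact absurd (VBC hj2' hj6' (Ghat_UB hj2' hj6' hq) h1) not_false)
  · have h1 := Ghat_UC hp; rw [heq] at h1
    have h2 := Ghat_UC hq
    obtain rfl := VCC h1 h2
    exact UC_inj hp hq heq

lemma UU_surj : Set.SurjOn Ghat UU VV := by
  intro q hq
  simp only [VV, Set.mem_union, Set.mem_iUnion] at hq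
  rcases hq with ((⟨n, hq⟩ | ⟨j, ⟨hj2, hj6⟩, hq⟩) | ⟨n, hq⟩)
  · obtain ⟨hmem, heq⟩ := VA_surj hq
    exact ⟨_, Set.mem_union_left _ (Set.mem_union_left _
      (by simp only [Set.mem_iUnion]; exact ⟨n, hmem⟩)), heq⟩
  · obtain ⟨hmem, heq⟩ := VB_surj hj2 hj6 hq
    exact ⟨_, Set.mem_union_left _ (Set.mem_union_right _
      (by simp only [Set.mem_iUnion]; exact ⟨j, ⟨hj2, hj6⟩, hmem⟩)), heq⟩
  · obtain ⟨hmem, heq⟩ := Ghat_VC hq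
    exact ⟨_, Set.mem_union_right _
      (by simp only [Set.mem_iUnion]; exact ⟨n, hmem⟩), heq⟩


/-- Up to null sets, the natural extension `Ĝ` of the octagon Gauss map is a bijection of
its domain `D` onto itself. -/
theorem Ghat_bijective_mod_null :
    ∃ N₁ N₂ : Set (ℝ × ℝ),
      N₁ ⊆ Dgauss ∧ N₂ ⊆ Dgauss ∧ volume N₁ = 0 ∧ volume N₂ = 0 ∧
      Set.BijOn Ghat (Dgauss \ N₁) (Dgauss \ N₂) := by

  refine ⟨Dgauss \ UU, Dgauss \ VV, Set.diff_subset, Set.diff_subset, ?_, ?_, ?_⟩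
  · refine measure_mono_null ?_ (vol_vert BadU_cnt)
    intro p hp
    rw [Set.mem_prod]
    refine ⟨?_, Set.mem_univ _⟩
    by_contra hcon
    exact hp.2 (coverU hp.1 hcon)
  · refine measure_mono_null (t := (({1, -Λ} : Set ℝ) ×ˢ (Set.univ : Set ℝ)) ∪
        ((Set.univ : Set ℝ) ×ˢ BadV)) ?_ (measure_union_null
      (vol_vert ((Set.countable_singleton (-Λ)).insert 1)) (vol_horiz BadV_cnt))
    intro p hp
    by_cases h1 : p.1 = 1 ∨ p.1 = -Λ
    · exact Set.mem_union_left _ (by rw [Set.mem_prod]; exact ⟨h1, Set.mem_univ _⟩)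
    · push_neg at h1
      refine Set.mem_union_right _ ?_
      rw [Set.mem_prod]
      refine ⟨Set.mem_univ _, ?_⟩
      by_contra hcon
      exact hp.2 (coverV hp.1 h1.1 h1.2 hcon)
  · rw [Set.diff_diff_cancel_left UU_sub, Set.diff_diff_cancel_left VV_sub]
    exact ⟨fun p hp => UU_maps hp, UU_inj, UU_surj⟩
end
end
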